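/- arXiv:2308.03246 — 4 statements merged into one kernel-verified Lean document; each statement's English description precedes it below -/
import Mathlib

section
/- Let m ≥ 2 be an integer and consider the Freud weight w(x;t) = exp(−x^{2m} + t x²). For every n ≥ 1, the recurrence coefficient β_n(t), as a function of t, satisfies the Volterra lattice equation: the derivative of t ↦ β_n(t) at any t ∈ ℝ equals β_n(t)(β_{n+1}(t) − β_{n−1}(t)). -/
open MeasureTheory Real Filter

/-- The `j`-th moment of the Freud weight `exp(-x^(2m) + t*x^2)` on `ℝ`. -/
noncomputable def freudMoment (m : ℕ) (t : ℝ) (j : ℕ) : ℝ :=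
  ∫ x : ℝ, x ^ j * Real.exp (-x ^ (2 * m) + t * x ^ 2)

/-- The Hankel determinant `D_n(t)` of the moments of `exp(-x^(2m) + t*x^2)`. -/
noncomputable def hankelDet (m : ℕ) (t : ℝ) (n : ℕ) : ℝ :=
  (Matrix.of fun j k : Fin n => freudMoment m t ((j : ℕ) + (k : ℕ))).det

/-- The recurrence coefficient `β_n(t) = D_{n+1}(t) D_{n-1}(t) / D_n(t)^2`, with `β_0(t) = 0`. -/
noncomputable def betaCoef (m : ℕ) (t : ℝ) : ℕ → ℝ
  | 0 => 0
  | n + 1 => hankelDet m t (n + 2) * hankelDet m t n / (hankelDet m t (n + 1)) ^ 2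

namespace VolterraAux

variable {m : ℕ}

lemma exp_arg_bound (hm : 2 ≤ m) (t x : ℝ) :
    -x ^ (2 * m) + t * x ^ 2 + x ^ 2 ≤ |t + 1| * max 1 |t + 1| := by
  have hx2 : x ^ (2 * m) = (x ^ 2) ^ m := by rw [← pow_mul, mul_comm]
  have key : ∀ y : ℝ, 0 ≤ y → -(y ^ m) + (t+1) * y ≤ |t + 1| * max 1 |t + 1| := by
    intro y hy0
    set a := t + 1 with ha
    rcases le_or_gt y (max 1 |a|) with hcase | hcase
    · have : a * y ≤ |a| * max 1 |a| := by
        calc a * y ≤ |a| * y := by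
              apply mul_le_mul_of_nonneg_right (le_abs_self a) hy0
          _ ≤ |a| * max 1 |a| := by
              apply mul_le_mul_of_nonneg_left hcase (abs_nonneg a)
      nlinarith [pow_nonneg hy0 m]
    · have h1y : (1 : ℝ) ≤ y := le_trans (le_max_left _ _) hcase.le
      have hay : |a| ≤ y := le_trans (le_max_right _ _) hcase.le
      have hym : y ^ 2 ≤ y ^ m := pow_le_pow_right₀ h1y hm
      have : a * y ≤ y ^ m := by
        calc a * y ≤ |a| * y := mul_le_mul_of_nonneg_right (le_abs_self a) hy0
          _ ≤ y * y := mul_le_mul_of_nonneg_right hay hy0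
          _ = y ^ 2 := by ring
          _ ≤ y ^ m := hym
      have hc : (0:ℝ) ≤ |a| * max 1 |a| :=
        mul_nonneg (abs_nonneg a) (le_trans zero_le_one (le_max_left _ _))
      linarith
  have := key (x ^ 2) (sq_nonneg x)
  rw [hx2]
  linarith

lemma integrable_abs_pow_weight (hm : 2 ≤ m) (t : ℝ) (j : ℕ) :
    Integrable (fun x : ℝ => |x| ^ j * Real.exp (-x ^ (2 * m) + t * x ^ 2)) := by
  set c := |t + 1| * max 1 |t + 1| with hc
  have g1 : Integrable (fun x : ℝ => Real.exp (-x ^ 2)) := by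
    simpa using integrable_exp_neg_mul_sq (one_pos)
  have g2 : Integrable (fun x : ℝ => x ^ (2 * j) * Real.exp (-x ^ 2)) := by
    have := integrable_rpow_mul_exp_neg_mul_sq (b := 1) one_pos
      (s := ((2 * j : ℕ) : ℝ)) (lt_of_lt_of_le (by norm_num) ((2*j : ℕ).cast_nonneg))
    simp only [Real.rpow_natCast] at this
    simpa using this
  have gsum : Integrable
      (fun x : ℝ => Real.exp c * ((1 + x ^ (2 * j)) * Real.exp (-x ^ 2))) := by
    refine Integrable.const_mul ?_ _
    refine (g1.add g2).congr ?_
    filter_upwards with x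
    simp only [Pi.add_apply]
    ring
  refine gsum.mono' ?_ ?_
  · apply Continuous.aestronglyMeasurable
    exact (continuous_abs.pow j).mul
      (((continuous_pow (2 * m)).neg.add (continuous_const.mul (continuous_pow 2))).rexp)
  · filter_upwards with x
    have h1 : |x| ^ j ≤ 1 + x ^ (2 * j) := by
      rcases le_or_gt (|x|) 1 with h | h
      · have : |x| ^ j ≤ 1 := pow_le_one₀ (abs_nonneg x) h
        nlinarith [even_two_mul j |>.pow_abs x ▸ (pow_nonneg (abs_nonneg x) (2*j))]
      · have h2 : |x| ^ j ≤ |x| ^ (2 * j) := pow_le_pow_right₀ h.le (by omega)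
        have h3 : |x| ^ (2 * j) = x ^ (2 * j) := by
          rw [← abs_pow, abs_of_nonneg (even_two_mul j |>.pow_nonneg x)]
        nlinarith
    have h2 : Real.exp (-x ^ (2 * m) + t * x ^ 2) ≤ Real.exp c * Real.exp (-x ^ 2) := by
      rw [← Real.exp_add]
      apply Real.exp_le_exp.2
      have := exp_arg_bound hm t x
      linarith
    have hnn : (0:ℝ) ≤ |x| ^ j := pow_nonneg (abs_nonneg x) j
    rw [Real.norm_eq_abs, abs_mul, abs_of_nonneg hnn, abs_of_nonneg (Real.exp_pos _).le]
    calc |x| ^ j * Real.exp (-x ^ (2 * m) + t * x ^ 2)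
        ≤ (1 + x ^ (2 * j)) * (Real.exp c * Real.exp (-x ^ 2)) := by
          apply mul_le_mul h1 h2 (Real.exp_pos _).le
          nlinarith [even_two_mul j |>.pow_nonneg x]
      _ = Real.exp c * ((1 + x ^ (2 * j)) * Real.exp (-x ^ 2)) := by ring

lemma integrable_pow_weight (hm : 2 ≤ m) (t : ℝ) (j : ℕ) :
    Integrable (fun x : ℝ => x ^ j * Real.exp (-x ^ (2 * m) + t * x ^ 2)) := by
  refine (integrable_abs_pow_weight hm t j).mono' ?_ ?_
  · apply Continuous.aestronglyMeasurable
    exact (continuous_pow j).mul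
      (((continuous_pow (2 * m)).neg.add (continuous_const.mul (continuous_pow 2))).rexp)
  · filter_upwards with x
    rw [Real.norm_eq_abs, abs_mul, abs_pow, abs_of_nonneg (Real.exp_pos _).le]

lemma hasDerivAt_freudMoment (hm : 2 ≤ m) (t : ℝ) (j : ℕ) :
    HasDerivAt (fun s : ℝ => freudMoment m s j) (freudMoment m t (j + 2)) t := by
  have key := hasDerivAt_integral_of_dominated_loc_of_deriv_le
    (μ := (volume : Measure ℝ)) (𝕜 := ℝ)
    (F := fun s x => x ^ j * Real.exp (-x ^ (2 * m) + s * x ^ 2))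
    (F' := fun s x => x ^ (j + 2) * Real.exp (-x ^ (2 * m) + s * x ^ 2))
    (x₀ := t)
    (bound := fun x => |x| ^ (j + 2) * Real.exp (-x ^ (2 * m) + (t + 1) * x ^ 2))
    (s := Metric.ball t 1) (Metric.ball_mem_nhds t one_pos) ?_ ?_ ?_ ?_ ?_ ?_
  · exact key.2
  · filter_upwards with s
    apply Continuous.aestronglyMeasurable
    exact (continuous_pow j).mul
      (((continuous_pow (2 * m)).neg.add (continuous_const.mul (continuous_pow 2))).rexp)
  · exact integrable_pow_weight hm t j
  · apply Continuous.aestronglyMeasurable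
    exact (continuous_pow (j + 2)).mul
      (((continuous_pow (2 * m)).neg.add (continuous_const.mul (continuous_pow 2))).rexp)
  · filter_upwards with x
    intro s hs
    rw [Real.norm_eq_abs, abs_mul, abs_pow, abs_of_nonneg (Real.exp_pos _).le]
    apply mul_le_mul_of_nonneg_left _ (pow_nonneg (abs_nonneg x) _)
    apply Real.exp_le_exp.2
    have : s ≤ t + 1 := by
      have h := mem_ball_iff_norm.1 hs
      rw [Real.norm_eq_abs] at h
      have := abs_lt.1 h
      linarith
    nlinarith [sq_nonneg x]
  · exact integrable_abs_pow_weight hm (t + 1) (j + 2)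
  · filter_upwards with x
    intro s _
    have h1 : HasDerivAt (fun s : ℝ => -x ^ (2 * m) + s * x ^ 2) (x ^ 2) s := by
      simpa using ((hasDerivAt_id s).mul_const (x ^ 2)).const_add (-x ^ (2 * m))
    have h2 := (h1.exp).const_mul (x ^ j)
    refine h2.congr_deriv (Eq.symm ?_)
    ring

lemma freudMoment_odd (t : ℝ) {j : ℕ} (hj : j % 2 = 1) : freudMoment m t j = 0 := by
  have hmp : MeasurePreserving (fun x : ℝ => -x) volume volume :=
    Measure.measurePreserving_neg _
  have hcomp := hmp.integral_comp (Homeomorph.neg ℝ).measurableEmbedding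
    (fun x : ℝ => x ^ j * Real.exp (-x ^ (2 * m) + t * x ^ 2))
  have hodd : ∀ x : ℝ, (-x) ^ j * Real.exp (-(-x) ^ (2 * m) + t * (-x) ^ 2)
      = -(x ^ j * Real.exp (-x ^ (2 * m) + t * x ^ 2)) := by
    intro x
    have hj' : Odd j := Nat.odd_iff.2 hj
    rw [hj'.neg_pow, (even_two_mul m).neg_pow, neg_sq]
    ring
  have : freudMoment m t j = - freudMoment m t j := by
    calc freudMoment m t j = ∫ x : ℝ, (-x) ^ j * Real.exp (-(-x) ^ (2 * m) + t * (-x) ^ 2) := by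
          rw [hcomp]; rfl
      _ = ∫ x : ℝ, -(x ^ j * Real.exp (-x ^ (2 * m) + t * x ^ 2)) := by
          congr 1; funext x; exact hodd x
      _ = - freudMoment m t j := by
          rw [integral_neg]; rfl
  linarith

noncomputable def Jint (m : ℕ) (t : ℝ) (P : Polynomial ℝ) : ℝ :=
  ∫ x : ℝ, P.eval x * Real.exp (-x ^ (2 * m) + t * x ^ 2)

lemma Jint_integrable (hm : 2 ≤ m) (t : ℝ) (P : Polynomial ℝ) :
    Integrable (fun x : ℝ => P.eval x * Real.exp (-x ^ (2 * m) + t * x ^ 2)) := by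
  have : (fun x : ℝ => P.eval x * Real.exp (-x ^ (2 * m) + t * x ^ 2))
      = fun x : ℝ => ∑ i ∈ Finset.range (P.natDegree + 1),
          P.coeff i * (x ^ i * Real.exp (-x ^ (2 * m) + t * x ^ 2)) := by
    funext x
    rw [Polynomial.eval_eq_sum_range, Finset.sum_mul]
    congr 1; funext i; ring
  rw [this]
  apply integrable_finset_sum
  intro i _
  exact (integrable_pow_weight hm t i).const_mul _

lemma Jint_monomial (t : ℝ) (a : ℝ) (j : ℕ) :
    Jint m t (Polynomial.C a * Polynomial.X ^ j) = a * freudMoment m t j := by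
  unfold Jint freudMoment
  rw [← MeasureTheory.integral_const_mul]
  congr 1; funext x
  simp [Polynomial.eval_mul, Polynomial.eval_pow]
  ring

lemma Jint_add (hm : 2 ≤ m) (t : ℝ) (P Q : Polynomial ℝ) :
    Jint m t (P + Q) = Jint m t P + Jint m t Q := by
  unfold Jint
  rw [← integral_add (Jint_integrable hm t P) (Jint_integrable hm t Q)]
  congr 1; funext x
  rw [Polynomial.eval_add]; ring

lemma Jint_zero (t : ℝ) : Jint m t 0 = 0 := by
  unfold Jint; simp

lemma Jint_sub (hm : 2 ≤ m) (t : ℝ) (P Q : Polynomial ℝ) :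
    Jint m t (P - Q) = Jint m t P - Jint m t Q := by
  unfold Jint
  rw [← integral_sub (Jint_integrable hm t P) (Jint_integrable hm t Q)]
  congr 1; funext x
  rw [Polynomial.eval_sub]; ring

lemma Jint_C_mul (t : ℝ) (a : ℝ) (P : Polynomial ℝ) :
    Jint m t (Polynomial.C a * P) = a * Jint m t P := by
  unfold Jint
  rw [← MeasureTheory.integral_const_mul]
  congr 1; funext x
  rw [Polynomial.eval_mul, Polynomial.eval_C]; ring

lemma Jint_finset_sum (hm : 2 ≤ m) (t : ℝ) {ι : Type*} (s : Finset ι)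
    (f : ι → Polynomial ℝ) :
    Jint m t (∑ i ∈ s, f i) = ∑ i ∈ s, Jint m t (f i) := by
  classical
  induction s using Finset.induction_on with
  | empty => simp [Jint_zero]
  | @insert _ _ hne ih =>
      rw [Finset.sum_insert hne, Finset.sum_insert hne, Jint_add hm, ih]

lemma Jint_eq_sum (hm : 2 ≤ m) (t : ℝ) {P : Polynomial ℝ} {N : ℕ}
    (hN : P.natDegree < N) :
    Jint m t P = ∑ i ∈ Finset.range N, P.coeff i * freudMoment m t i := by
  conv_lhs => rw [P.as_sum_range' N hN]
  rw [Jint_finset_sum hm]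
  congr 1; funext i
  rw [← Polynomial.C_mul_X_pow_eq_monomial, Jint_monomial]

lemma Jint_sq_nonneg (t : ℝ) (P : Polynomial ℝ) : 0 ≤ Jint m t (P * P) := by
  unfold Jint
  apply integral_nonneg
  intro x
  simp only [Pi.zero_apply, Polynomial.eval_mul]
  have := Real.exp_pos (-x ^ (2 * m) + t * x ^ 2)
  nlinarith [sq_nonneg (P.eval x)]

lemma Jint_sq_pos (hm : 2 ≤ m) (t : ℝ) {P : Polynomial ℝ} (hP : P ≠ 0) :
    0 < Jint m t (P * P) := by
  unfold Jint
  have hnn : 0 ≤ fun x : ℝ => (P * P).eval x * Real.exp (-x ^ (2 * m) + t * x ^ 2) := by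
    intro x
    simp only [Pi.zero_apply, Polynomial.eval_mul]
    have := Real.exp_pos (-x ^ (2 * m) + t * x ^ 2)
    nlinarith [sq_nonneg (P.eval x)]
  rw [integral_pos_iff_support_of_nonneg hnn (Jint_integrable hm t _)]
  have hsup : Function.support
      (fun x : ℝ => (P * P).eval x * Real.exp (-x ^ (2 * m) + t * x ^ 2))
      = {x : ℝ | ¬ P.IsRoot x} := by
    ext x
    simp only [Function.mem_support, Set.mem_setOf_eq, Polynomial.IsRoot,
      Polynomial.eval_mul]
    constructor
    · intro h hx; apply h; rw [hx]; ring
    · intro h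
      have := Real.exp_pos (-x ^ (2 * m) + t * x ^ 2)
      positivity
  rw [hsup]
  by_contra hzero
  push_neg at hzero
  have h0 : volume {x : ℝ | ¬ P.IsRoot x} = 0 := le_antisymm hzero zero_le
  have hroots : volume {x : ℝ | P.IsRoot x} = 0 :=
    (Polynomial.finite_setOf_isRoot hP).measure_zero _
  have : (volume : Measure ℝ) Set.univ = 0 := by
    have : (Set.univ : Set ℝ) ⊆ {x : ℝ | P.IsRoot x} ∪ {x : ℝ | ¬ P.IsRoot x} := by
      intro x _
      by_cases h : P.IsRoot x
      · exact Or.inl h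
      · exact Or.inr h
    refine le_antisymm ?_ zero_le
    calc volume (Set.univ : Set ℝ) ≤ volume ({x : ℝ | P.IsRoot x} ∪ {x : ℝ | ¬ P.IsRoot x}) :=
          measure_mono this
      _ ≤ volume {x : ℝ | P.IsRoot x} + volume {x : ℝ | ¬ P.IsRoot x} := measure_union_le _ _
      _ = 0 := by rw [h0, hroots]; simp
  rw [Real.volume_univ] at this
  simp at this

def HasPar (P : Polynomial ℝ) (p : ℕ) : Prop :=
  ∀ i, P.coeff i ≠ 0 → i % 2 = p % 2

lemma HasPar.X_pow (n : ℕ) : HasPar (Polynomial.X ^ n : Polynomial ℝ) n := by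
  intro i hi
  rw [Polynomial.coeff_X_pow] at hi
  by_cases h : i = n
  · rw [h]
  · simp [h] at hi

lemma HasPar.mul {P Q : Polynomial ℝ} {p q : ℕ} (hP : HasPar P p) (hQ : HasPar Q q) :
    HasPar (P * Q) (p + q) := by
  intro i hi
  rw [Polynomial.coeff_mul] at hi
  obtain ⟨⟨a, b⟩, hmem, hne⟩ := Finset.exists_ne_zero_of_sum_ne_zero hi
  rw [Finset.HasAntidiagonal.mem_antidiagonal] at hmem
  have ha : a % 2 = p % 2 := hP a (by intro h; apply hne; simp [h])
  have hb : b % 2 = q % 2 := hQ b (by intro h; apply hne; simp [h])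
  omega

lemma HasPar.C_mul {P : Polynomial ℝ} {p : ℕ} (a : ℝ) (hP : HasPar P p) :
    HasPar (Polynomial.C a * P) p := by
  intro i hi
  rw [Polynomial.coeff_C_mul] at hi
  exact hP i (by intro h; apply hi; rw [h]; ring)

lemma HasPar.sub {P Q : Polynomial ℝ} {p : ℕ} (hP : HasPar P p) (hQ : HasPar Q p) :
    HasPar (P - Q) p := by
  intro i hi
  rw [Polynomial.coeff_sub] at hi
  by_cases h : P.coeff i = 0
  · exact hQ i (by intro h'; apply hi; rw [h, h']; ring)
  · exact hP i h

lemma HasPar.add {P Q : Polynomial ℝ} {p : ℕ} (hP : HasPar P p) (hQ : HasPar Q p) :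
    HasPar (P + Q) p := by
  intro i hi
  rw [Polynomial.coeff_add] at hi
  by_cases h : P.coeff i = 0
  · exact hQ i (by intro h'; apply hi; rw [h, h']; ring)
  · exact hP i h

lemma HasPar.sum {ι : Type*} {s : Finset ι} {f : ι → Polynomial ℝ} {p : ℕ}
    (h : ∀ i ∈ s, HasPar (f i) p) : HasPar (∑ i ∈ s, f i) p := by
  classical
  induction s using Finset.induction_on with
  | empty => intro i hi; simp at hi
  | @insert a s hne ih =>
      rw [Finset.sum_insert hne]
      exact (h a (Finset.mem_insert_self a s)).add
        (ih fun i hi => h i (Finset.mem_insert_of_mem hi))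

lemma Jint_eq_zero_of_odd (hm : 2 ≤ m) (t : ℝ) {P : Polynomial ℝ} {p : ℕ}
    (hP : HasPar P p) (hp : p % 2 = 1) : Jint m t P = 0 := by
  rw [Jint_eq_sum hm t (Nat.lt_succ_self P.natDegree)]
  apply Finset.sum_eq_zero
  intro i _
  by_cases h : P.coeff i = 0
  · rw [h, zero_mul]
  · have : i % 2 = 1 := by rw [hP i h, hp]
    rw [freudMoment_odd t this, mul_zero]

open Polynomial in
noncomputable def gp (m : ℕ) (t : ℝ) : ℕ → Polynomial ℝ
  | n => Polynomial.X ^ n - ∑ k ∈ (Finset.range n).attach,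
      Polynomial.C (Jint m t (Polynomial.X ^ n * gp m t k) /
        Jint m t (gp m t k * gp m t k)) * gp m t k
  termination_by n => n
  decreasing_by exact Finset.mem_range.mp k.2

noncomputable def hc (m : ℕ) (t : ℝ) (k : ℕ) : ℝ := Jint m t (gp m t k * gp m t k)

lemma gp_def (m : ℕ) (t : ℝ) (n : ℕ) :
    gp m t n = Polynomial.X ^ n - ∑ k ∈ Finset.range n,
      Polynomial.C (Jint m t (Polynomial.X ^ n * gp m t k) / hc m t k) * gp m t k := by
  rw [gp]
  congr 1
  exact Finset.sum_attach (Finset.range n)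
    (fun k => Polynomial.C (Jint m t (Polynomial.X ^ n * gp m t k) / hc m t k) * gp m t k)

lemma HasPar.congr {P : Polynomial ℝ} {p q : ℕ} (hP : HasPar P p) (h : p % 2 = q % 2) :
    HasPar P q := fun i hi => by rw [hP i hi, h]

lemma HasPar.zero (p : ℕ) : HasPar (0 : Polynomial ℝ) p := by
  intro i hi; simp at hi

lemma gp_master (hm : 2 ≤ m) (t : ℝ) : ∀ n : ℕ,
    (gp m t n).natDegree = n ∧ (gp m t n).Monic ∧ HasPar (gp m t n) n ∧
      (∀ k, k < n → Jint m t (gp m t n * gp m t k) = 0) := by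
  intro n
  induction n using Nat.strong_induction_on with
  | _ n ih =>
  rcases Nat.eq_zero_or_pos n with rfl | hn
  · rw [gp_def]
    simp only [pow_zero, Finset.range_zero, Finset.sum_empty, sub_zero]
    refine ⟨Polynomial.natDegree_one, Polynomial.monic_one, ?_, fun k hk => by omega⟩
    intro i hi
    rw [Polynomial.coeff_one] at hi
    by_cases h : i = 0
    · rw [h]
    · simp [h] at hi
  -- n ≥ 1
  have hdegS : (∑ k ∈ Finset.range n,
      Polynomial.C (Jint m t (Polynomial.X ^ n * gp m t k) / hc m t k) * gp m t k).natDegree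
      ≤ n - 1 := by
    apply Polynomial.natDegree_sum_le_of_forall_le
    intro k hk
    rw [Finset.mem_range] at hk
    calc (Polynomial.C (Jint m t (Polynomial.X ^ n * gp m t k) / hc m t k) *
          gp m t k).natDegree
        ≤ (Polynomial.C (Jint m t (Polynomial.X ^ n * gp m t k) / hc m t k)).natDegree
          + (gp m t k).natDegree := Polynomial.natDegree_mul_le
      _ ≤ 0 + k := by
          apply add_le_add (le_of_eq (Polynomial.natDegree_C _)) (le_of_eq (ih k hk).1)
      _ ≤ n - 1 := by omega
  have hdegSlt : (∑ k ∈ Finset.range n,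
      Polynomial.C (Jint m t (Polynomial.X ^ n * gp m t k) / hc m t k) * gp m t k).natDegree
      < (Polynomial.X ^ n : Polynomial ℝ).natDegree := by
    rw [Polynomial.natDegree_X_pow]
    omega
  have hdeg : (gp m t n).natDegree = n := by
    rw [gp_def, Polynomial.natDegree_sub_eq_left_of_natDegree_lt hdegSlt,
      Polynomial.natDegree_X_pow]
  have hmono : (gp m t n).Monic := by
    unfold Polynomial.Monic
    rw [Polynomial.leadingCoeff, hdeg, gp_def, Polynomial.coeff_sub,
      Polynomial.coeff_X_pow, if_pos rfl,
      Polynomial.coeff_eq_zero_of_natDegree_lt (by omega : (∑ k ∈ Finset.range n,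
        Polynomial.C (Jint m t (Polynomial.X ^ n * gp m t k) / hc m t k) * gp m t k).natDegree < n)]
    ring
  have hpar : HasPar (gp m t n) n := by
    rw [gp_def]
    apply (HasPar.X_pow n).sub
    apply HasPar.sum
    intro k hk
    rw [Finset.mem_range] at hk
    by_cases hpk : k % 2 = n % 2
    · exact ((ih k hk).2.2.1.C_mul _).congr hpk
    · have hodd : Jint m t (Polynomial.X ^ n * gp m t k) = 0 := by
        apply Jint_eq_zero_of_odd hm t ((HasPar.X_pow n).mul (ih k hk).2.2.1)
        omega
      rw [hodd, zero_div]
      simp only [map_zero, zero_mul]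
      exact HasPar.zero n
  refine ⟨hdeg, hmono, hpar, ?_⟩
  intro k hk
  have hexpand : gp m t n * gp m t k = Polynomial.X ^ n * gp m t k -
      ∑ j ∈ Finset.range n,
        Polynomial.C (Jint m t (Polynomial.X ^ n * gp m t j) / hc m t j) *
          (gp m t j * gp m t k) := by
    conv_lhs => rw [gp_def]
    rw [sub_mul, Finset.sum_mul]
    congr 1
    apply Finset.sum_congr rfl
    intro j _
    ring
  rw [hexpand, Jint_sub hm, Jint_finset_sum hm]
  have hsum : ∑ j ∈ Finset.range n,
      Jint m t (Polynomial.C (Jint m t (Polynomial.X ^ n * gp m t j) / hc m t j) *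
        (gp m t j * gp m t k))
      = Jint m t (Polynomial.X ^ n * gp m t k) := by
    rw [Finset.sum_eq_single k]
    · rw [Jint_C_mul]
      have hknz : gp m t k ≠ 0 := (ih k hk).2.1.ne_zero
      have hcpos : 0 < hc m t k := Jint_sq_pos hm t hknz
      exact div_mul_cancel₀ _ hcpos.ne'
    · intro j hj hjk
      rw [Finset.mem_range] at hj
      rw [Jint_C_mul]
      rcases lt_or_gt_of_ne hjk with h | h
      · rw [mul_comm (gp m t j), (ih k hk).2.2.2 j h, mul_zero]
      · rw [(ih j hj).2.2.2 k h, mul_zero]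
    · intro hknot
      exact absurd (Finset.mem_range.2 hk) hknot
  rw [hsum]
  ring

lemma gp_natDegree (hm : 2 ≤ m) (t : ℝ) (n : ℕ) : (gp m t n).natDegree = n :=
  (gp_master hm t n).1

lemma gp_monic (hm : 2 ≤ m) (t : ℝ) (n : ℕ) : (gp m t n).Monic :=
  (gp_master hm t n).2.1

lemma gp_par (hm : 2 ≤ m) (t : ℝ) (n : ℕ) : HasPar (gp m t n) n :=
  (gp_master hm t n).2.2.1

lemma gp_orth (hm : 2 ≤ m) (t : ℝ) {j k : ℕ} (h : j ≠ k) :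
    Jint m t (gp m t j * gp m t k) = 0 := by
  rcases lt_or_gt_of_ne h with hlt | hgt
  · rw [mul_comm]; exact (gp_master hm t k).2.2.2 j hlt
  · exact (gp_master hm t j).2.2.2 k hgt

lemma hc_pos (hm : 2 ≤ m) (t : ℝ) (k : ℕ) : 0 < hc m t k :=
  Jint_sq_pos hm t (gp_monic hm t k).ne_zero

lemma hc_ne (hm : 2 ≤ m) (t : ℝ) (k : ℕ) : hc m t k ≠ 0 := (hc_pos hm t k).ne'

lemma gp_zero_eq (m : ℕ) (t : ℝ) : gp m t 0 = 1 := by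
  rw [gp_def]; simp

lemma Jint_one (m : ℕ) (t : ℝ) : Jint m t 1 = freudMoment m t 0 := by
  unfold Jint freudMoment
  congr 1; funext x; simp

lemma gp_span (hm : 2 ≤ m) (t : ℝ) : ∀ N : ℕ, ∀ P : Polynomial ℝ,
    P.natDegree ≤ N → (∀ k, k ≤ N → Jint m t (P * gp m t k) = 0) → P = 0 := by
  intro N
  induction N with
  | zero =>
      intro P hdeg horth
      have hP : P = Polynomial.C (P.coeff 0) := Polynomial.eq_C_of_natDegree_le_zero hdeg
      have h0 := horth 0 le_rfl
      rw [hP, gp_zero_eq, mul_one] at h0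
      have hmu : Jint m t (Polynomial.C (P.coeff 0)) = P.coeff 0 * Jint m t 1 := by
        rw [← Jint_C_mul t (P.coeff 0) 1, mul_one]
      rw [hmu] at h0
      have hpos : 0 < Jint m t 1 := by
        have := Jint_sq_pos hm t (one_ne_zero : (1 : Polynomial ℝ) ≠ 0)
        simpa using this
      have : P.coeff 0 = 0 := by
        rcases mul_eq_zero.1 h0 with h | h
        · exact h
        · exact absurd h hpos.ne'
      rw [hP, this, map_zero]
  | succ N ihN =>
      intro P hdeg horth
      set a := P.coeff (N + 1) with ha
      set P' := P - Polynomial.C a * gp m t (N + 1) with hP'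
      have hdeg' : P'.natDegree ≤ N := by
        apply Polynomial.natDegree_le_iff_coeff_eq_zero.2
        intro i hi
        rw [hP', Polynomial.coeff_sub, Polynomial.coeff_C_mul]
        rcases Nat.lt_or_ge (N + 1) i with h | h
        · rw [Polynomial.coeff_eq_zero_of_natDegree_lt (lt_of_le_of_lt hdeg h),
            Polynomial.coeff_eq_zero_of_natDegree_lt (by rw [gp_natDegree hm t]; exact h)]
          ring
        · have : i = N + 1 := by omega
          rw [this, ← ha]
          have := (gp_monic hm t (N + 1)).coeff_natDegree
          rw [gp_natDegree hm t] at this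
          rw [this]
          ring
      have horth' : ∀ k, k ≤ N → Jint m t (P' * gp m t k) = 0 := by
        intro k hk
        rw [hP', sub_mul, Jint_sub hm, horth k (by omega), mul_assoc, Jint_C_mul,
          gp_orth hm t (by omega : N + 1 ≠ k)]
        ring
      have hP'0 : P' = 0 := ihN P' hdeg' horth'
      have hPa : P = Polynomial.C a * gp m t (N + 1) := by
        have := sub_eq_zero.1 hP'0
        exact this
      have h1 := horth (N + 1) le_rfl
      rw [hPa, mul_assoc, Jint_C_mul] at h1
      have : a = 0 := by
        rcases mul_eq_zero.1 h1 with h | h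
        · exact h
        · exact absurd h (hc_ne hm t (N + 1))
      rw [hPa, this, map_zero, zero_mul]

lemma gp_expand (hm : 2 ≤ m) (t : ℝ) (N : ℕ) (P : Polynomial ℝ)
    (hdeg : P.natDegree ≤ N) :
    P = ∑ k ∈ Finset.range (N + 1),
      Polynomial.C (Jint m t (P * gp m t k) / hc m t k) * gp m t k := by
  set Q := P - ∑ k ∈ Finset.range (N + 1),
      Polynomial.C (Jint m t (P * gp m t k) / hc m t k) * gp m t k with hQ
  have hQdeg : Q.natDegree ≤ N := by
    rw [hQ]
    apply le_trans (Polynomial.natDegree_sub_le _ _)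
    apply max_le hdeg
    apply Polynomial.natDegree_sum_le_of_forall_le
    intro k hk
    rw [Finset.mem_range] at hk
    calc (Polynomial.C (Jint m t (P * gp m t k) / hc m t k) * gp m t k).natDegree
        ≤ _ + _ := Polynomial.natDegree_mul_le
      _ ≤ 0 + k := add_le_add (le_of_eq (Polynomial.natDegree_C _))
          (le_of_eq (gp_natDegree hm t k))
      _ ≤ N := by omega
  have hQorth : ∀ k, k ≤ N → Jint m t (Q * gp m t k) = 0 := by
    intro k hk
    rw [hQ, sub_mul, Finset.sum_mul, Jint_sub hm, Jint_finset_sum hm]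
    have : ∑ j ∈ Finset.range (N + 1),
        Jint m t (Polynomial.C (Jint m t (P * gp m t j) / hc m t j) * gp m t j * gp m t k)
        = Jint m t (P * gp m t k) := by
      rw [Finset.sum_eq_single k]
      · rw [mul_assoc, Jint_C_mul]
        exact div_mul_cancel₀ _ (hc_ne hm t k)
      · intro j hj hjk
        rw [mul_assoc, Jint_C_mul, gp_orth hm t hjk, mul_zero]
      · intro hnot
        exact absurd (Finset.mem_range.2 (by omega)) hnot
    rw [this]
    ring
  have : Q = 0 := gp_span hm t N Q hQdeg hQorth
  rw [hQ] at this
  linear_combination (norm := module) this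

lemma gp_orth_lowdeg (hm : 2 ≤ m) (t : ℝ) {n : ℕ} {Q : Polynomial ℝ}
    (hdeg : Q.natDegree < n) : Jint m t (gp m t n * Q) = 0 := by
  cases n with
  | zero => omega
  | succ N =>
    have hQ := gp_expand hm t N Q (by omega)
    conv_lhs => rw [hQ]
    rw [Finset.mul_sum, Jint_finset_sum hm]
    apply Finset.sum_eq_zero
    intro k hk
    rw [Finset.mem_range] at hk
    have heq : gp m t (N + 1) * (Polynomial.C (Jint m t (Q * gp m t k) / hc m t k) * gp m t k)
        = Polynomial.C (Jint m t (Q * gp m t k) / hc m t k) *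
          (gp m t (N + 1) * gp m t k) := by ring
    rw [heq, Jint_C_mul, gp_orth hm t (by omega : N + 1 ≠ k), mul_zero]

lemma Jint_Xpow_gp_self (hm : 2 ≤ m) (t : ℝ) (k : ℕ) :
    Jint m t (Polynomial.X ^ k * gp m t k) = hc m t k := by
  have hXk : Polynomial.X ^ k = gp m t k + (Polynomial.X ^ k - gp m t k) := by ring
  rw [hXk, add_mul, Jint_add hm]
  have hdeg : (Polynomial.X ^ k - gp m t k).natDegree < k ∨
      (Polynomial.X ^ k - gp m t k) = 0 := by
    rcases Nat.eq_zero_or_pos k with rfl | hk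
    · right
      rw [gp_zero_eq]; simp
    · left
      rw [gp_def]
      have : Polynomial.X ^ k - (Polynomial.X ^ k - ∑ j ∈ Finset.range k,
          Polynomial.C (Jint m t (Polynomial.X ^ k * gp m t j) / hc m t j) * gp m t j)
          = ∑ j ∈ Finset.range k,
          Polynomial.C (Jint m t (Polynomial.X ^ k * gp m t j) / hc m t j) * gp m t j := by
        ring
      rw [this]
      calc _ ≤ k - 1 := by
            apply Polynomial.natDegree_sum_le_of_forall_le
            intro j hj
            rw [Finset.mem_range] at hj
            calc _ ≤ _ + _ := Polynomial.natDegree_mul_le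
              _ ≤ 0 + j := add_le_add (le_of_eq (Polynomial.natDegree_C _))
                  (le_of_eq (gp_natDegree hm t j))
              _ ≤ k - 1 := by omega
        _ < k := by omega
  have h2 : Jint m t ((Polynomial.X ^ k - gp m t k) * gp m t k) = 0 := by
    rcases hdeg with h | h
    · rw [mul_comm]
      exact gp_orth_lowdeg hm t h
    · rw [h, zero_mul, Jint_zero]
  rw [h2]
  unfold hc
  ring

lemma gp_one_eq (m : ℕ) (t : ℝ) : gp m t 1 = Polynomial.X := by
  rw [gp_def]
  rw [Finset.range_one, Finset.sum_singleton, gp_zero_eq, mul_one]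
  have : Jint m t (Polynomial.X ^ 1 * 1) = 0 := by
    rw [mul_one, ← mul_one (Polynomial.X ^ 1 : Polynomial ℝ), ← Polynomial.C_1,
      mul_comm (Polynomial.X ^ 1 : Polynomial ℝ)]
    rw [Jint_monomial]
    rw [freudMoment_odd t (by norm_num : 1 % 2 = 1)]
    ring
  rw [this, zero_div, map_zero, sub_zero, pow_one]

lemma deg_X_mul_gp_sub (hm : 2 ≤ m) (t : ℝ) (n : ℕ) :
    (Polynomial.X * gp m t n - gp m t (n + 1)).natDegree ≤ n := by
  set P := Polynomial.X * gp m t n - gp m t (n + 1) with hP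
  by_cases h0 : P = 0
  · rw [h0]; simp
  have hmono1 : (Polynomial.X * gp m t n).Monic := Polynomial.monic_X.mul (gp_monic hm t n)
  have hdeg1 : (Polynomial.X * gp m t n).natDegree = n + 1 := by
    rw [Polynomial.Monic.natDegree_mul Polynomial.monic_X (gp_monic hm t n),
      Polynomial.natDegree_X, gp_natDegree hm t]
    omega
  have hdeg2 : (gp m t (n + 1)).natDegree = n + 1 := gp_natDegree hm t (n + 1)
  have hdlt : P.degree < (Polynomial.X * gp m t n).degree := by
    apply Polynomial.degree_sub_lt
    · rw [Polynomial.degree_eq_natDegree hmono1.ne_zero,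
        Polynomial.degree_eq_natDegree (gp_monic hm t (n+1)).ne_zero, hdeg1, hdeg2]
    · exact hmono1.ne_zero
    · rw [hmono1.leadingCoeff, (gp_monic hm t (n+1)).leadingCoeff]
  rw [Polynomial.degree_eq_natDegree hmono1.ne_zero, hdeg1] at hdlt
  have := (Polynomial.natDegree_lt_iff_degree_lt h0).2 hdlt
  omega

lemma three_term (hm : 2 ≤ m) (t : ℝ) (n : ℕ) :
    Polynomial.X * gp m t (n + 1) =
      gp m t (n + 2) + Polynomial.C (hc m t (n + 1) / hc m t n) * gp m t n := by
  set bb := hc m t (n + 1) / hc m t n with hbb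
  set P := Polynomial.X * gp m t (n + 1) - gp m t (n + 2) - Polynomial.C bb * gp m t n with hP
  have hPdeg : P.natDegree ≤ n + 1 := by
    rw [hP]
    apply le_trans (Polynomial.natDegree_sub_le _ _)
    apply max_le (deg_X_mul_gp_sub hm t (n + 1))
    calc (Polynomial.C bb * gp m t n).natDegree ≤ _ + _ := Polynomial.natDegree_mul_le
      _ ≤ 0 + n := add_le_add (le_of_eq (Polynomial.natDegree_C _))
          (le_of_eq (gp_natDegree hm t n))
      _ ≤ n + 1 := by omega
  have horth : ∀ k, k ≤ n + 1 → Jint m t (P * gp m t k) = 0 := by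
    intro k hk
    have hsplit : P * gp m t k =
        gp m t (n + 1) * (Polynomial.X * gp m t k) -
        gp m t (n + 2) * gp m t k -
        Polynomial.C bb * (gp m t n * gp m t k) := by
      rw [hP]; ring
    rw [hsplit, Jint_sub hm, Jint_sub hm, Jint_C_mul]
    rcases Nat.lt_or_ge k n with hkn | hkn
    · -- k < n
      have h1 : Jint m t (gp m t (n + 1) * (Polynomial.X * gp m t k)) = 0 := by
        apply gp_orth_lowdeg hm t
        calc (Polynomial.X * gp m t k).natDegree
            ≤ (Polynomial.X : Polynomial ℝ).natDegree + (gp m t k).natDegree :=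
              Polynomial.natDegree_mul_le
          _ = 1 + k := by rw [Polynomial.natDegree_X, gp_natDegree hm t]
          _ < n + 1 := by omega
      rw [h1, gp_orth hm t (by omega : n + 2 ≠ k), gp_orth hm t (by omega : n ≠ k)]
      ring
    rcases Nat.lt_or_ge k (n + 1) with hkn1 | hkn1
    · -- k = n
      have hkeq : k = n := by omega
      subst hkeq
      have hXk : Polynomial.X * gp m t k = gp m t (k + 1) +
          (Polynomial.X * gp m t k - gp m t (k + 1)) := by ring
      have h1 : Jint m t (gp m t (k + 1) * (Polynomial.X * gp m t k)) = hc m t (k + 1) := by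
        rw [hXk, mul_add, Jint_add hm]
        have h2 : Jint m t (gp m t (k + 1) * (Polynomial.X * gp m t k - gp m t (k + 1)))
            = 0 := by
          rcases eq_or_ne (Polynomial.X * gp m t k - gp m t (k + 1)) 0 with h | h
          · rw [h, mul_zero, Jint_zero]
          · apply gp_orth_lowdeg hm t
            have := deg_X_mul_gp_sub hm t k
            omega
        rw [h2]
        unfold hc
        ring
      rw [h1, gp_orth hm t (by omega : k + 2 ≠ k)]
      have hcc : Jint m t (gp m t k * gp m t k) = hc m t k := rfl
      rw [hcc, hbb]
      rw [div_mul_cancel₀ _ (hc_ne hm t k)]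
      ring
    · -- k = n + 1
      have hkeq : k = n + 1 := by omega
      subst hkeq
      have h1 : Jint m t (gp m t (n + 1) * (Polynomial.X * gp m t (n + 1))) = 0 := by
        have hp : HasPar (gp m t (n + 1) * (Polynomial.X * gp m t (n + 1)))
            ((n + 1) + (1 + (n + 1))) := by
          apply (gp_par hm t (n + 1)).mul
          have hX : HasPar (Polynomial.X : Polynomial ℝ) 1 := by
            have := HasPar.X_pow (1 : ℕ)
            rwa [pow_one] at this
          exact hX.mul (gp_par hm t (n + 1))
        exact Jint_eq_zero_of_odd hm t hp (by omega)
      rw [h1, gp_orth hm t (by omega : n + 2 ≠ n + 1), gp_orth hm t (by omega : n ≠ n + 1)]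
      ring
  have hP0 : P = 0 := gp_span hm t (n + 1) P hPdeg horth
  rw [hP] at hP0
  linear_combination (norm := ring) hP0

noncomputable def Ee (m : ℕ) (t : ℝ) (l : ℕ) : ℝ :=
  Jint m t (Polynomial.X ^ (l + 2) * gp m t l)

lemma Ee_zero (hm : 2 ≤ m) (t : ℝ) : Ee m t 0 = hc m t 1 := by
  unfold Ee
  have h : (Polynomial.X : Polynomial ℝ) ^ (0 + 2) * gp m t 0
      = Polynomial.X ^ 1 * gp m t 1 := by
    rw [gp_zero_eq, gp_one_eq]; ring
  rw [h, Jint_Xpow_gp_self hm]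

lemma Ee_one (hm : 2 ≤ m) (t : ℝ) :
    Ee m t 1 = hc m t 2 + hc m t 1 / hc m t 0 * Ee m t 0 := by
  unfold Ee
  have h : (Polynomial.X : Polynomial ℝ) ^ (1 + 2) * gp m t 1
      = Polynomial.X ^ 2 * (Polynomial.X * gp m t 1) := by ring
  rw [h, three_term hm t 0]
  have h2 : (Polynomial.X : Polynomial ℝ) ^ 2 *
      (gp m t 2 + Polynomial.C (hc m t 1 / hc m t 0) * gp m t 0)
      = Polynomial.X ^ 2 * gp m t 2 +
        Polynomial.C (hc m t 1 / hc m t 0) * (Polynomial.X ^ (0 + 2) * gp m t 0) := by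
    ring
  rw [h2, Jint_add hm, Jint_C_mul, Jint_Xpow_gp_self hm]

lemma Ee_rec (hm : 2 ≤ m) (t : ℝ) (l : ℕ) :
    Ee m t (l + 2) = hc m t (l + 3) + hc m t (l + 2) / hc m t (l + 1) *
      (hc m t (l + 2) + hc m t (l + 1) / hc m t l * Ee m t l) := by
  have hinner : Jint m t (Polynomial.X ^ (l + 3) * gp m t (l + 1))
      = hc m t (l + 2) + hc m t (l + 1) / hc m t l * Ee m t l := by
    have h : (Polynomial.X : Polynomial ℝ) ^ (l + 3) * gp m t (l + 1)
        = Polynomial.X ^ (l + 2) * (Polynomial.X * gp m t (l + 1)) := by ring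
    rw [h, three_term hm t l]
    have h2 : (Polynomial.X : Polynomial ℝ) ^ (l + 2) *
        (gp m t (l + 2) + Polynomial.C (hc m t (l + 1) / hc m t l) * gp m t l)
        = Polynomial.X ^ (l + 2) * gp m t (l + 2) +
          Polynomial.C (hc m t (l + 1) / hc m t l) *
            (Polynomial.X ^ (l + 2) * gp m t l) := by ring
    rw [h2, Jint_add hm, Jint_C_mul, Jint_Xpow_gp_self hm]
    rfl
  unfold Ee
  have h : (Polynomial.X : Polynomial ℝ) ^ (l + 2 + 2) * gp m t (l + 2)
      = Polynomial.X ^ (l + 3) * (Polynomial.X * gp m t (l + 2)) := by ring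
  rw [h, three_term hm t (l + 1)]
  have h2 : (Polynomial.X : Polynomial ℝ) ^ (l + 3) *
      (gp m t (l + 3) + Polynomial.C (hc m t (l + 2) / hc m t (l + 1)) * gp m t (l + 1))
      = Polynomial.X ^ (l + 3) * gp m t (l + 3) +
        Polynomial.C (hc m t (l + 2) / hc m t (l + 1)) *
          (Polynomial.X ^ (l + 3) * gp m t (l + 1)) := by ring
  rw [h2, Jint_add hm, Jint_C_mul, Jint_Xpow_gp_self hm, hinner]
  rfl

lemma det_updateRow_expand {n : ℕ} (M : Matrix (Fin n) (Fin n) ℝ) (i : Fin n)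
    (r : Fin n → ℝ) :
    (M.updateRow i r).det = ∑ σ : Equiv.Perm (Fin n),
      ((Equiv.Perm.sign σ : ℤ) : ℝ) *
        (r (σ.symm i) * ∏ j ∈ Finset.univ.erase (σ.symm i), M (σ j) j) := by
  rw [Matrix.det_apply']
  apply Finset.sum_congr rfl
  intro σ _
  congr 1
  rw [← Finset.mul_prod_erase Finset.univ _ (Finset.mem_univ (σ.symm i))]
  congr 1
  · rw [show σ (σ.symm i) = i from σ.apply_symm_apply i, Matrix.updateRow_self]
  · apply Finset.prod_congr rfl
    intro j hj
    have hji : σ j ≠ i := by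
      intro h
      have : j = σ.symm i := by rw [← h, Equiv.symm_apply_apply]
      exact (Finset.mem_erase.1 hj).1 this
    rw [Matrix.updateRow_ne hji]

lemma hasDerivAt_det_aux {n : ℕ} {A : ℝ → Matrix (Fin n) (Fin n) ℝ}
    {B : Matrix (Fin n) (Fin n) ℝ} {t : ℝ}
    (h : ∀ i j, HasDerivAt (fun s => A s i j) (B i j) t) :
    HasDerivAt (fun s => (A s).det) (∑ i, ((A t).updateRow i (B i)).det) t := by
  classical
  have h1 : ∀ σ : Equiv.Perm (Fin n), HasDerivAt (fun s => ∏ j, A s (σ j) j)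
      (∑ j, (∏ k ∈ Finset.univ.erase j, A t (σ k) k) * B (σ j) j) t := by
    intro σ
    have := HasDerivAt.fun_finsetProd (u := Finset.univ)
      (f := fun (j : Fin n) (s : ℝ) => A s (σ j) j)
      (f' := fun j => B (σ j) j) (x := t) (fun j _ => h (σ j) j)
    simpa [smul_eq_mul] using this
  have hfun : (fun s => (A s).det) = fun s => ∑ σ : Equiv.Perm (Fin n),
      ((Equiv.Perm.sign σ : ℤ) : ℝ) * ∏ j, A s (σ j) j := by
    funext s
    exact Matrix.det_apply' (A s)
  rw [hfun]
  have h2 : HasDerivAt (fun s => ∑ σ : Equiv.Perm (Fin n),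
      ((Equiv.Perm.sign σ : ℤ) : ℝ) * ∏ j, A s (σ j) j)
      (∑ σ : Equiv.Perm (Fin n), ((Equiv.Perm.sign σ : ℤ) : ℝ) *
        ∑ j, (∏ k ∈ Finset.univ.erase j, A t (σ k) k) * B (σ j) j) t :=
    HasDerivAt.fun_sum (fun σ _ => (h1 σ).const_mul _)
  convert h2 using 1
  calc ∑ i, ((A t).updateRow i (B i)).det
      = ∑ i, ∑ σ : Equiv.Perm (Fin n), ((Equiv.Perm.sign σ : ℤ) : ℝ) *
          (B i (σ.symm i) * ∏ j ∈ Finset.univ.erase (σ.symm i), A t (σ j) j) := by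
        apply Finset.sum_congr rfl
        intro i _
        exact det_updateRow_expand (A t) i (B i)
    _ = ∑ σ : Equiv.Perm (Fin n), ∑ i, ((Equiv.Perm.sign σ : ℤ) : ℝ) *
          (B i (σ.symm i) * ∏ j ∈ Finset.univ.erase (σ.symm i), A t (σ j) j) :=
        Finset.sum_comm
    _ = ∑ σ : Equiv.Perm (Fin n), ((Equiv.Perm.sign σ : ℤ) : ℝ) *
        ∑ j, (∏ k ∈ Finset.univ.erase j, A t (σ k) k) * B (σ j) j := by
        apply Finset.sum_congr rfl
        intro σ _
        rw [Finset.mul_sum]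
        rw [← Equiv.sum_comp σ (fun i => ((Equiv.Perm.sign σ : ℤ) : ℝ) *
          (B i (σ.symm i) * ∏ j ∈ Finset.univ.erase (σ.symm i), A t (σ j) j))]
        apply Finset.sum_congr rfl
        intro i _
        rw [Equiv.symm_apply_apply]
        ring

lemma updateRow_mul_right {n : ℕ} (A U : Matrix (Fin n) (Fin n) ℝ) (i : Fin n)
    (r : Fin n → ℝ) :
    (A.updateRow i r) * U = (A * U).updateRow i (fun k => ∑ l, r l * U l k) := by
  ext j k
  by_cases h : j = i
  · subst h
    rw [Matrix.updateRow_self, Matrix.mul_apply]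
    apply Finset.sum_congr rfl
    intro l _
    rw [Matrix.updateRow_self]
  · rw [Matrix.updateRow_ne h, Matrix.mul_apply, Matrix.mul_apply]
    apply Finset.sum_congr rfl
    intro l _
    rw [Matrix.updateRow_ne h]

lemma Jint_Xpow_mul (hm : 2 ≤ m) (t : ℝ) (j : ℕ) {P : Polynomial ℝ} {N : ℕ}
    (h : P.natDegree < N) :
    Jint m t (Polynomial.X ^ j * P)
      = ∑ i ∈ Finset.range N, P.coeff i * freudMoment m t (j + i) := by
  conv_lhs => rw [P.as_sum_range' N h]
  rw [Finset.mul_sum, Jint_finset_sum hm]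
  apply Finset.sum_congr rfl
  intro i _
  have heq : (Polynomial.X : Polynomial ℝ) ^ j * Polynomial.monomial i (P.coeff i)
      = Polynomial.C (P.coeff i) * Polynomial.X ^ (j + i) := by
    rw [← Polynomial.C_mul_X_pow_eq_monomial, pow_add]
    ring
  rw [heq, Jint_monomial]

noncomputable def Hmat (m : ℕ) (t : ℝ) (n : ℕ) : Matrix (Fin n) (Fin n) ℝ :=
  Matrix.of fun j k : Fin n => freudMoment m t ((j : ℕ) + (k : ℕ))

noncomputable def Umat (m : ℕ) (t : ℝ) (n : ℕ) : Matrix (Fin n) (Fin n) ℝ :=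
  Matrix.of fun i k : Fin n => (gp m t (k : ℕ)).coeff (i : ℕ)

noncomputable def Vmat (m : ℕ) (t : ℝ) (n : ℕ) : Matrix (Fin n) (Fin n) ℝ :=
  Matrix.of fun j k : Fin n => Jint m t (Polynomial.X ^ (j : ℕ) * gp m t (k : ℕ))

section MatrixFacts

variable (hm : 2 ≤ m) (t : ℝ) (n : ℕ)
include hm

lemma Umat_det : (Umat m t n).det = 1 := by
  classical
  set U := Umat m t n with hU
  have hUtri : U.BlockTriangular id := by
    intro i k hik
    simp only [id] at hik
    show (gp m t (k : ℕ)).coeff (i : ℕ) = 0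
    apply Polynomial.coeff_eq_zero_of_natDegree_lt
    rw [gp_natDegree hm t]
    exact_mod_cast hik
  rw [Matrix.det_of_upperTriangular hUtri]
  apply Finset.prod_eq_one
  intro k _
  show (gp m t (k : ℕ)).coeff (k : ℕ) = 1
  have := (gp_monic hm t (k : ℕ)).coeff_natDegree
  rwa [gp_natDegree hm t] at this

lemma Hmat_mul_Umat : Hmat m t n * Umat m t n = Vmat m t n := by
    ext j k
    rw [Matrix.mul_apply]
    show ∑ l : Fin n, freudMoment m t ((j : ℕ) + (l : ℕ)) * (gp m t (k : ℕ)).coeff (l : ℕ)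
      = Jint m t (Polynomial.X ^ (j : ℕ) * gp m t (k : ℕ))
    rw [Jint_Xpow_mul hm t _ (by rw [gp_natDegree hm t]; exact k.2)]
    rw [← Fin.sum_univ_eq_sum_range (fun i => (gp m t (k : ℕ)).coeff i *
      freudMoment m t ((j : ℕ) + i)) n]
    apply Finset.sum_congr rfl
    intro l _
    ring

lemma Vmat_tri : (Vmat m t n).BlockTriangular OrderDual.toDual := by
    intro j k hjk
    have hjk' : (j : ℕ) < (k : ℕ) := by exact_mod_cast hjk
    show Jint m t (Polynomial.X ^ (j : ℕ) * gp m t (k : ℕ)) = 0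
    rw [mul_comm]
    apply gp_orth_lowdeg hm t
    rw [Polynomial.natDegree_X_pow]
    exact hjk'
lemma hankelDet_eq_prod : hankelDet m t n = ∏ k ∈ Finset.range n, hc m t k := by
  have hdetV : (Vmat m t n).det = ∏ k ∈ Finset.range n, hc m t k := by
    rw [Matrix.det_of_lowerTriangular _ (Vmat_tri hm t n)]
    rw [← Fin.prod_univ_eq_prod_range (fun k => hc m t k) n]
    apply Finset.prod_congr rfl
    intro k _
    exact Jint_Xpow_gp_self hm t (k : ℕ)
  have h0 : hankelDet m t n = (Hmat m t n).det := rfl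
  rw [h0, ← mul_one (Hmat m t n).det, ← Umat_det hm t n, ← Matrix.det_mul,
    Hmat_mul_Umat hm t n, hdetV]

end MatrixFacts

lemma hankelDet_pos (hm : 2 ≤ m) (t : ℝ) (n : ℕ) : 0 < hankelDet m t n := by
  rw [hankelDet_eq_prod hm t n]
  exact Finset.prod_pos (fun k _ => hc_pos hm t k)

noncomputable def dD (m : ℕ) (t : ℝ) : ℕ → ℝ
  | 0 => 0
  | 1 => Ee m t 0
  | (n + 2) => Ee m t (n + 1) * ∏ k ∈ Finset.range (n + 1), hc m t k
      + Ee m t n * (hc m t (n + 1) * ∏ k ∈ Finset.range n, hc m t k)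

lemma row_eval (hm : 2 ≤ m) (t : ℝ) {n : ℕ} (i : Fin n) (hi : n ≤ (i : ℕ) + 2) :
    ((Hmat m t n).updateRow i (fun k : Fin n => freudMoment m t ((i : ℕ) + (k : ℕ) + 2))).det
      = Ee m t (i : ℕ) * ∏ j ∈ Finset.univ.erase i, hc m t (j : ℕ) := by
  classical
  set r : Fin n → ℝ := fun k => freudMoment m t ((i : ℕ) + (k : ℕ) + 2) with hr
  set v : Fin n → ℝ := fun k => Jint m t (Polynomial.X ^ ((i : ℕ) + 2) * gp m t (k : ℕ))
    with hv
  have hmul : ((Hmat m t n).updateRow i r) * Umat m t n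
      = (Vmat m t n).updateRow i v := by
    rw [updateRow_mul_right, Hmat_mul_Umat hm t n]
    have hveq : (fun k : Fin n => ∑ l, r l * Umat m t n l k) = v := by
      funext k
      show ∑ l : Fin n, r l * Umat m t n l k
        = Jint m t (Polynomial.X ^ ((i : ℕ) + 2) * gp m t (k : ℕ))
      rw [Jint_Xpow_mul hm t _ (by rw [gp_natDegree hm t]; exact k.2)]
      apply Finset.sum_congr rfl ?_ |>.trans
        (Fin.sum_univ_eq_sum_range (fun l => (gp m t (k : ℕ)).coeff l *
          freudMoment m t (((i : ℕ) + 2) + l)) n)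
      intro l _
      show r l * Umat m t n l k = _
      rw [hr]
      show freudMoment m t ((i : ℕ) + (l : ℕ) + 2) * (gp m t (k : ℕ)).coeff (l : ℕ) = _
      rw [show (i : ℕ) + (l : ℕ) + 2 = ((i : ℕ) + 2) + (l : ℕ) by omega]
      ring
    rw [hveq]
  have htri : ((Vmat m t n).updateRow i v).BlockTriangular OrderDual.toDual := by
    intro a b hab
    have hab' : (a : ℕ) < (b : ℕ) := by exact_mod_cast hab
    by_cases ha : a = i
    · subst ha
      rw [Matrix.updateRow_self]
      have hb : (b : ℕ) = (a : ℕ) + 1 := by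
        have := b.2
        omega
      rw [hv]
      apply Jint_eq_zero_of_odd hm t
        ((HasPar.X_pow ((a : ℕ) + 2)).mul (gp_par hm t (b : ℕ)))
      omega
    · rw [Matrix.updateRow_ne ha]
      exact Vmat_tri hm t n hab
  have hdet : (((Hmat m t n).updateRow i r)).det
      = ((Vmat m t n).updateRow i v).det := by
    rw [← hmul, Matrix.det_mul, Umat_det hm t n, mul_one]
  rw [hdet, Matrix.det_of_lowerTriangular _ htri]
  rw [← Finset.mul_prod_erase Finset.univ
    (fun j => ((Vmat m t n).updateRow i v) j j) (Finset.mem_univ i)]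
  congr 1
  · rw [Matrix.updateRow_self]
    exact rfl
  · apply Finset.prod_congr rfl
    intro j hj
    rw [Matrix.updateRow_ne (Finset.mem_erase.1 hj).1]
    exact Jint_Xpow_gp_self hm t (j : ℕ)

lemma hasDerivAt_hankelDet (hm : 2 ≤ m) (t : ℝ) (n : ℕ) :
    HasDerivAt (fun s => hankelDet m s n) (dD m t n) t := by
  classical
  have hder : HasDerivAt (fun s => hankelDet m s n)
      (∑ i : Fin n, ((Hmat m t n).updateRow i
        (fun k : Fin n => freudMoment m t ((i : ℕ) + (k : ℕ) + 2))).det) t := by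
    exact hasDerivAt_det_aux
      (A := fun s => Matrix.of fun j k : Fin n => freudMoment m s ((j : ℕ) + (k : ℕ)))
      (B := Matrix.of fun j k : Fin n => freudMoment m t ((j : ℕ) + (k : ℕ) + 2))
      (fun i j => by
        have := hasDerivAt_freudMoment hm t ((i : ℕ) + (j : ℕ))
        exact this)
  have hzero : ∀ i : Fin n, (i : ℕ) + 2 < n →
      ((Hmat m t n).updateRow i
        (fun k : Fin n => freudMoment m t ((i : ℕ) + (k : ℕ) + 2))).det = 0 := by
    intro i hi
    set i2 : Fin n := ⟨(i : ℕ) + 2, hi⟩ with hi2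
    have hne : i ≠ i2 := by
      intro h
      have : (i : ℕ) = (i : ℕ) + 2 := congrArg Fin.val h
      omega
    apply Matrix.det_zero_of_row_eq hne
    rw [Matrix.updateRow_self, Matrix.updateRow_ne (Ne.symm hne)]
    funext k
    show freudMoment m t ((i : ℕ) + (k : ℕ) + 2) = freudMoment m t (((i : ℕ) + 2) + (k : ℕ))
    congr 1
    omega
  have hsum : (∑ i : Fin n, ((Hmat m t n).updateRow i
      (fun k : Fin n => freudMoment m t ((i : ℕ) + (k : ℕ) + 2))).det) = dD m t n := by
    match n with
    | 0 => simp [dD]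
    | 1 =>
        rw [Fin.sum_univ_one, row_eval hm t 0 (by norm_num)]
        have : (Finset.univ.erase (0 : Fin 1)) = ∅ := by decide
        rw [this, Finset.prod_empty, mul_one]
        rfl
    | (N + 2) =>
        have hpair : (∑ i : Fin (N + 2), ((Hmat m t (N + 2)).updateRow i
            (fun k => freudMoment m t ((i : ℕ) + (k : ℕ) + 2))).det)
            = ∑ i ∈ ({⟨N, by omega⟩, ⟨N + 1, by omega⟩} : Finset (Fin (N + 2))),
              ((Hmat m t (N + 2)).updateRow i
                (fun k => freudMoment m t ((i : ℕ) + (k : ℕ) + 2))).det := by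
          symm
          apply Finset.sum_subset (Finset.subset_univ _)
          intro i _ hnot
          apply hzero
          simp only [Finset.mem_insert, Finset.mem_singleton] at hnot
          push_neg at hnot
          obtain ⟨h1, h2⟩ := hnot
          have hv1 : (i : ℕ) ≠ N := fun h => h1 (Fin.ext h)
          have hv2 : (i : ℕ) ≠ N + 1 := fun h => h2 (Fin.ext h)
          have := i.2
          omega
        rw [hpair, Finset.sum_pair (by
          intro h
          have : N = N + 1 := congrArg Fin.val h
          omega)]
        rw [row_eval hm t _ (by simp), row_eval hm t _ (by simp)]
        have he1 : ∏ j ∈ Finset.univ.erase (⟨N + 1, by omega⟩ : Fin (N + 2)),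
            hc m t (j : ℕ) = ∏ k ∈ Finset.range (N + 1), hc m t k := by
          apply mul_left_cancel₀ (hc_ne hm t (N + 1))
          rw [show hc m t (N + 1) = hc m t ((⟨N + 1, by omega⟩ : Fin (N + 2)) : ℕ) from rfl]
          rw [Finset.mul_prod_erase Finset.univ (fun j : Fin (N + 2) => hc m t (j : ℕ))
            (Finset.mem_univ _)]
          rw [Fin.prod_univ_eq_prod_range (fun k => hc m t k) (N + 2),
            Finset.prod_range_succ]
          ring
        have he2 : ∏ j ∈ Finset.univ.erase (⟨N, by omega⟩ : Fin (N + 2)),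
            hc m t (j : ℕ) = hc m t (N + 1) * ∏ k ∈ Finset.range N, hc m t k := by
          apply mul_left_cancel₀ (hc_ne hm t N)
          rw [show hc m t N = hc m t ((⟨N, by omega⟩ : Fin (N + 2)) : ℕ) from rfl]
          rw [Finset.mul_prod_erase Finset.univ (fun j : Fin (N + 2) => hc m t (j : ℕ))
            (Finset.mem_univ _)]
          rw [Fin.prod_univ_eq_prod_range (fun k => hc m t k) (N + 2),
            Finset.prod_range_succ, Finset.prod_range_succ]
          ring
        rw [he1, he2]
        show Ee m t N * _ + Ee m t (N + 1) * _ = dD m t (N + 2)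
        rw [show dD m t (N + 2) = Ee m t (N + 1) * ∏ k ∈ Finset.range (N + 1), hc m t k
          + Ee m t N * (hc m t (N + 1) * ∏ k ∈ Finset.range N, hc m t k) from rfl]
        ring
  rw [← hsum]
  exact hder

end VolterraAux

lemma valg1 (h0 h1 h2 h3 : ℝ) (H0 : h0 ≠ 0) (H1 : h1 ≠ 0) (H2 : h2 ≠ 0) :
    h0 * h1 * h2 * h0 / (h0 * h1) ^ 2 *
      (h0 * h1 * h2 * h3 * (h0 * h1) / (h0 * h1 * h2) ^ 2 - h0 * h1 * 1 / h0 ^ 2) =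
    (((( h3 + h2 / h1 * (h2 + h1 / h0 * h1)) * (h0 * h1) +
        (h2 + h1 / h0 * h1) * (h2 * h0)) * h0 + h0 * h1 * h2 * h1) * (h0 * h1) ^ 2 -
      h0 * h1 * h2 * h0 * (2 * (h0 * h1) ^ 1 *
        ((h2 + h1 / h0 * h1) * h0 + h1 * (h1 * 1)))) / ((h0 * h1) ^ 2) ^ 2 := by
  field_simp
  ring

lemma valg (P a b c d e F G : ℝ) (hP : P ≠ 0) (ha : a ≠ 0) (hb : b ≠ 0)
    (hc' : c ≠ 0) (hd : d ≠ 0) :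
    P * a * b * c * d * (P * a * b) / (P * a * b * c) ^ 2 *
      (P * a * b * c * d * e * (P * a * b * c) / (P * a * b * c * d) ^ 2 -
        P * a * b * c * (P * a) / (P * a * b) ^ 2) =
    ((((e + d / c * (d + c / b * F)) * (P * a * b * c) +
        (d + c / b * (c + b / a * G)) * (d * (P * a * b))) * (P * a * b) +
      P * a * b * c * d * (F * (P * a) + G * (b * P))) * ((P * a * b * c) ^ 2) -
      P * a * b * c * d * (P * a * b) * (2 * (P * a * b * c) ^ 1 *
        ((d + c / b * (c + b / a * G)) * (P * a * b) + F * (c * (P * a))))) /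
      (((P * a * b * c) ^ 2) ^ 2) := by
  field_simp
  ring

open VolterraAux in
theorem stmt11 (m : ℕ) (hm : 2 ≤ m) (n : ℕ) (hn : 1 ≤ n) (t : ℝ) :
    HasDerivAt (fun s : ℝ => betaCoef m s n)
      (betaCoef m t n * (betaCoef m t (n + 1) - betaCoef m t (n - 1))) t := by
  obtain ⟨n₀, rfl⟩ : ∃ n₀, n = n₀ + 1 := ⟨n - 1, by omega⟩
  have hfun : (fun s : ℝ => betaCoef m s (n₀ + 1))
      = fun s : ℝ => hankelDet m s (n₀ + 2) * hankelDet m s n₀ /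
          (hankelDet m s (n₀ + 1)) ^ 2 := rfl
  rw [hfun]
  have h2 := hasDerivAt_hankelDet hm t (n₀ + 2)
  have h0 := hasDerivAt_hankelDet hm t n₀
  have h1 := hasDerivAt_hankelDet hm t (n₀ + 1)
  have hden : (hankelDet m t (n₀ + 1)) ^ 2 ≠ 0 :=
    pow_ne_zero _ (hankelDet_pos hm t _).ne'
  have hD := (h2.fun_mul h0).fun_div (h1.fun_pow 2) hden
  refine hD.congr_deriv (Eq.symm ?_)
  have hsimp : n₀ + 1 - 1 = n₀ := by omega
  rw [hsimp]
  have hb1 : betaCoef m t (n₀ + 1) = hankelDet m t (n₀ + 2) * hankelDet m t n₀ /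
      (hankelDet m t (n₀ + 1)) ^ 2 := rfl
  have hb2 : betaCoef m t (n₀ + 2) = hankelDet m t (n₀ + 3) * hankelDet m t (n₀ + 1) /
      (hankelDet m t (n₀ + 2)) ^ 2 := rfl
  rw [hb1, hb2]
  match n₀ with
  | 0 =>
      rw [show betaCoef m t 0 = 0 from rfl]
      rw [hankelDet_eq_prod hm t 0, hankelDet_eq_prod hm t 1, hankelDet_eq_prod hm t 2,
        hankelDet_eq_prod hm t 3]
      rw [show dD m t 2 = Ee m t 1 * ∏ k ∈ Finset.range 1, hc m t k
          + Ee m t 0 * (hc m t 1 * ∏ k ∈ Finset.range 0, hc m t k) from rfl,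
        show dD m t 1 = Ee m t 0 from rfl, show dD m t 0 = 0 from rfl]
      rw [Ee_one hm t, Ee_zero hm t]
      simp only [Finset.prod_range_succ, Finset.prod_range_zero]
      field_simp [hc_ne hm t 0, hc_ne hm t 1, hc_ne hm t 2]
      ring
  | 1 =>
      rw [show betaCoef m t 1 = hankelDet m t 2 * hankelDet m t 0 /
          (hankelDet m t 1) ^ 2 from rfl]
      rw [hankelDet_eq_prod hm t 0, hankelDet_eq_prod hm t 1, hankelDet_eq_prod hm t 2,
        hankelDet_eq_prod hm t 3, hankelDet_eq_prod hm t 4]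
      rw [show dD m t 3 = Ee m t 2 * ∏ k ∈ Finset.range 2, hc m t k
          + Ee m t 1 * (hc m t 2 * ∏ k ∈ Finset.range 1, hc m t k) from rfl,
        show dD m t 2 = Ee m t 1 * ∏ k ∈ Finset.range 1, hc m t k
          + Ee m t 0 * (hc m t 1 * ∏ k ∈ Finset.range 0, hc m t k) from rfl,
        show dD m t 1 = Ee m t 0 from rfl]
      rw [show (2 : ℕ) = 0 + 2 from rfl] 
      rw [Ee_rec hm t 0, Ee_one hm t, Ee_zero hm t]
      simp only [Finset.prod_range_succ, Finset.prod_range_zero]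
      rw [show (2 : ℕ) - 1 = 1 from rfl, show ((2 : ℕ) : ℝ) = (2 : ℝ) from by norm_num]
      linear_combination valg1 (hc m t 0) (hc m t 1) (hc m t 2) (hc m t 3)
        (hc_ne hm t 0) (hc_ne hm t 1) (hc_ne hm t 2)
  | (N + 2) =>
      rw [show betaCoef m t (N + 2) = hankelDet m t (N + 3) * hankelDet m t (N + 1) /
          (hankelDet m t (N + 2)) ^ 2 from rfl]
      rw [hankelDet_eq_prod hm t (N + 1), hankelDet_eq_prod hm t (N + 2),
        hankelDet_eq_prod hm t (N + 3), hankelDet_eq_prod hm t (N + 4),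
        hankelDet_eq_prod hm t (N + 5)]
      rw [show dD m t (N + 4) = Ee m t (N + 3) * ∏ k ∈ Finset.range (N + 3), hc m t k
          + Ee m t (N + 2) * (hc m t (N + 3) * ∏ k ∈ Finset.range (N + 2), hc m t k)
          from rfl,
        show dD m t (N + 3) = Ee m t (N + 2) * ∏ k ∈ Finset.range (N + 2), hc m t k
          + Ee m t (N + 1) * (hc m t (N + 2) * ∏ k ∈ Finset.range (N + 1), hc m t k)
          from rfl,
        show dD m t (N + 2) = Ee m t (N + 1) * ∏ k ∈ Finset.range (N + 1), hc m t k
          + Ee m t N * (hc m t (N + 1) * ∏ k ∈ Finset.range N, hc m t k) from rfl]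
      rw [show N + 3 = (N + 1) + 2 from rfl, Ee_rec hm t (N + 1),
        show N + 2 = N + 2 from rfl, Ee_rec hm t N]
      simp only [Finset.prod_range_succ]
      rw [show (2 : ℕ) - 1 = 1 from rfl, show ((2 : ℕ) : ℝ) = (2 : ℝ) from by norm_num]
      have hprodne : (∏ k ∈ Finset.range N, hc m t k) ≠ 0 :=
        (Finset.prod_pos (fun k _ => hc_pos hm t k)).ne'
      linear_combination valg (∏ k ∈ Finset.range N, hc m t k) (hc m t N)
        (hc m t (N + 1)) (hc m t (N + 2)) (hc m t (N + 3)) (hc m t (N + 4))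
        (Ee m t (N + 1)) (Ee m t N) hprodne (hc_ne hm t N) (hc_ne hm t (N + 1))
        (hc_ne hm t (N + 2)) (hc_ne hm t (N + 3))
end

section
/- Let m ≥ 2 be an integer and consider the Freud weight w(x;t) = exp(−x^{2m} + t x²). For every n ≥ 0, the function t ↦ ln h_n(t) has derivative β_n(t) + β_{n+1}(t) at every t ∈ ℝ; equivalently, the derivative of t ↦ h_n(t) at t equals (β_n(t) + β_{n+1}(t)) h_n(t). -/
open MeasureTheory Real Filter Asymptotics Topology Polynomial

/-- `h_n(t) = D_{n+1}(t) / D_n(t)`. -/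
noncomputable def hQuantity (m : ℕ) (t : ℝ) (n : ℕ) : ℝ :=
  hankelDet m t (n + 1) / hankelDet m t n


lemma freud_bound_aux (m j : ℕ) (hm : 2 ≤ m) (c x : ℝ)
    (hx : 1 + (j : ℝ) + |c| ≤ |x|) :
    |x ^ j * exp (-x ^ (2 * m) + c * x ^ 2)| ≤ exp (-|x|) := by
  set y := |x| with hy
  have hy0 : (0:ℝ) ≤ y := abs_nonneg x
  have hy1 : (1:ℝ) ≤ y := by
    have h0 : (0:ℝ) ≤ (j:ℝ) := Nat.cast_nonneg j
    have := abs_nonneg c; linarith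
  have hxpow : x ^ (2 * m) = y ^ (2 * m) := by
    rw [hy, ← abs_pow, abs_of_nonneg (Even.pow_nonneg (even_two_mul m) x)]
  have hxsq : x ^ 2 = y ^ 2 := by rw [hy, sq_abs]
  have h1 : |x ^ j * exp (-x ^ (2 * m) + c * x ^ 2)|
      = y ^ j * exp (-y ^ (2 * m) + c * y ^ 2) := by
    rw [abs_mul, abs_pow, abs_of_pos (exp_pos _), hxpow, hxsq]
  rw [h1]
  have h2 : y ^ j ≤ exp ((j : ℝ) * y) := by
    calc y ^ j ≤ (exp y) ^ j := pow_le_pow_left₀ hy0 (le_trans (by linarith) (add_one_le_exp y)) j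
    _ = exp ((j : ℝ) * y) := by rw [← Real.exp_nat_mul]
  calc y ^ j * exp (-y ^ (2 * m) + c * y ^ 2)
      ≤ exp ((j : ℝ) * y) * exp (-y ^ (2 * m) + c * y ^ 2) := by
        apply mul_le_mul_of_nonneg_right h2 (le_of_lt (exp_pos _))
    _ = exp ((j : ℝ) * y + (-y ^ (2 * m) + c * y ^ 2)) := by rw [← Real.exp_add]
    _ ≤ exp (-y) := by
        apply exp_le_exp.mpr
        have hcy : c * y ^ 2 ≤ |c| * y ^ 2 := by
          apply mul_le_mul_of_nonneg_right (le_abs_self c) (by positivity)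
        have hjy : (j : ℝ) * y ≤ (j : ℝ) * y ^ 2 := by
          apply mul_le_mul_of_nonneg_left _ (Nat.cast_nonneg j)
          nlinarith
        have hyy : y ≤ y ^ 2 := by nlinarith
        have h3 : ((j : ℝ) + |c| + 1) * y ^ 2 ≤ y ^ 3 := by
          have : (j : ℝ) + |c| + 1 ≤ y := by linarith
          calc ((j : ℝ) + |c| + 1) * y ^ 2 ≤ y * y ^ 2 := by
                apply mul_le_mul_of_nonneg_right this (by positivity)
            _ = y ^ 3 := by ring
        have h4 : y ^ 3 ≤ y ^ (2 * m) := pow_le_pow_right₀ hy1 (by omega)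
        nlinarith
lemma freud_tendsto (m j : ℕ) (hm : 2 ≤ m) (c : ℝ) :
    Tendsto (fun x : ℝ => x ^ j * exp (-x ^ (2 * m) + c * x ^ 2)) (cocompact ℝ) (𝓝 0) := by
  rw [cocompact_eq_atBot_atTop, Filter.tendsto_sup]
  constructor
  · apply tendsto_zero_iff_norm_tendsto_zero.mpr
    apply squeeze_zero' (Eventually.of_forall fun x => norm_nonneg _)
      ?_ (tendsto_exp_atBot.comp tendsto_id)
    filter_upwards [eventually_le_atBot (-(1 + (j:ℝ) + |c|))] with x hx
    have h0 : (0:ℝ) ≤ (j:ℝ) := Nat.cast_nonneg j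
    have hc := abs_nonneg c
    have habs : 1 + (j:ℝ) + |c| ≤ |x| := by
      rw [abs_of_nonpos (show x ≤ 0 by linarith)]; linarith
    have hb := freud_bound_aux m j hm c x habs
    have : exp (-|x|) = (exp ∘ id) x := by
      simp [abs_of_nonpos (show x ≤ 0 by linarith)]
    rw [Real.norm_eq_abs]
    calc |x ^ j * exp (-x ^ (2 * m) + c * x ^ 2)| ≤ exp (-|x|) := hb
      _ = (exp ∘ id) x := this
  · apply tendsto_zero_iff_norm_tendsto_zero.mpr
    apply squeeze_zero' (Eventually.of_forall fun x => norm_nonneg _)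
      ?_ (tendsto_exp_atBot.comp tendsto_neg_atTop_atBot)
    filter_upwards [eventually_ge_atTop (1 + (j:ℝ) + |c|)] with x hx
    have h0 : (0:ℝ) ≤ (j:ℝ) := Nat.cast_nonneg j
    have hc := abs_nonneg c
    have hx0 : (0:ℝ) ≤ x := by linarith
    have habs : 1 + (j:ℝ) + |c| ≤ |x| := by rwa [abs_of_nonneg hx0]
    have hb := freud_bound_aux m j hm c x habs
    rw [Real.norm_eq_abs]
    calc |x ^ j * exp (-x ^ (2 * m) + c * x ^ 2)| ≤ exp (-|x|) := hb
      _ = (exp ∘ Neg.neg) x := by rw [abs_of_nonneg hx0]; rfl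

lemma freud_integrable (m j : ℕ) (hm : 2 ≤ m) (t : ℝ) :
    Integrable (fun x : ℝ => x ^ j * exp (-x ^ (2 * m) + t * x ^ 2)) := by
  have hcont : Continuous (fun x : ℝ => x ^ j * exp (-x ^ (2 * m) + t * x ^ 2)) := by
    continuity
  apply hcont.locallyIntegrable.integrable_of_isBigO_cocompact
    (g := fun x : ℝ => exp (-(1:ℝ) * x ^ 2))
  · apply IsLittleO.isBigO
    apply isLittleO_of_tendsto (fun x h => absurd h (ne_of_gt (exp_pos _)))
    have : (fun x : ℝ => x ^ j * exp (-x ^ (2 * m) + t * x ^ 2) / exp (-(1:ℝ) * x ^ 2))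
        = fun x : ℝ => x ^ j * exp (-x ^ (2 * m) + (t + 1) * x ^ 2) := by
      funext x
      rw [mul_div_assoc, ← Real.exp_sub]
      congr 1
      ring
    rw [this]
    exact freud_tendsto m j hm (t + 1)
  · exact ((integrable_exp_neg_mul_sq one_pos).congr (by
      refine Eventually.of_forall fun x => ?_
      norm_num)).integrableAtFilter _

lemma freud_integrable_abs (m j : ℕ) (hm : 2 ≤ m) (t : ℝ) :
    Integrable (fun x : ℝ => |x| ^ j * exp (-x ^ (2 * m) + t * x ^ 2)) := by
  have := (freud_integrable m j hm t).abs
  apply this.congr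
  refine Eventually.of_forall fun x => ?_
  simp [abs_mul, abs_pow, abs_of_pos (exp_pos _)]

lemma freud_hasDerivAt (m j : ℕ) (hm : 2 ≤ m) (t : ℝ) :
    HasDerivAt (fun s : ℝ => freudMoment m s j) (freudMoment m t (j + 2)) t := by
  have key := hasDerivAt_integral_of_dominated_loc_of_deriv_le (μ := (volume : Measure ℝ))
    (F := fun s x => x ^ j * exp (-x ^ (2 * m) + s * x ^ 2))
    (F' := fun s x => x ^ (j + 2) * exp (-x ^ (2 * m) + s * x ^ 2))
    (bound := fun x => |x| ^ (j + 2) * exp (-x ^ (2 * m) + (|t| + 1) * x ^ 2))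
    (x₀ := t) (s := Metric.ball t 1) (Metric.ball_mem_nhds t one_pos) ?_ ?_ ?_ ?_ ?_ ?_
  · exact key.2
  · refine Eventually.of_forall fun s => ?_
    exact (Continuous.aestronglyMeasurable (by continuity))
  · exact freud_integrable m j hm t
  · exact (Continuous.aestronglyMeasurable (by continuity))
  · refine Eventually.of_forall fun x => fun s hs => ?_
    have hs' : s ≤ |t| + 1 := by
      rw [Metric.mem_ball, Real.dist_eq] at hs
      have h1 := (abs_lt.mp hs).2
      have h2 := le_abs_self t
      linarith
    have : ‖x ^ (j + 2) * exp (-x ^ (2 * m) + s * x ^ 2)‖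
        = |x| ^ (j + 2) * exp (-x ^ (2 * m) + s * x ^ 2) := by
      rw [Real.norm_eq_abs, abs_mul, abs_pow, abs_of_pos (exp_pos _)]
    rw [this]
    apply mul_le_mul_of_nonneg_left _ (by positivity)
    apply exp_le_exp.mpr
    have : s * x ^ 2 ≤ (|t| + 1) * x ^ 2 := mul_le_mul_of_nonneg_right hs' (sq_nonneg x)
    linarith
  · exact freud_integrable_abs m (j + 2) hm (|t| + 1)
  · refine Eventually.of_forall fun x => fun s _ => ?_
    have h1 : HasDerivAt (fun s : ℝ => -x ^ (2 * m) + s * x ^ 2) (x ^ 2) s := by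
      simpa using ((hasDerivAt_id s).mul_const (x ^ 2)).const_add (-x ^ (2 * m))
    have h2 := (h1.exp).const_mul (x ^ j)
    convert h2 using 1
    · rfl
    simp only [pow_add]
    ring

noncomputable def Lw (m : ℕ) (t : ℝ) (p : Polynomial ℝ) : ℝ :=
  ∫ x : ℝ, p.eval x * Real.exp (-x ^ (2 * m) + t * x ^ 2)

lemma Lw_integrable (m : ℕ) (hm : 2 ≤ m) (t : ℝ) (p : Polynomial ℝ) :
    Integrable (fun x : ℝ => p.eval x * Real.exp (-x ^ (2 * m) + t * x ^ 2)) := by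
  have heq : (fun x : ℝ => p.eval x * Real.exp (-x ^ (2 * m) + t * x ^ 2))
      = fun x => ∑ i ∈ Finset.range (p.natDegree + 1),
          p.coeff i * (x ^ i * Real.exp (-x ^ (2 * m) + t * x ^ 2)) := by
    funext x
    rw [Polynomial.eval_eq_sum_range, Finset.sum_mul]
    exact Finset.sum_congr rfl fun i _ => by ring
  rw [heq]
  exact integrable_finset_sum _ fun i _ => (freud_integrable m i hm t).const_mul _

lemma Lw_add (m : ℕ) (hm : 2 ≤ m) (t : ℝ) (p q : Polynomial ℝ) :
    Lw m t (p + q) = Lw m t p + Lw m t q := by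
  unfold Lw
  rw [← integral_add (Lw_integrable m hm t p) (Lw_integrable m hm t q)]
  congr 1; funext x; rw [Polynomial.eval_add]; ring

lemma Lw_C_mul (m : ℕ) (t : ℝ) (a : ℝ) (p : Polynomial ℝ) :
    Lw m t (Polynomial.C a * p) = a * Lw m t p := by
  unfold Lw
  rw [← integral_const_mul]
  congr 1; funext x; rw [Polynomial.eval_mul, Polynomial.eval_C]; ring

lemma Lw_zero (m : ℕ) (t : ℝ) : Lw m t 0 = 0 := by simp [Lw]

lemma Lw_sum (m : ℕ) (hm : 2 ≤ m) (t : ℝ) {ι : Type*} [DecidableEq ι] (s : Finset ι) (f : ι → Polynomial ℝ) :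
    Lw m t (∑ i ∈ s, f i) = ∑ i ∈ s, Lw m t (f i) := by
  induction s using Finset.induction_on with
  | empty => simp [Lw_zero]
  | insert a s' hni ih =>
                     rw [Finset.sum_insert hni, Finset.sum_insert hni, Lw_add m hm, ih]

lemma Lw_monomial (m : ℕ) (t : ℝ) (a : ℝ) (k : ℕ) :
    Lw m t (Polynomial.C a * Polynomial.X ^ k) = a * freudMoment m t k := by
  rw [Lw_C_mul]
  congr 1
  unfold Lw freudMoment
  congr 1; funext x; rw [Polynomial.eval_pow, Polynomial.eval_X]

lemma Lw_comp_neg (m : ℕ) (t : ℝ) (p : Polynomial ℝ) :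
    Lw m t (p.comp (-Polynomial.X)) = Lw m t p := by
  unfold Lw
  rw [← integral_neg_eq_self (fun x : ℝ => p.eval x * Real.exp (-x ^ (2 * m) + t * x ^ 2)) volume]
  congr 1; funext x
  rw [Polynomial.eval_comp]
  simp only [Polynomial.eval_neg, Polynomial.eval_X]
  rw [Even.neg_pow (even_two_mul m), neg_sq]

lemma Lw_pos (m : ℕ) (hm : 2 ≤ m) (t : ℝ) {p : Polynomial ℝ} (hp : p ≠ 0) :
    0 < Lw m t (p * p) := by
  set f := fun x : ℝ => (p * p).eval x * Real.exp (-x ^ (2 * m) + t * x ^ 2) with hf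
  have hint : Integrable f := Lw_integrable m hm t (p * p)
  have hnn : ∀ x, 0 ≤ f x := by
    intro x
    rw [hf]
    simp only [Polynomial.eval_mul]
    exact mul_nonneg (mul_self_nonneg _) (le_of_lt (exp_pos _))
  have h0 : 0 ≤ Lw m t (p * p) := integral_nonneg hnn
  rcases h0.lt_or_eq with h | h
  · exact h
  · exfalso
    have hz : ∫ x, f x = 0 := h.symm
    rw [integral_eq_zero_iff_of_nonneg hnn hint] at hz
    have h1 : volume {x : ℝ | ¬ (f x = 0)} = 0 := by
      have hz' : ∀ᵐ x, f x = 0 := hz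
      exact ae_iff.mp hz'
    have h2 : {x : ℝ | p.eval x ≠ 0} ⊆ {x : ℝ | ¬ (f x = 0)} := by
      intro x hx
      simp only [Set.mem_setOf_eq, hf, Polynomial.eval_mul]
      exact mul_ne_zero (mul_ne_zero hx hx) (ne_of_gt (exp_pos _))
    have h3 : volume {x : ℝ | p.eval x ≠ 0} = 0 := measure_mono_null h2 h1
    have h4 : volume {x : ℝ | p.eval x = 0} = 0 :=
      Set.Finite.measure_zero (Polynomial.finite_setOf_isRoot hp) volume
    have h5 : volume (Set.univ : Set ℝ) = 0 := by
      apply measure_mono_null (t := {x : ℝ | p.eval x ≠ 0} ∪ {x : ℝ | p.eval x = 0})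
      · intro x _
        by_cases hc : p.eval x = 0
        · exact Or.inr hc
        · exact Or.inl hc
      · exact measure_union_null h3 h4
    rw [Real.volume_univ] at h5
    exact ENNReal.top_ne_zero h5

noncomputable def Hmat (m : ℕ) (t : ℝ) (n : ℕ) : Matrix (Fin n) (Fin n) ℝ :=
  Matrix.of fun j k => freudMoment m t ((j : ℕ) + (k : ℕ))

lemma hankelDet_eq (m : ℕ) (t : ℝ) (n : ℕ) : hankelDet m t n = (Hmat m t n).det := rfl

noncomputable def cmin (m : ℕ) (t : ℝ) (n : ℕ) (k : Fin (n + 1)) : ℝ :=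
  ((Hmat m t (n + 1)).submatrix (Fin.last n).succAbove k.succAbove).det

lemma laplace_last (m : ℕ) (t : ℝ) (n : ℕ) (v : Fin (n + 1) → ℝ) :
    ((Hmat m t (n + 1)).updateRow (Fin.last n) v).det
      = ∑ k : Fin (n + 1), (-1) ^ (n + (k : ℕ)) * v k * cmin m t n k := by
  rw [Matrix.det_succ_row _ (Fin.last n)]
  apply Finset.sum_congr rfl
  intro k _
  have h1 : ((Hmat m t (n + 1)).updateRow (Fin.last n) v) (Fin.last n) k = v k :=
    congrFun (Matrix.updateRow_self) k
  have h2 : ((Hmat m t (n + 1)).updateRow (Fin.last n) v).submatrix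
      (Fin.last n).succAbove k.succAbove
      = (Hmat m t (n + 1)).submatrix (Fin.last n).succAbove k.succAbove := by
    ext i l
    rw [Matrix.submatrix_apply, Matrix.submatrix_apply,
      Matrix.updateRow_ne (Fin.succAbove_ne _ i)]
  rw [h1, h2, Fin.val_last]
  rfl

/-- the determinant with last row replaced by moments shifted by `l` -/
noncomputable def Bdet (m : ℕ) (t : ℝ) (n : ℕ) (l : ℕ) : ℝ :=
  ((Hmat m t (n + 1)).updateRow (Fin.last n)
    (fun k => freudMoment m t (l + (k : ℕ)))).det

lemma Bdet_lt (m : ℕ) (t : ℝ) (n l : ℕ) (hl : l < n) : Bdet m t n l = 0 := by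
  apply Matrix.det_zero_of_row_eq (i := (⟨l, by omega⟩ : Fin (n + 1))) (j := Fin.last n)
  · intro h
    have := congrArg Fin.val h
    simp [Fin.val_last] at this
    omega
  · funext k
    rw [Matrix.updateRow_ne, Matrix.updateRow_self]
    · rfl
    · intro h
      have := congrArg Fin.val h
      simp [Fin.val_last] at this
      omega

lemma Bdet_self (m : ℕ) (t : ℝ) (n : ℕ) : Bdet m t n n = hankelDet m t (n + 1) := by
  unfold Bdet
  have : (fun k : Fin (n + 1) => freudMoment m t (n + (k : ℕ)))
      = Hmat m t (n + 1) (Fin.last n) := by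
    funext k
    simp [Hmat, Fin.val_last]
  rw [this, Matrix.updateRow_eq_self, hankelDet_eq]

noncomputable def Qpoly (m : ℕ) (t : ℝ) (n : ℕ) : Polynomial ℝ :=
  ∑ k : Fin (n + 1),
    Polynomial.C ((-1) ^ (n + (k : ℕ)) * cmin m t n k) * Polynomial.X ^ (k : ℕ)

lemma Lw_X_pow_mul_Qpoly (m : ℕ) (hm : 2 ≤ m) (t : ℝ) (n l : ℕ) :
    Lw m t (Polynomial.X ^ l * Qpoly m t n) = Bdet m t n l := by
  rw [Qpoly, Finset.mul_sum, Lw_sum m hm, Bdet, laplace_last]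
  apply Finset.sum_congr rfl
  intro k _
  have h1 : (Polynomial.X : Polynomial ℝ) ^ l
        * (Polynomial.C ((-1) ^ (n + (k : ℕ)) * cmin m t n k) * Polynomial.X ^ (k : ℕ))
      = Polynomial.C ((-1) ^ (n + (k : ℕ)) * cmin m t n k) * Polynomial.X ^ (l + (k : ℕ)) := by
    rw [pow_add]; ring
  rw [h1, Lw_monomial]
  ring

lemma cmin_last (m : ℕ) (t : ℝ) (n : ℕ) : cmin m t n (Fin.last n) = hankelDet m t n := by
  unfold cmin
  rw [hankelDet_eq]
  congr 1
  ext j k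
  simp [Matrix.submatrix_apply, Hmat, Fin.succAbove_last, Fin.coe_castSucc]

lemma Qpoly_coeff_self (m : ℕ) (t : ℝ) (n : ℕ) :
    (Qpoly m t n).coeff n = hankelDet m t n := by
  rw [Qpoly, Polynomial.finset_sum_coeff]
  have h1 : ∀ k : Fin (n + 1),
      (Polynomial.C ((-1) ^ (n + (k : ℕ)) * cmin m t n k) * Polynomial.X ^ (k : ℕ)).coeff n
        = if k = Fin.last n then cmin m t n (Fin.last n) else 0 := by
    intro k
    rw [Polynomial.coeff_C_mul, Polynomial.coeff_X_pow]
    by_cases hk : k = Fin.last n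
    · subst hk
      simp [Fin.val_last, Even.neg_one_pow (⟨n, by ring⟩ : Even (n + n))]
    · have : ¬ (n = (k : ℕ)) := by
        intro h
        exact hk (Fin.ext (by simp [Fin.val_last, ← h]))
      simp [this, hk]
  rw [Finset.sum_congr rfl (fun k _ => h1 k), Finset.sum_ite_eq' Finset.univ (Fin.last n)]
  simp [cmin_last]

lemma Qpoly_natDegree_le (m : ℕ) (t : ℝ) (n : ℕ) : (Qpoly m t n).natDegree ≤ n := by
  apply Polynomial.natDegree_sum_le_of_forall_le
  intro k _
  apply le_trans (Polynomial.natDegree_C_mul_le _ _)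
  rw [Polynomial.natDegree_X_pow]
  exact Fin.is_le k

lemma Qpoly_coeff_eq_zero (m : ℕ) (t : ℝ) {n l : ℕ} (hl : n < l) :
    (Qpoly m t n).coeff l = 0 :=
  Polynomial.coeff_eq_zero_of_natDegree_lt (lt_of_le_of_lt (Qpoly_natDegree_le m t n) hl)

/-- Master pairing lemma. -/
lemma Lw_mul_Qpoly (m : ℕ) (hm : 2 ≤ m) (t : ℝ) (k : ℕ) (p : Polynomial ℝ)
    (h : ∀ l, k < l → p.coeff l = 0) :
    Lw m t (p * Qpoly m t k) = p.coeff k * hankelDet m t (k + 1) := by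
  conv_lhs => rw [p.as_sum_range_C_mul_X_pow, Finset.sum_mul]
  rw [Lw_sum m hm]
  have h1 : ∀ i ∈ Finset.range (p.natDegree + 1),
      Lw m t (Polynomial.C (p.coeff i) * Polynomial.X ^ i * Qpoly m t k)
        = if i = k then p.coeff i * hankelDet m t (k + 1) else 0 := by
    intro i _
    rw [mul_assoc, Lw_C_mul, Lw_X_pow_mul_Qpoly m hm]
    rcases lt_trichotomy i k with hik | hik | hik
    · rw [Bdet_lt m t k i hik, if_neg (Nat.ne_of_lt hik)]
      ring
    · subst hik
      rw [Bdet_self, if_pos rfl]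
    · rw [h i hik, if_neg (Nat.ne_of_gt hik)]
      ring
  rw [Finset.sum_congr rfl h1, Finset.sum_ite_eq' (Finset.range (p.natDegree + 1)) k]
  by_cases hk : k ∈ Finset.range (p.natDegree + 1)
  · rw [if_pos hk]
  · rw [if_neg hk]
    have : p.natDegree < k := by
      simp [Finset.mem_range] at hk
      omega
    rw [Polynomial.coeff_eq_zero_of_natDegree_lt this]
    ring

lemma hankelDet_zero (m : ℕ) (t : ℝ) : hankelDet m t 0 = 1 := by
  rw [hankelDet_eq]
  exact Matrix.det_fin_zero

-- actual content
lemma Lw_sub (m : ℕ) (hm : 2 ≤ m) (t : ℝ) (p q : Polynomial ℝ) :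
    Lw m t (p - q) = Lw m t p - Lw m t q := by
  have h1 : p - q = p + Polynomial.C (-1 : ℝ) * q := by
    rw [Polynomial.C_neg, Polynomial.C_1]; ring
  rw [h1, Lw_add m hm, Lw_C_mul]; ring

lemma Lw_neg (m : ℕ) (t : ℝ) (p : Polynomial ℝ) : Lw m t (-p) = - Lw m t p := by
  have h1 : -p = Polynomial.C (-1 : ℝ) * p := by rw [Polynomial.C_neg, Polynomial.C_1]; ring
  rw [h1, Lw_C_mul]; ring

lemma hankelDet_pos (m : ℕ) (hm : 2 ≤ m) (t : ℝ) : ∀ n, 0 < hankelDet m t n := by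
  intro n
  induction n with
  | zero => rw [hankelDet_zero]; norm_num
  | succ n ih =>
    have hQ : Qpoly m t n ≠ 0 := by
      intro h
      have h2 := Qpoly_coeff_self m t n
      rw [h] at h2
      simp at h2
      rw [← h2] at ih
      exact lt_irrefl 0 ih
    have hpos := Lw_pos m hm t hQ
    have heq : Lw m t (Qpoly m t n * Qpoly m t n) = hankelDet m t n * hankelDet m t (n + 1) := by
      rw [Lw_mul_Qpoly m hm t n _ (fun l hl => Qpoly_coeff_eq_zero m t hl), Qpoly_coeff_self]
    rw [heq] at hpos
    nlinarith

lemma C_neg_one_pow_sq (l : ℕ) :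
    (Polynomial.C ((-1 : ℝ) ^ l)) * (Polynomial.C ((-1 : ℝ) ^ l)) = 1 := by
  rw [← Polynomial.C_mul, ← pow_add, Even.neg_one_pow ⟨l, by ring⟩, Polynomial.C_1]

lemma Lw_X_pow_mul_Qpoly_ite (m : ℕ) (hm : 2 ≤ m) (t : ℝ) (n l : ℕ) (hl : l ≤ n) :
    Lw m t (Polynomial.X ^ l * Qpoly m t n)
      = if l = n then hankelDet m t (n + 1) else 0 := by
  rw [Lw_mul_Qpoly m hm t n _ (fun l' hl' => by
    rw [Polynomial.coeff_X_pow]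
    have : ¬ (l' = l) := by omega
    simp [this])]
  rw [Polynomial.coeff_X_pow]
  by_cases h : l = n
  · simp [h]
  · have h2 : ¬ (n = l) := fun hh => h hh.symm
    simp [h, h2]

lemma Qpoly_comp_neg (m : ℕ) (hm : 2 ≤ m) (t : ℝ) (n : ℕ) :
    (Qpoly m t n).comp (-Polynomial.X)
      = Polynomial.C ((-1 : ℝ) ^ n) * Qpoly m t n := by
  set Q := Qpoly m t n with hQdef
  set S : Polynomial ℝ :=
    Polynomial.C ((-1 : ℝ) ^ n) * Q.comp (-Polynomial.X) - Q with hS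
  have hcomp : ∀ l : ℕ, Lw m t (Polynomial.X ^ l * Q.comp (-Polynomial.X))
      = (-1 : ℝ) ^ l * Lw m t (Polynomial.X ^ l * Q) := by
    intro l
    have h2 : ((-1 : Polynomial ℝ) ^ l) = Polynomial.C ((-1 : ℝ) ^ l) := by
      rw [map_pow, Polynomial.C_neg, Polynomial.C_1]
    have h1 : (Polynomial.C ((-1 : ℝ) ^ l) * (Polynomial.X ^ l * Q)).comp (-Polynomial.X)
        = Polynomial.X ^ l * Q.comp (-Polynomial.X) := by
      rw [Polynomial.mul_comp, Polynomial.C_comp, Polynomial.mul_comp, Polynomial.pow_comp,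
        Polynomial.X_comp, neg_pow (Polynomial.X : Polynomial ℝ) l, h2, ← mul_assoc, ← mul_assoc, C_neg_one_pow_sq, one_mul]
    calc Lw m t (Polynomial.X ^ l * Q.comp (-Polynomial.X))
        = Lw m t ((Polynomial.C ((-1 : ℝ) ^ l) * (Polynomial.X ^ l * Q)).comp (-Polynomial.X)) := by
          rw [h1]
      _ = Lw m t (Polynomial.C ((-1 : ℝ) ^ l) * (Polynomial.X ^ l * Q)) := Lw_comp_neg m t _
      _ = (-1 : ℝ) ^ l * Lw m t (Polynomial.X ^ l * Q) := Lw_C_mul m t _ _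
  have hSl : ∀ l : ℕ, l ≤ n → Lw m t (Polynomial.X ^ l * S) = 0 := by
    intro l hl
    have h3 : Polynomial.X ^ l * S
        = Polynomial.C ((-1 : ℝ) ^ n) * (Polynomial.X ^ l * Q.comp (-Polynomial.X))
          - Polynomial.X ^ l * Q := by
      rw [hS]; ring
    rw [h3, Lw_sub m hm, Lw_C_mul, hcomp l, Lw_X_pow_mul_Qpoly_ite m hm t n l hl]
    by_cases h : l = n
    · subst h
      rw [if_pos rfl, ← mul_assoc, ← pow_add, Even.neg_one_pow ⟨l, by ring⟩, one_mul, sub_self]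
    · rw [if_neg h]; ring
  have hdegS : S.natDegree ≤ n := by
    apply le_trans (Polynomial.natDegree_sub_le _ _)
    apply max_le
    · apply le_trans (Polynomial.natDegree_C_mul_le _ _)
      calc (Q.comp (-Polynomial.X)).natDegree
          ≤ Q.natDegree * (-Polynomial.X : Polynomial ℝ).natDegree :=
            Polynomial.natDegree_comp_le
        _ ≤ n * 1 := by
            apply Nat.mul_le_mul (Qpoly_natDegree_le m t n)
            rw [Polynomial.natDegree_neg, Polynomial.natDegree_X]
        _ = n := mul_one n
    · exact Qpoly_natDegree_le m t n
  have hSS : Lw m t (S * S) = 0 := by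
    have hsum : (∑ i ∈ Finset.range (S.natDegree + 1),
        Polynomial.C (S.coeff i) * Polynomial.X ^ i) = S :=
      (S.as_sum_range_C_mul_X_pow).symm
    have hrep : S * S = ∑ i ∈ Finset.range (S.natDegree + 1),
        Polynomial.C (S.coeff i) * Polynomial.X ^ i * S := by
      rw [← Finset.sum_mul, hsum]
    rw [hrep, Lw_sum m hm]
    apply Finset.sum_eq_zero
    intro i hi
    rw [mul_assoc, Lw_C_mul, hSl i (by
      have := Finset.mem_range.mp hi
      omega), mul_zero]
  have hS0 : S = 0 := by
    by_contra h
    have := Lw_pos m hm t h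
    rw [hSS] at this
    exact lt_irrefl 0 this
  rw [hS] at hS0
  have h4 : Polynomial.C ((-1 : ℝ) ^ n) * Q.comp (-Polynomial.X) = Q := sub_eq_zero.mp hS0
  calc Q.comp (-Polynomial.X)
      = Polynomial.C ((-1 : ℝ) ^ n)
        * (Polynomial.C ((-1 : ℝ) ^ n) * Q.comp (-Polynomial.X)) := by
        rw [← mul_assoc, C_neg_one_pow_sq, one_mul]
    _ = Polynomial.C ((-1 : ℝ) ^ n) * Q := by rw [h4]

lemma Lw_X_mul_Q_sq (m : ℕ) (hm : 2 ≤ m) (t : ℝ) (n : ℕ) :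
    Lw m t (Polynomial.X * Qpoly m t n * Qpoly m t n) = 0 := by
  set Q := Qpoly m t n with hQdef
  set g := Polynomial.X * Q * Q with hg
  have h1 : g.comp (-Polynomial.X) = -g := by
    rw [hg, Polynomial.mul_comp, Polynomial.mul_comp, Polynomial.X_comp,
      Qpoly_comp_neg m hm t n]
    have hsq := C_neg_one_pow_sq (l := n)
    linear_combination (-(Polynomial.X * Q * Q)) * hsq
  have h2 := Lw_comp_neg m t g
  rw [h1, Lw_neg] at h2
  have : Lw m t g = 0 := by linarith
  exact this

lemma Lw_Q_sq (m : ℕ) (hm : 2 ≤ m) (t : ℝ) (n : ℕ) :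
    Lw m t (Qpoly m t n * Qpoly m t n) = hankelDet m t n * hankelDet m t (n + 1) := by
  rw [Lw_mul_Qpoly m hm t n _ (fun l hl => Qpoly_coeff_eq_zero m t hl), Qpoly_coeff_self]

noncomputable def Ppoly (m : ℕ) (t : ℝ) (n : ℕ) : Polynomial ℝ :=
  Polynomial.C (hankelDet m t (n + 1)) * (Polynomial.X * Qpoly m t n)
    - Polynomial.C (hankelDet m t n) * Qpoly m t (n + 1)

lemma Ppoly_coeff_high (m : ℕ) (t : ℝ) (n : ℕ) :
    ∀ l, n < l → (Ppoly m t n).coeff l = 0 := by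
  intro l hl
  obtain ⟨k, rfl⟩ : ∃ k, l = k + 1 := ⟨l - 1, by omega⟩
  unfold Ppoly
  rw [Polynomial.coeff_sub, Polynomial.coeff_C_mul, Polynomial.coeff_C_mul,
    Polynomial.coeff_X_mul]
  rcases Nat.lt_or_ge n k with h | h
  · rw [Qpoly_coeff_eq_zero m t h, Qpoly_coeff_eq_zero m t (show n + 1 < k + 1 by omega)]
    ring
  · have hk : k = n := by omega
    subst hk
    rw [Qpoly_coeff_self, Qpoly_coeff_self]
    ring

lemma Lw_Ppoly_mul_Qsucc (m : ℕ) (hm : 2 ≤ m) (t : ℝ) (n : ℕ) :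
    Lw m t (Ppoly m t n * Qpoly m t (n + 1)) = 0 := by
  rw [Lw_mul_Qpoly m hm t (n + 1) _ (fun l hl => Ppoly_coeff_high m t n l (by omega)),
    Ppoly_coeff_high m t n (n + 1) (by omega)]
  ring

lemma Lw_Ppoly_mul_Q (m : ℕ) (hm : 2 ≤ m) (t : ℝ) (n : ℕ) :
    Lw m t (Ppoly m t n * Qpoly m t n) = 0 := by
  have h1 : Ppoly m t n * Qpoly m t n
      = Polynomial.C (hankelDet m t (n + 1))
          * (Polynomial.X * Qpoly m t n * Qpoly m t n)
        - Polynomial.C (hankelDet m t n) * (Qpoly m t n * Qpoly m t (n + 1)) := by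
    unfold Ppoly; ring
  rw [h1, Lw_sub m hm, Lw_C_mul, Lw_C_mul, Lw_X_mul_Q_sq m hm t n,
    Lw_mul_Qpoly m hm t (n + 1) _ (fun l hl => Qpoly_coeff_eq_zero m t (by omega)),
    Qpoly_coeff_eq_zero m t (show n < n + 1 by omega)]
  ring

lemma Ppoly_coeff_self (m : ℕ) (hm : 2 ≤ m) (t : ℝ) (n : ℕ) :
    (Ppoly m t n).coeff n = 0 := by
  have h1 := Lw_Ppoly_mul_Q m hm t n
  rw [Lw_mul_Qpoly m hm t n _ (Ppoly_coeff_high m t n)] at h1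
  rcases mul_eq_zero.mp h1 with h | h
  · exact h
  · exact absurd h (ne_of_gt (hankelDet_pos m hm t (n + 1)))

lemma Ppoly_zero (m : ℕ) (hm : 2 ≤ m) (t : ℝ) : Ppoly m t 0 = 0 := by
  apply Polynomial.ext
  intro l
  rcases Nat.eq_zero_or_pos l with h | h
  · subst h
    rw [Ppoly_coeff_self m hm t 0]
    simp
  · rw [Ppoly_coeff_high m t 0 l h]
    simp

lemma key_sq_A (m : ℕ) (hm : 2 ≤ m) (t : ℝ) (n : ℕ) :
    hankelDet m t (n + 1) * hankelDet m t (n + 1)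
        * Lw m t (Polynomial.X ^ 2 * Qpoly m t n * Qpoly m t n)
      = hankelDet m t n * hankelDet m t n
          * (hankelDet m t (n + 1) * hankelDet m t (n + 2))
        + Lw m t (Ppoly m t n * Ppoly m t n) := by
  have hpoly : Polynomial.C (hankelDet m t (n + 1))
        * (Polynomial.C (hankelDet m t (n + 1))
          * (Polynomial.X ^ 2 * Qpoly m t n * Qpoly m t n))
      = Polynomial.C (hankelDet m t n)
          * (Polynomial.C (hankelDet m t n) * (Qpoly m t (n + 1) * Qpoly m t (n + 1)))
        + (Polynomial.C (hankelDet m t n) * (Ppoly m t n * Qpoly m t (n + 1))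
          + (Polynomial.C (hankelDet m t n) * (Ppoly m t n * Qpoly m t (n + 1))
          + Ppoly m t n * Ppoly m t n)) := by
    unfold Ppoly; ring
  have h2 := congrArg (Lw m t) hpoly
  simp only [Lw_add m hm, Lw_C_mul] at h2
  rw [Lw_Q_sq m hm, Lw_Ppoly_mul_Qsucc m hm] at h2
  nlinarith [h2]

lemma Lw_PP_succ (m : ℕ) (hm : 2 ≤ m) (t : ℝ) (k : ℕ) :
    Lw m t (Ppoly m t (k + 1) * Ppoly m t (k + 1)) * hankelDet m t (k + 1)
      = hankelDet m t k * hankelDet m t (k + 2) ^ 4 := by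
  set n := k + 1 with hn
  set c := (Ppoly m t n).coeff k / hankelDet m t k with hc
  set T := Ppoly m t n - Polynomial.C c * Qpoly m t k with hT
  have hDk := hankelDet_pos m hm t k
  have hDn := hankelDet_pos m hm t n
  have hT_coeff : ∀ l, k ≤ l → T.coeff l = 0 := by
    intro l hl
    rw [hT, Polynomial.coeff_sub, Polynomial.coeff_C_mul]
    rcases Nat.lt_trichotomy l (k + 1) with h | h | h
    · have : l = k := by omega
      subst this
      rw [Qpoly_coeff_self, hc, div_mul_cancel₀ _ (ne_of_gt hDk), sub_self]
    · rw [h, ← hn, Ppoly_coeff_self m hm t n,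
        Qpoly_coeff_eq_zero m t (show k < n by omega)]
      ring
    · rw [Ppoly_coeff_high m t n l (by omega), Qpoly_coeff_eq_zero m t (show k < l by omega)]
      ring
  -- Lw (T * Ppoly n) = 0
  have hTP : Lw m t (T * Ppoly m t n) = 0 := by
    have hpoly2 : T * Ppoly m t n
        = Polynomial.C (hankelDet m t (n + 1)) * ((Polynomial.X * T) * Qpoly m t n)
          - Polynomial.C (hankelDet m t n) * (T * Qpoly m t (n + 1)) := by
      conv_lhs => rw [show Ppoly m t n
        = Polynomial.C (hankelDet m t (n + 1)) * (Polynomial.X * Qpoly m t n)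
          - Polynomial.C (hankelDet m t n) * Qpoly m t (n + 1) from rfl]
      ring
    rw [hpoly2, Lw_sub m hm, Lw_C_mul, Lw_C_mul]
    have h3 : Lw m t ((Polynomial.X * T) * Qpoly m t n) = 0 := by
      rw [Lw_mul_Qpoly m hm t n _ ?hh]
      · rw [show n = k + 1 from rfl, Polynomial.coeff_X_mul, hT_coeff k (le_refl k)]
        ring
      · intro l hl
        obtain ⟨l', rfl⟩ : ∃ l'', l = l'' + 1 := ⟨l - 1, by omega⟩
        rw [Polynomial.coeff_X_mul]
        exact hT_coeff l' (by omega)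
    have h4 : Lw m t (T * Qpoly m t (n + 1)) = 0 := by
      rw [Lw_mul_Qpoly m hm t (n + 1) _ (fun l hl => hT_coeff l (by omega)),
        hT_coeff (n + 1) (by omega)]
      ring
    rw [h3, h4]
    ring
  -- K := Lw (Qpoly k * Ppoly n), two evaluations
  have hK1 : Lw m t (Qpoly m t k * Ppoly m t n)
      = hankelDet m t (n + 1) * (hankelDet m t k * hankelDet m t (n + 1)) := by
    have hpoly3 : Qpoly m t k * Ppoly m t n
        = Polynomial.C (hankelDet m t (n + 1)) * ((Polynomial.X * Qpoly m t k) * Qpoly m t n)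
          - Polynomial.C (hankelDet m t n) * (Qpoly m t k * Qpoly m t (n + 1)) := by
      conv_lhs => rw [show Ppoly m t n
        = Polynomial.C (hankelDet m t (n + 1)) * (Polynomial.X * Qpoly m t n)
          - Polynomial.C (hankelDet m t n) * Qpoly m t (n + 1) from rfl]
      ring
    rw [hpoly3, Lw_sub m hm, Lw_C_mul, Lw_C_mul]
    have h3 : Lw m t ((Polynomial.X * Qpoly m t k) * Qpoly m t n)
        = hankelDet m t k * hankelDet m t (n + 1) := by
      rw [Lw_mul_Qpoly m hm t n _ ?hh2]
      · rw [show n = k + 1 from rfl, Polynomial.coeff_X_mul, Qpoly_coeff_self]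
      · intro l hl
        obtain ⟨l', rfl⟩ : ∃ l'', l = l'' + 1 := ⟨l - 1, by omega⟩
        rw [Polynomial.coeff_X_mul]
        exact Qpoly_coeff_eq_zero m t (by omega)
    have h4 : Lw m t (Qpoly m t k * Qpoly m t (n + 1)) = 0 := by
      rw [Lw_mul_Qpoly m hm t (n + 1) _
          (fun l hl => Qpoly_coeff_eq_zero m t (show k < l by omega)),
        Qpoly_coeff_eq_zero m t (show k < n + 1 by omega)]
      ring
    rw [h3, h4]
    ring
  have hK2 : Lw m t (Qpoly m t k * Ppoly m t n)
      = c * (hankelDet m t k * hankelDet m t (k + 1)) := by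
    have hpoly4 : Qpoly m t k * Ppoly m t n
        = Polynomial.C c * (Qpoly m t k * Qpoly m t k) + T * Qpoly m t k := by
      rw [hT]; ring
    rw [hpoly4, Lw_add m hm, Lw_C_mul, Lw_Q_sq m hm,
      Lw_mul_Qpoly m hm t k _ (fun l hl => hT_coeff l (by omega)),
      hT_coeff k (le_refl k)]
    ring
  have hPP : Lw m t (Ppoly m t n * Ppoly m t n)
      = c * Lw m t (Qpoly m t k * Ppoly m t n) := by
    have hpoly5 : Ppoly m t n * Ppoly m t n
        = Polynomial.C c * (Qpoly m t k * Ppoly m t n) + T * Ppoly m t n := by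
      rw [hT]; ring
    rw [hpoly5, Lw_add m hm, Lw_C_mul, hTP]
    ring
  -- combine
  have hcc : c * (hankelDet m t k * hankelDet m t (k + 1))
      = hankelDet m t (n + 1) * (hankelDet m t k * hankelDet m t (n + 1)) := by
    rw [← hK2, hK1]
  have hfinal : Lw m t (Ppoly m t n * Ppoly m t n) * hankelDet m t (k + 1) * hankelDet m t k
      = hankelDet m t k * hankelDet m t (n + 1) ^ 4 * hankelDet m t k := by
    rw [hPP, hK1]
    linear_combination (hankelDet m t (n + 1) * hankelDet m t (n + 1) * hankelDet m t k) * hcc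
  have := mul_right_cancel₀ (ne_of_gt hDk) hfinal
  rw [show n + 1 = k + 2 from rfl] at this
  exact this

lemma key_W (m : ℕ) (hm : 2 ≤ m) (t : ℝ) (n : ℕ) :
    Lw m t (Polynomial.X ^ 2 * Qpoly m t n * Qpoly m t n)
      = (betaCoef m t n + betaCoef m t (n + 1)) * hQuantity m t n * hankelDet m t n ^ 2 := by
  cases n with
  | zero =>
    have hA := key_sq_A m hm t 0
    rw [Ppoly_zero m hm t, mul_zero, Lw_zero] at hA
    have hA2 : hankelDet m t 1 * hankelDet m t 1
          * Lw m t (Polynomial.X ^ 2 * Qpoly m t 0 * Qpoly m t 0)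
        = hankelDet m t 0 * hankelDet m t 0 * (hankelDet m t 1 * hankelDet m t 2) + 0 := hA
    have hD0 := hankelDet_pos m hm t 0
    have hD1 := hankelDet_pos m hm t 1
    have hb0 : betaCoef m t 0 = 0 := rfl
    have hb1 : betaCoef m t 1
        = hankelDet m t 2 * hankelDet m t 0 / hankelDet m t 1 ^ 2 := rfl
    have hh : hQuantity m t 0 = hankelDet m t 1 / hankelDet m t 0 := rfl
    rw [hb0, hb1, hh]
    have hM : hankelDet m t 1 * hankelDet m t 1 ≠ 0 := by positivity
    apply mul_right_cancel₀ hM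
    have hrhs : (0 + hankelDet m t 2 * hankelDet m t 0 / hankelDet m t 1 ^ 2)
          * (hankelDet m t 1 / hankelDet m t 0) * hankelDet m t 0 ^ 2
          * (hankelDet m t 1 * hankelDet m t 1)
        = hankelDet m t 0 * hankelDet m t 0 * (hankelDet m t 1 * hankelDet m t 2) := by
      field_simp
      ring
    rw [hrhs]
    linear_combination hA2
  | succ k =>
    have hA := key_sq_A m hm t (k + 1)
    have hA2 : hankelDet m t (k + 2) * hankelDet m t (k + 2)
          * Lw m t (Polynomial.X ^ 2 * Qpoly m t (k + 1) * Qpoly m t (k + 1))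
        = hankelDet m t (k + 1) * hankelDet m t (k + 1)
            * (hankelDet m t (k + 2) * hankelDet m t (k + 3))
          + Lw m t (Ppoly m t (k + 1) * Ppoly m t (k + 1)) := hA
    have hPP := Lw_PP_succ m hm t k
    have hDk := hankelDet_pos m hm t k
    have hD0 := hankelDet_pos m hm t (k + 1)
    have hD1 := hankelDet_pos m hm t (k + 2)
    have hD2 := hankelDet_pos m hm t (k + 3)
    have hkey : Lw m t (Polynomial.X ^ 2 * Qpoly m t (k + 1) * Qpoly m t (k + 1))
          * (hankelDet m t (k + 2) ^ 2 * hankelDet m t (k + 1))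
        = hankelDet m t (k + 1) ^ 3 * hankelDet m t (k + 2) * hankelDet m t (k + 3)
          + hankelDet m t k * hankelDet m t (k + 2) ^ 4 := by
      linear_combination hankelDet m t (k + 1) * hA2 + hPP
    have hb1 : betaCoef m t (k + 1)
        = hankelDet m t (k + 2) * hankelDet m t k / hankelDet m t (k + 1) ^ 2 := rfl
    have hb2 : betaCoef m t (k + 1 + 1)
        = hankelDet m t (k + 3) * hankelDet m t (k + 1) / hankelDet m t (k + 2) ^ 2 := rfl
    have hh : hQuantity m t (k + 1) = hankelDet m t (k + 2) / hankelDet m t (k + 1) := rfl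
    rw [hb1, hb2, hh]
    have hM : hankelDet m t (k + 2) ^ 2 * hankelDet m t (k + 1) ≠ 0 := by positivity
    apply mul_right_cancel₀ hM
    have hrhs : (hankelDet m t (k + 2) * hankelDet m t k / hankelDet m t (k + 1) ^ 2
            + hankelDet m t (k + 3) * hankelDet m t (k + 1) / hankelDet m t (k + 2) ^ 2)
          * (hankelDet m t (k + 2) / hankelDet m t (k + 1)) * hankelDet m t (k + 1) ^ 2
          * (hankelDet m t (k + 2) ^ 2 * hankelDet m t (k + 1))
        = hankelDet m t (k + 1) ^ 3 * hankelDet m t (k + 2) * hankelDet m t (k + 3)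
          + hankelDet m t k * hankelDet m t (k + 2) ^ 4 := by
      field_simp
      ring
    rw [hrhs]
    linear_combination hkey

lemma differentiableAt_det {k : ℕ} (f : ℝ → Matrix (Fin k) (Fin k) ℝ) (t : ℝ)
    (h : ∀ i j, DifferentiableAt ℝ (fun s => f s i j) t) :
    DifferentiableAt ℝ (fun s => (f s).det) t := by
  have heq : (fun s => (f s).det)
      = fun s => ∑ σ : Equiv.Perm (Fin k),
          ((Equiv.Perm.sign σ : ℤ) : ℝ) * ∏ i, f s (σ i) i := by
    funext s
    rw [Matrix.det_apply]
    apply Finset.sum_congr rfl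
    intro σ _
    simp [Units.smul_def, zsmul_eq_mul]
  rw [heq]
  apply DifferentiableAt.fun_sum
  intro σ _
  exact (DifferentiableAt.fun_finsetProd (fun i _ => h (σ i) i)).const_mul _

lemma differentiableAt_hankelDet (m : ℕ) (hm : 2 ≤ m) (t : ℝ) (n : ℕ) :
    DifferentiableAt ℝ (fun s => hankelDet m s n) t := by
  apply differentiableAt_det (fun s => Hmat m s n)
  intro i j
  exact (freud_hasDerivAt m ((i : ℕ) + (j : ℕ)) hm t).differentiableAt

lemma differentiableAt_cmin (m : ℕ) (hm : 2 ≤ m) (t : ℝ) (n : ℕ) (k : Fin (n + 1)) :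
    DifferentiableAt ℝ (fun s => cmin m s n k) t := by
  apply differentiableAt_det
    (fun s => (Hmat m s (n + 1)).submatrix (Fin.last n).succAbove k.succAbove)
  intro i j
  exact (freud_hasDerivAt m _ hm t).differentiableAt

lemma key_deriv (m : ℕ) (hm : 2 ≤ m) (t : ℝ) (n : ℕ) :
    hankelDet m t n * deriv (fun s => hankelDet m s (n + 1)) t
      - deriv (fun s => hankelDet m s n) t * hankelDet m t (n + 1)
    = Lw m t (Polynomial.X ^ 2 * Qpoly m t n * Qpoly m t n) := by
  set q : Fin (n + 1) → ℝ → ℝ :=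
    fun k s => (-1 : ℝ) ^ (n + (k : ℕ)) * cmin m s n k with hq
  have hqd : ∀ k, DifferentiableAt ℝ (q k) t :=
    fun k => (differentiableAt_cmin m hm t n k).const_mul _
  set G : ℝ → ℝ := fun s => ∑ j : Fin (n + 1), ∑ k : Fin (n + 1),
      q j s * q k s * freudMoment m s ((j : ℕ) + (k : ℕ)) with hG
  -- G equals D_n * D_{n+1}
  have hQQ : ∀ s, Qpoly m s n * Qpoly m s n
      = ∑ j : Fin (n + 1), ∑ k : Fin (n + 1),
          Polynomial.C (q j s * q k s) * Polynomial.X ^ ((j : ℕ) + (k : ℕ)) := by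
    intro s
    rw [Qpoly, Finset.sum_mul_sum]
    apply Finset.sum_congr rfl; intro j _
    apply Finset.sum_congr rfl; intro k _
    simp only [hq, Polynomial.C_mul, Polynomial.C_pow, Polynomial.C_neg, Polynomial.C_1,
      pow_add]
    ring
  have hGL : ∀ s, G s = Lw m s (Qpoly m s n * Qpoly m s n) := by
    intro s
    rw [hQQ s, Lw_sum m hm]
    apply Finset.sum_congr rfl; intro j _
    rw [Lw_sum m hm]
    apply Finset.sum_congr rfl; intro k _
    rw [Lw_monomial]
  have hGD : G = fun s => hankelDet m s n * hankelDet m s (n + 1) :=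
    funext fun s => (hGL s).trans (Lw_Q_sq m hm s n)
  -- derivative of G, first form
  have hG1 : HasDerivAt G (∑ j : Fin (n + 1), ∑ k : Fin (n + 1),
      ((deriv (q j) t * q k t + q j t * deriv (q k) t)
          * freudMoment m t ((j : ℕ) + (k : ℕ))
        + q j t * q k t * freudMoment m t ((j : ℕ) + (k : ℕ) + 2))) t := by
    apply HasDerivAt.fun_sum; intro j _
    apply HasDerivAt.fun_sum; intro k _
    exact (((hqd j).hasDerivAt.mul (hqd k).hasDerivAt).mul
      (freud_hasDerivAt m ((j : ℕ) + (k : ℕ)) hm t))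
  -- derivative of G, second form
  have hG2 : HasDerivAt G
      (deriv (fun s => hankelDet m s n) t * hankelDet m t (n + 1)
        + hankelDet m t n * deriv (fun s => hankelDet m s (n + 1)) t) t := by
    rw [hGD]
    exact (differentiableAt_hankelDet m hm t n).hasDerivAt.mul
      (differentiableAt_hankelDet m hm t (n + 1)).hasDerivAt
  have huniq := hG1.unique hG2
  -- the B identity
  have hB : ∀ l : ℕ, (∑ k : Fin (n + 1), q k t * freudMoment m t (l + (k : ℕ)))
      = Bdet m t n l := by
    intro l
    rw [Bdet, laplace_last]
    apply Finset.sum_congr rfl; intro k _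
    simp only [hq]
    ring
  -- split the sum
  have hsplit : (∑ j : Fin (n + 1), ∑ k : Fin (n + 1),
      ((deriv (q j) t * q k t + q j t * deriv (q k) t)
          * freudMoment m t ((j : ℕ) + (k : ℕ))
        + q j t * q k t * freudMoment m t ((j : ℕ) + (k : ℕ) + 2)))
    = (∑ j : Fin (n + 1), ∑ k : Fin (n + 1),
        deriv (q j) t * (q k t * freudMoment m t ((j : ℕ) + (k : ℕ))))
      + (∑ j : Fin (n + 1), ∑ k : Fin (n + 1),
        deriv (q k) t * (q j t * freudMoment m t ((j : ℕ) + (k : ℕ))))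
      + ∑ j : Fin (n + 1), ∑ k : Fin (n + 1),
          q j t * q k t * freudMoment m t ((j : ℕ) + (k : ℕ) + 2) := by
    rw [← Finset.sum_add_distrib, ← Finset.sum_add_distrib]
    apply Finset.sum_congr rfl; intro j _
    rw [← Finset.sum_add_distrib, ← Finset.sum_add_distrib]
    apply Finset.sum_congr rfl; intro k _
    ring
  -- q at last index
  have hqlast : q (Fin.last n) = fun s => hankelDet m s n := by
    funext s
    simp only [hq, Fin.val_last]
    rw [Even.neg_one_pow ⟨n, by ring⟩, one_mul, cmin_last]
  -- first double sum
  have hE1 : (∑ j : Fin (n + 1), ∑ k : Fin (n + 1),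
        deriv (q j) t * (q k t * freudMoment m t ((j : ℕ) + (k : ℕ))))
      = deriv (fun s => hankelDet m s n) t * hankelDet m t (n + 1) := by
    have h1 : ∀ j : Fin (n + 1), (∑ k : Fin (n + 1),
          deriv (q j) t * (q k t * freudMoment m t ((j : ℕ) + (k : ℕ))))
        = deriv (q j) t * Bdet m t n (j : ℕ) := by
      intro j
      rw [← Finset.mul_sum, hB (j : ℕ)]
    rw [Finset.sum_congr rfl (fun j _ => h1 j),
      Finset.sum_eq_single (Fin.last n)]
    · rw [hqlast, Fin.val_last, Bdet_self]
    · intro j _ hj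
      rw [Bdet_lt m t n _ (Fin.val_lt_last hj), mul_zero]
    · intro h
      exact absurd (Finset.mem_univ _) h
  -- second double sum
  have hE2 : (∑ j : Fin (n + 1), ∑ k : Fin (n + 1),
        deriv (q k) t * (q j t * freudMoment m t ((j : ℕ) + (k : ℕ))))
      = deriv (fun s => hankelDet m s n) t * hankelDet m t (n + 1) := by
    rw [Finset.sum_comm]
    have h1 : ∀ k : Fin (n + 1), (∑ j : Fin (n + 1),
          deriv (q k) t * (q j t * freudMoment m t ((j : ℕ) + (k : ℕ))))
        = deriv (q k) t * Bdet m t n (k : ℕ) := by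
      intro k
      rw [← Finset.mul_sum, ← hB (k : ℕ)]
      congr 1
      apply Finset.sum_congr rfl; intro j _
      rw [Nat.add_comm (j : ℕ) (k : ℕ)]
    rw [Finset.sum_congr rfl (fun k _ => h1 k),
      Finset.sum_eq_single (Fin.last n)]
    · rw [hqlast, Fin.val_last, Bdet_self]
    · intro k _ hk
      rw [Bdet_lt m t n _ (Fin.val_lt_last hk), mul_zero]
    · intro h
      exact absurd (Finset.mem_univ _) h
  -- third double sum
  have hE3 : (∑ j : Fin (n + 1), ∑ k : Fin (n + 1),
        q j t * q k t * freudMoment m t ((j : ℕ) + (k : ℕ) + 2))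
      = Lw m t (Polynomial.X ^ 2 * Qpoly m t n * Qpoly m t n) := by
    have h1 : Polynomial.X ^ 2 * Qpoly m t n * Qpoly m t n
        = ∑ j : Fin (n + 1), ∑ k : Fin (n + 1),
            Polynomial.C (q j t * q k t)
              * Polynomial.X ^ ((j : ℕ) + (k : ℕ) + 2) := by
      rw [mul_assoc, hQQ t, Finset.mul_sum]
      apply Finset.sum_congr rfl; intro j _
      rw [Finset.mul_sum]
      apply Finset.sum_congr rfl; intro k _
      simp only [hq, Polynomial.C_mul, Polynomial.C_pow, Polynomial.C_neg, Polynomial.C_1,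
        pow_add]
      ring
    rw [h1, Lw_sum m hm]
    symm
    apply Finset.sum_congr rfl; intro j _
    rw [Lw_sum m hm]
    apply Finset.sum_congr rfl; intro k _
    rw [Lw_monomial]
  rw [hsplit, hE1, hE2, hE3] at huniq
  linarith

theorem stmt12 (m : ℕ) (hm : 2 ≤ m) (n : ℕ) (t : ℝ) :
    HasDerivAt (fun s : ℝ => Real.log (hQuantity m s n))
      (betaCoef m t n + betaCoef m t (n + 1)) t ∧
    HasDerivAt (fun s : ℝ => hQuantity m s n)
      ((betaCoef m t n + betaCoef m t (n + 1)) * hQuantity m t n) t := by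
  have hD0 := hankelDet_pos m hm t n
  have hD1 := hankelDet_pos m hm t (n + 1)
  set d0 := deriv (fun s => hankelDet m s n) t with hd0
  set d1 := deriv (fun s => hankelDet m s (n + 1)) t with hd1
  have hW := key_deriv m hm t n
  have hWval := key_W m hm t n
  have hdiv : HasDerivAt (fun s => hQuantity m s n)
      ((d1 * hankelDet m t n - hankelDet m t (n + 1) * d0) / hankelDet m t n ^ 2) t := by
    have h1 := (differentiableAt_hankelDet m hm t (n + 1)).hasDerivAt
    have h0 := (differentiableAt_hankelDet m hm t n).hasDerivAt
    exact h1.div h0 (ne_of_gt hD0)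
  have hval : (d1 * hankelDet m t n - hankelDet m t (n + 1) * d0) / hankelDet m t n ^ 2
      = (betaCoef m t n + betaCoef m t (n + 1)) * hQuantity m t n := by
    rw [show d1 * hankelDet m t n - hankelDet m t (n + 1) * d0
        = hankelDet m t n * d1 - d0 * hankelDet m t (n + 1) from by ring, hW, hWval]
    exact mul_div_cancel_right₀ _ (by positivity)
  have h2 : HasDerivAt (fun s => hQuantity m s n)
      ((betaCoef m t n + betaCoef m t (n + 1)) * hQuantity m t n) t := hval ▸ hdiv
  constructor
  · have hh : hQuantity m t n ≠ 0 := ne_of_gt (div_pos hD1 hD0)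
    have h3 := h2.log hh
    convert h3 using 1
    rw [mul_div_assoc, div_self hh, mul_one]
  · exact h2
end

section
/- For the Freud weight w(x;t) = exp(−x⁴ + t x²) with t ∈ ℝ, the recurrence coefficients satisfy the discrete Painlevé I equation: for every n ≥ 1, 4 β_n(t)(β_{n−1}(t) + β_n(t) + β_{n+1}(t) − t/2) = n. -/
open MeasureTheory Real Filter Polynomial Topology Set

namespace FreudAux

noncomputable def K (t : ℝ) (p : Polynomial ℝ) : ℝ :=
  ∫ x : ℝ, p.eval x * Real.exp (-x ^ 4 + t * x ^ 2)

lemma tendsto_exponent_atBot (t : ℝ) :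
    Tendsto (fun x : ℝ => x - x ^ 4 + t * x ^ 2) atTop atBot := by
  refine tendsto_atBot_mono' atTop ?_ (tendsto_neg_atTop_atBot (G := ℝ))
  filter_upwards [eventually_ge_atTop (max 1 (|t| + 2))] with x hx
  have h1 : (1 : ℝ) ≤ x := le_trans (le_max_left _ _) hx
  have h2 : |t| + 2 ≤ x := le_trans (le_max_right _ _) hx
  have ht : t ≤ |t| := le_abs_self t
  have e1 : t * x ^ 2 ≤ |t| * x ^ 2 := mul_le_mul_of_nonneg_right ht (sq_nonneg x)
  have e2 : x ≤ x ^ 2 := by nlinarith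
  have e3 : (|t| + 2) * x ^ 2 ≤ x * x ^ 2 := mul_le_mul_of_nonneg_right h2 (sq_nonneg x)
  have e4 : x * x ^ 2 ≤ x ^ 2 * x ^ 2 := mul_le_mul_of_nonneg_right e2 (sq_nonneg x)
  nlinarith [e1, e2, e3, e4]

lemma tendsto_poly_mul_atTop (t : ℝ) (q : Polynomial ℝ) :
    Tendsto (fun x : ℝ => q.eval x * Real.exp (-x ^ 4 + t * x ^ 2)) atTop (𝓝 0) := by
  have h1 := q.tendsto_div_exp_atTop
  have h2 : Tendsto (fun x : ℝ => Real.exp (x - x ^ 4 + t * x ^ 2)) atTop (𝓝 0) :=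
    Real.tendsto_exp_atBot.comp (tendsto_exponent_atBot t)
  have h3 := h1.mul h2
  rw [mul_zero] at h3
  refine h3.congr fun x => ?_
  have he : Real.exp (x - x ^ 4 + t * x ^ 2) = Real.exp x * Real.exp (-x ^ 4 + t * x ^ 2) := by
    rw [← Real.exp_add]; ring_nf
  rw [he]
  field_simp

lemma tendsto_poly_mul_atBot (t : ℝ) (q : Polynomial ℝ) :
    Tendsto (fun x : ℝ => q.eval x * Real.exp (-x ^ 4 + t * x ^ 2)) atBot (𝓝 0) := by
  have h1 := (tendsto_poly_mul_atTop t (q.comp (-X))).comp tendsto_neg_atBot_atTop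
  refine h1.congr fun x => ?_
  have e1 : (-x) ^ 4 = x ^ 4 := by ring
  have e2 : (-x) ^ 2 = x ^ 2 := by ring
  simp only [Function.comp_apply, eval_comp, eval_neg, eval_X, neg_neg, e1, e2]

lemma integrable_poly_mul (t : ℝ) (q : Polynomial ℝ) :
    Integrable (fun x : ℝ => q.eval x * Real.exp (-x ^ 4 + t * x ^ 2)) := by
  set f : ℝ → ℝ := fun x => q.eval x * Real.exp (-x ^ 4 + t * x ^ 2) with hf
  have cont : Continuous f := by
    apply Continuous.mul
    · exact q.continuous_aeval
    · exact Real.continuous_exp.comp (by continuity)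
  set g : ℝ → ℝ := fun x => q.eval x * Real.exp (-x ^ 4 + (t + 1) * x ^ 2) with hg
  have hfg : ∀ x, f x = g x * Real.exp (-x ^ 2) := by
    intro x
    simp only [hf, hg, mul_assoc, ← Real.exp_add]
    ring_nf
  have htop : ∀ᶠ x in atTop, |g x| ≤ 1 := by
    have := tendsto_poly_mul_atTop (t + 1) q
    filter_upwards [this.eventually (eventually_abs_sub_lt 0 one_pos)] with x hx
    simpa [hg] using hx.le
  have hbot : ∀ᶠ x in atBot, |g x| ≤ 1 := by
    have := tendsto_poly_mul_atBot (t + 1) q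
    filter_upwards [this.eventually (eventually_abs_sub_lt 0 one_pos)] with x hx
    simpa [hg] using hx.le
  obtain ⟨a, ha⟩ := htop.exists_forall_of_atTop
  obtain ⟨b, hb⟩ := hbot.exists_forall_of_atBot
  have hbound : ∀ x, (x ≤ b ∨ a ≤ x) → ‖f x‖ ≤ Real.exp (-1 * x ^ 2) := by
    intro x hx
    have hgx : |g x| ≤ 1 := by rcases hx with hx | hx; exacts [hb x hx, ha x hx]
    rw [hfg x, norm_mul, Real.norm_eq_abs (Real.exp _), abs_exp, neg_one_mul]
    calc |g x| * Real.exp (-x ^ 2) ≤ 1 * Real.exp (-x ^ 2) :=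
          mul_le_mul_of_nonneg_right hgx (Real.exp_pos _).le
      _ = Real.exp (-x ^ 2) := one_mul _
  have hexp := integrable_exp_neg_mul_sq (b := 1) one_pos
  have h1 : IntegrableOn f (Iic b) := by
    refine (hexp.integrableOn).mono' cont.aestronglyMeasurable.restrict ?_
    filter_upwards [ae_restrict_mem measurableSet_Iic] with x hx
    exact hbound x (Or.inl hx)
  have h2 : IntegrableOn f (Ioi (max a b)) := by
    refine (hexp.integrableOn).mono' cont.aestronglyMeasurable.restrict ?_
    filter_upwards [ae_restrict_mem measurableSet_Ioi] with x hx
    exact hbound x (Or.inr ((le_max_left a b).trans hx.le))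
  have h3 : IntegrableOn f (Icc b (max a b)) := cont.integrableOn_Icc
  have huniv : (univ : Set ℝ) ⊆ Iic b ∪ (Icc b (max a b) ∪ Ioi (max a b)) := by
    intro x _
    rcases le_total x b with hx | hx
    · exact Or.inl hx
    · rcases le_or_gt x (max a b) with hx2 | hx2
      · exact Or.inr (Or.inl ⟨hx, hx2⟩)
      · exact Or.inr (Or.inr hx2)
  rw [← integrableOn_univ]
  exact (h1.union (h3.union h2)).mono_set huniv

lemma K_add (t : ℝ) (p q : Polynomial ℝ) : K t (p + q) = K t p + K t q := by
  unfold K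
  rw [← integral_add (integrable_poly_mul t p) (integrable_poly_mul t q)]
  congr 1; funext x; rw [eval_add]; ring

lemma K_Cmul (t : ℝ) (c : ℝ) (p : Polynomial ℝ) : K t (C c * p) = c * K t p := by
  unfold K
  rw [← integral_const_mul]
  congr 1; funext x; rw [eval_mul, eval_C]; ring

lemma K_sub (t : ℝ) (p q : Polynomial ℝ) : K t (p - q) = K t p - K t q := by
  unfold K
  rw [← integral_sub (integrable_poly_mul t p) (integrable_poly_mul t q)]
  congr 1; funext x; rw [eval_sub]; ring

lemma K_self_pos (t : ℝ) (p : Polynomial ℝ) (hp : p ≠ 0) : 0 < K t (p * p) := by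
  unfold K
  have hint : Integrable (fun x : ℝ => (p * p).eval x * Real.exp (-x ^ 4 + t * x ^ 2)) :=
    integrable_poly_mul t (p * p)
  rw [integral_pos_iff_support_of_nonneg_ae _ hint]
  · have hsub : {x : ℝ | p.IsRoot x}ᶜ ⊆
        Function.support fun x => (p * p).eval x * Real.exp (-x ^ 4 + t * x ^ 2) := by
      intro x hx
      have hpx : p.eval x ≠ 0 := hx
      simp only [Function.mem_support, eval_mul]
      positivity
    have hfin : ({x : ℝ | p.IsRoot x}).Finite := p.finite_setOf_isRoot hp
    have h0 : volume {x : ℝ | p.IsRoot x} = 0 := hfin.measure_zero _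
    have hcompl : volume ({x : ℝ | p.IsRoot x}ᶜ) ≠ 0 := by
      intro hzero
      have : volume (univ : Set ℝ) ≤ 0 := by
        calc volume (univ : Set ℝ) = volume ({x : ℝ | p.IsRoot x}ᶜ ∪ {x : ℝ | p.IsRoot x}) := by
              rw [compl_union_self]
          _ ≤ volume ({x : ℝ | p.IsRoot x}ᶜ) + volume {x : ℝ | p.IsRoot x} := measure_union_le _ _
          _ = 0 := by rw [hzero, h0, add_zero]
      simp [Real.volume_univ] at this
    calc (0 : ENNReal) < volume ({x : ℝ | p.IsRoot x}ᶜ) := by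
          exact pos_iff_ne_zero.mpr hcompl
      _ ≤ _ := measure_mono hsub
  · refine ae_of_all _ fun x => ?_
    show (0 : ℝ) ≤ (p * p).eval x * Real.exp (-x ^ 4 + t * x ^ 2)
    rw [eval_mul]
    exact mul_nonneg (mul_self_nonneg _) (Real.exp_pos _).le

lemma K_flip_neg (t : ℝ) (p q : Polynomial ℝ) :
    K t (p.comp (-X) * q) = K t (q.comp (-X) * p) := by
  unfold K
  rw [← integral_neg_eq_self (fun x : ℝ => (q.comp (-X) * p).eval x *
      Real.exp (-x ^ 4 + t * x ^ 2)) volume]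
  congr 1; funext x
  have e1 : (-x) ^ 4 = x ^ 4 := by ring
  have e2 : (-x) ^ 2 = x ^ 2 := by ring
  simp only [eval_mul, eval_comp, eval_neg, eval_X, neg_neg, e1, e2]
  ring

lemma hasDerivAt_poly_mul (t : ℝ) (r : Polynomial ℝ) (x : ℝ) :
    HasDerivAt (fun y : ℝ => r.eval y * Real.exp (-y ^ 4 + t * y ^ 2))
      (((derivative r).eval x + r.eval x * (-(4 * x ^ 3) + 2 * t * x)) *
        Real.exp (-x ^ 4 + t * x ^ 2)) x := by
  have h1 : HasDerivAt (fun y : ℝ => -y ^ 4 + t * y ^ 2) (-(4 * x ^ 3) + 2 * t * x) x := by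
    have hp4 := (hasDerivAt_pow 4 x).neg
    have hp2 := (hasDerivAt_pow 2 x).const_mul t
    have := hp4.add hp2
    refine this.congr_deriv ?_
    push_cast
    ring
  have h2 := h1.exp
  have h3 := (r.hasDerivAt x).mul h2
  refine h3.congr_deriv ?_
  ring

lemma ibpK (t : ℝ) (r : Polynomial ℝ) :
    K t (derivative r) = 4 * K t (X ^ 3 * r) - 2 * t * K t (X * r) := by
  set f' : ℝ → ℝ := fun x =>
    ((derivative r).eval x + r.eval x * (-(4 * x ^ 3) + 2 * t * x)) *
      Real.exp (-x ^ 4 + t * x ^ 2) with hf'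
  have hfeq : f' = fun x =>
      (derivative r + (C (-4) * X ^ 3 + C (2 * t) * X) * r).eval x *
        Real.exp (-x ^ 4 + t * x ^ 2) := by
    funext x
    simp only [hf', eval_add, eval_mul, eval_pow, eval_C, eval_X]
    ring
  have hint : Integrable f' := by
    rw [hfeq]; exact integrable_poly_mul t _
  have hzero : ∫ x : ℝ, f' x = 0 := by
    have hIoi : ∫ x in Ioi (0 : ℝ), f' x =
        0 - r.eval 0 * Real.exp (-(0 : ℝ) ^ 4 + t * (0 : ℝ) ^ 2) :=
      integral_Ioi_of_hasDerivAt_of_tendsto' (fun x _ => hasDerivAt_poly_mul t r x)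
        hint.integrableOn (tendsto_poly_mul_atTop t r)
    have hIic : ∫ x in Iic (0 : ℝ), f' x =
        r.eval 0 * Real.exp (-(0 : ℝ) ^ 4 + t * (0 : ℝ) ^ 2) - 0 :=
      integral_Iic_of_hasDerivAt_of_tendsto' (fun x _ => hasDerivAt_poly_mul t r x)
        hint.integrableOn (tendsto_poly_mul_atBot t r)
    rw [← intervalIntegral.integral_Iic_add_Ioi (b := (0 : ℝ)) hint.integrableOn hint.integrableOn,
      hIoi, hIic]
    ring
  rw [hfeq] at hzero
  have hsplit : K t (derivative r + (C (-4) * X ^ 3 + C (2 * t) * X) * r) = 0 := hzero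
  rw [K_add, add_mul, K_add] at hsplit
  have e1 : C (-4 : ℝ) * X ^ 3 * r = C (-4 : ℝ) * (X ^ 3 * r) := by ring
  have e2 : C (2 * t) * X * r = C (2 * t) * (X * r) := by ring
  rw [e1, e2, K_Cmul, K_Cmul] at hsplit
  linarith

section Orthogonal

variable (t : ℝ) (P : ℕ → Polynomial ℝ)

lemma degP (hmonic : ∀ n, (P n).Monic) (hdeg : ∀ n, (P n).natDegree = n) (n : ℕ) :
    (P n).degree = (n : ℕ) := by
  rw [Polynomial.degree_eq_natDegree (hmonic n).ne_zero, hdeg n]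

lemma K_zero (t : ℝ) : K t 0 = 0 := by
  simp [K]

lemma P0_eq_one (hmonic : ∀ n, (P n).Monic) (hdeg : ∀ n, (P n).natDegree = n) :
    P 0 = 1 := by
  have h1 : P 0 = C ((P 0).coeff 0) := eq_C_of_natDegree_le_zero (by rw [hdeg 0])
  have h2 : (P 0).coeff 0 = 1 := by
    have := (hmonic 0).coeff_natDegree
    rwa [hdeg 0] at this
  rw [h1, h2, map_one]

lemma orthK_aux (hmonic : ∀ n, (P n).Monic) (hdeg : ∀ n, (P n).natDegree = n)
    (horthK : ∀ j k, j ≠ k → K t (P j * P k) = 0) (N : ℕ) :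
    ∀ q : Polynomial ℝ, q.natDegree ≤ N → ∀ n : ℕ, q.degree < (n : ℕ) →
      K t (q * P n) = 0 := by
  induction N with
  | zero =>
    intro q hq n hn
    have hqC : q = C (q.coeff 0) := eq_C_of_natDegree_le_zero hq
    rcases Nat.eq_zero_or_pos n with rfl | hnpos
    · have hq0 : q = 0 := by
        rw [← degree_eq_bot]
        exact (Nat.WithBot.lt_zero_iff).mp (by exact_mod_cast hn)
      rw [hq0, zero_mul, K_zero]
    · rw [hqC]
      have e : C (q.coeff 0) * P n = C (q.coeff 0) * (P 0 * P n) := by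
        rw [P0_eq_one P hmonic hdeg, one_mul]
      rw [e, K_Cmul, horthK 0 n (by omega), mul_zero]
  | succ N IH =>
    intro q hq n hn
    by_cases h0 : q = 0
    · rw [h0, zero_mul, K_zero]
    · set d := q.natDegree with hd
      set c := q.leadingCoeff with hc
      have hc0 : c ≠ 0 := leadingCoeff_ne_zero.mpr h0
      have hdlt : d < n := by
        have h' := hn
        rw [degree_eq_natDegree h0] at h'
        exact_mod_cast h'
      have hdeg2 : q.degree = (C c * P d).degree := by
        rw [degree_C_mul hc0, degP P hmonic hdeg, degree_eq_natDegree h0]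
      have hlc2 : q.leadingCoeff = (C c * P d).leadingCoeff := by
        rw [leadingCoeff_mul, leadingCoeff_C, (hmonic d).leadingCoeff, mul_one]
      set r := q - C c * P d with hr
      have hrdeg : r.degree < q.degree := degree_sub_lt hdeg2 h0 hlc2
      have hrN : r.natDegree ≤ N := by
        by_cases hr0 : r = 0
        · simp [hr0]
        · have hlt : r.natDegree < q.natDegree := by
            have h' := hrdeg
            rw [degree_eq_natDegree h0] at h'
            exact (natDegree_lt_iff_degree_lt hr0).mpr h'
          omega
      have hq' : q = C c * P d + r := by rw [hr]; ring
      have hrn : r.degree < (n : ℕ) := by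
        refine lt_of_lt_of_le hrdeg ?_
        rw [degree_eq_natDegree h0]
        exact_mod_cast hdlt.le
      rw [hq', add_mul, K_add]
      have e : C c * P d * P n = C c * (P d * P n) := by ring
      rw [e, K_Cmul, horthK d n (by omega), IH r hrN n hrn, mul_zero, add_zero]

lemma orthK (hmonic : ∀ n, (P n).Monic) (hdeg : ∀ n, (P n).natDegree = n)
    (horthK : ∀ j k, j ≠ k → K t (P j * P k) = 0)
    (q : Polynomial ℝ) (n : ℕ) (hq : q.degree < (n : ℕ)) : K t (q * P n) = 0 :=
  orthK_aux t P hmonic hdeg horthK q.natDegree q le_rfl n hq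

lemma zero_of_orthK (hmonic : ∀ n, (P n).Monic) (hdeg : ∀ n, (P n).natDegree = n)
    (horthK : ∀ j k, j ≠ k → K t (P j * P k) = 0)
    (q : Polynomial ℝ) (n : ℕ) (hq : q.degree < (n : ℕ))
    (horthq : ∀ k, k < n → K t (q * P k) = 0) : q = 0 := by
  by_contra h0
  set d := q.natDegree with hd
  set c := q.leadingCoeff with hc
  have hc0 : c ≠ 0 := leadingCoeff_ne_zero.mpr h0
  have hdlt : d < n := by
    have h' := hq
    rw [degree_eq_natDegree h0] at h'
    exact_mod_cast h'
  have hdeg2 : q.degree = (C c * P d).degree := by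
    rw [degree_C_mul hc0, degP P hmonic hdeg, degree_eq_natDegree h0]
  have hlc2 : q.leadingCoeff = (C c * P d).leadingCoeff := by
    rw [leadingCoeff_mul, leadingCoeff_C, (hmonic d).leadingCoeff, mul_one]
  set r := q - C c * P d with hr
  have hrdeg : r.degree < q.degree := degree_sub_lt hdeg2 h0 hlc2
  have hrd : r.degree < (d : ℕ) := by
    rwa [degree_eq_natDegree h0] at hrdeg
  have hq' : q = C c * P d + r := by rw [hr]; ring
  have hzero := horthq d hdlt
  rw [hq', add_mul, K_add] at hzero
  have e : C c * P d * P d = C c * (P d * P d) := by ring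
  rw [e, K_Cmul, orthK t P hmonic hdeg horthK r d hrd, add_zero] at hzero
  have hpos := K_self_pos t (P d) (hmonic d).ne_zero
  rcases mul_eq_zero.mp hzero with h | h
  · exact hc0 h
  · exact hpos.ne' h

lemma parityP (hmonic : ∀ n, (P n).Monic) (hdeg : ∀ n, (P n).natDegree = n)
    (horthK : ∀ j k, j ≠ k → K t (P j * P k) = 0) (n : ℕ) (x : ℝ) :
    (P n).eval (-x) = (-1 : ℝ) ^ n * (P n).eval x := by
  have hsq : ((-1 : ℝ) ^ n) * ((-1 : ℝ) ^ n) = 1 := by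
    rw [← mul_pow]; norm_num
  set Qc := (P n).comp (-X) with hQc
  have hnegX : (-X : Polynomial ℝ).natDegree = 1 := by
    rw [natDegree_neg, natDegree_X]
  have hlcQ : Qc.leadingCoeff = (-1 : ℝ) ^ n := by
    rw [hQc, leadingCoeff_comp (by rw [hnegX]; exact one_ne_zero)]
    rw [(hmonic n).leadingCoeff, hdeg n, one_mul, leadingCoeff_neg, leadingCoeff_X]
  have hQne : Qc ≠ 0 := by
    intro hz
    rw [hz, leadingCoeff_zero] at hlcQ
    have : ((-1 : ℝ) ^ n) ≠ 0 := pow_ne_zero _ (by norm_num)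
    exact this hlcQ.symm
  have hdegQ : Qc.natDegree = n := by
    rw [hQc, natDegree_comp, hnegX, hdeg n, mul_one]
  set M := C ((-1 : ℝ) ^ n) * Qc with hM
  have hlcM : M.leadingCoeff = 1 := by
    rw [hM, leadingCoeff_mul, leadingCoeff_C, hlcQ, hsq]
  have hMne : M ≠ 0 := by
    intro hz
    rw [hz, leadingCoeff_zero] at hlcM
    exact one_ne_zero hlcM.symm
  have hMdeg : M.degree = (P n).degree := by
    rw [hM, degree_C_mul (pow_ne_zero _ (by norm_num : (-1 : ℝ) ≠ 0)),
      degree_eq_natDegree hQne, hdegQ, degP P hmonic hdeg]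
  set D := M - P n with hD
  have hDdeg : D.degree < (n : ℕ) := by
    have := degree_sub_lt hMdeg hMne (by rw [hlcM, (hmonic n).leadingCoeff])
    rwa [hMdeg, degP P hmonic hdeg] at this
  have horthD : ∀ k, k < n → K t (D * P k) = 0 := by
    intro k hk
    rw [hD, sub_mul, K_sub]
    have e : M * P k = C ((-1 : ℝ) ^ n) * (Qc * P k) := by rw [hM]; ring
    rw [e, K_Cmul]
    have hflip : K t (Qc * P k) = K t ((P k).comp (-X) * P n) := K_flip_neg t (P n) (P k)
    have hcompdeg : ((P k).comp (-X)).degree < (n : ℕ) := by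
      refine lt_of_le_of_lt degree_le_natDegree ?_
      rw [natDegree_comp, hnegX, hdeg k, mul_one]
      exact_mod_cast hk
    rw [hflip, orthK t P hmonic hdeg horthK _ n hcompdeg,
      horthK n k (by omega), mul_zero, sub_zero]
  have hD0 : D = 0 := zero_of_orthK t P hmonic hdeg horthK D n hDdeg horthD
  have hMP : M = P n := by rwa [sub_eq_zero] at hD0
  have heval : (-1 : ℝ) ^ n * (P n).eval (-x) = (P n).eval x := by
    have := congrArg (fun p => Polynomial.eval x p) hMP
    simpa [hM, hQc, eval_mul, eval_comp] using this
  calc (P n).eval (-x) = ((-1 : ℝ) ^ n * (-1 : ℝ) ^ n) * (P n).eval (-x) := by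
        rw [hsq, one_mul]
    _ = (-1 : ℝ) ^ n * ((-1 : ℝ) ^ n * (P n).eval (-x)) := by ring
    _ = (-1 : ℝ) ^ n * (P n).eval x := by rw [heval]

lemma oddK (hmonic : ∀ n, (P n).Monic) (hdeg : ∀ n, (P n).natDegree = n)
    (horthK : ∀ j k, j ≠ k → K t (P j * P k) = 0) (n : ℕ) :
    K t (X * (P n * P n)) = 0 := by
  have hsq : ((-1 : ℝ) ^ n) * ((-1 : ℝ) ^ n) = 1 := by
    rw [← mul_pow]; norm_num
  set F : ℝ → ℝ := fun x => (X * (P n * P n)).eval x * Real.exp (-x ^ 4 + t * x ^ 2) with hF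
  have h1 : ∫ x : ℝ, F (-x) = ∫ x : ℝ, F x := integral_neg_eq_self F volume
  have h2 : ∀ x, F (-x) = -F x := by
    intro x
    have e1 : (-x : ℝ) ^ 4 = x ^ 4 := by ring
    have e2 : (-x : ℝ) ^ 2 = x ^ 2 := by ring
    simp only [hF, eval_mul, eval_X, e1, e2,
      parityP t P hmonic hdeg horthK n x]
    linear_combination (-(x * (P n).eval x * (P n).eval x * Real.exp (-x ^ 4 + t * x ^ 2))) * hsq
  simp only [h2] at h1
  rw [integral_neg] at h1
  have : K t (X * (P n * P n)) = ∫ x : ℝ, F x := rfl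
  rw [this]
  linarith

lemma stepK (hmonic : ∀ n, (P n).Monic) (hdeg : ∀ n, (P n).natDegree = n)
    (horthK : ∀ j k, j ≠ k → K t (P j * P k) = 0) (k : ℕ) :
    K t ((X * P k) * P (k + 1)) = K t (P (k + 1) * P (k + 1)) := by
  have hmX : (X * P k).Monic := monic_X.mul (hmonic k)
  have hndX : (X * P k).natDegree = k + 1 := by
    rw [natDegree_mul X_ne_zero (hmonic k).ne_zero, natDegree_X, hdeg k, add_comm]
  have hsub : (X * P k - P (k + 1)).degree < ((k + 1 : ℕ) : WithBot ℕ) := by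
    have := degree_sub_lt (p := X * P k) (q := P (k + 1))
      (by rw [degree_eq_natDegree hmX.ne_zero, hndX, degP P hmonic hdeg (k + 1)])
      hmX.ne_zero
      (by rw [hmX.leadingCoeff, (hmonic (k + 1)).leadingCoeff])
    rwa [degree_eq_natDegree hmX.ne_zero, hndX] at this
  have e : (X * P k) * P (k + 1) =
      P (k + 1) * P (k + 1) + (X * P k - P (k + 1)) * P (k + 1) := by ring
  rw [e, K_add, orthK t P hmonic hdeg horthK _ (k + 1) hsub, add_zero]

lemma recP (hmonic : ∀ n, (P n).Monic) (hdeg : ∀ n, (P n).natDegree = n)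
    (horthK : ∀ j k, j ≠ k → K t (P j * P k) = 0)
    (h : ℕ → ℝ) (hKh : ∀ n, K t (P n * P n) = h n) (hpos : ∀ n, 0 < h n)
    (β : ℕ → ℝ) (hβ0 : β 0 = 0) (hβ : ∀ n, β (n + 1) = h (n + 1) / h n) (m : ℕ) :
    X * P m = P (m + 1) + C (β m) * P (m - 1) := by
  set R := X * P m - (P (m + 1) + C (β m) * P (m - 1)) with hR
  have hmX : (X * P m).Monic := monic_X.mul (hmonic m)
  have hndX : (X * P m).natDegree = m + 1 := by
    rw [natDegree_mul X_ne_zero (hmonic m).ne_zero, natDegree_X, hdeg m, add_comm]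
  have hdeg1 : (X * P m - P (m + 1)).degree < ((m + 1 : ℕ) : WithBot ℕ) := by
    have := degree_sub_lt (p := X * P m) (q := P (m + 1))
      (by rw [degree_eq_natDegree hmX.ne_zero, hndX, degP P hmonic hdeg (m + 1)])
      hmX.ne_zero
      (by rw [hmX.leadingCoeff, (hmonic (m + 1)).leadingCoeff])
    rwa [degree_eq_natDegree hmX.ne_zero, hndX] at this
  have hdeg2 : (C (β m) * P (m - 1)).degree < ((m + 1 : ℕ) : WithBot ℕ) := by
    by_cases hb : β m = 0
    · rw [hb, map_zero, zero_mul, degree_zero]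
      exact WithBot.bot_lt_coe _
    · rw [degree_C_mul hb, degP P hmonic hdeg (m - 1)]
      exact_mod_cast Nat.lt_succ_of_le (Nat.sub_le m 1)
  have hRdeg : R.degree < ((m + 1 : ℕ) : WithBot ℕ) := by
    have : R = (X * P m - P (m + 1)) - C (β m) * P (m - 1) := by rw [hR]; ring
    rw [this]
    exact lt_of_le_of_lt (degree_sub_le _ _) (max_lt hdeg1 hdeg2)
  have horthR : ∀ k, k < m + 1 → K t (R * P k) = 0 := by
    intro k hk
    have eR : R * P k = (X * P m) * P k - P (m + 1) * P k - C (β m) * (P (m - 1) * P k) := by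
      rw [hR]; ring
    rw [eR, K_sub, K_sub, K_Cmul, horthK (m + 1) k (by omega)]
    by_cases hkm : k = m
    · subst hkm
      have e1 : (X * P k) * P k = X * (P k * P k) := by ring
      rw [e1, oddK t P hmonic hdeg horthK k]
      by_cases hm0 : k = 0
      · subst hm0; rw [hβ0]; ring
      · rw [horthK (k - 1) k (by omega)]; ring
    · have hklt : k < m := by omega
      by_cases hk1 : k + 1 = m
      · subst hk1
        have e1 : (X * P (k + 1)) * P k = (X * P k) * P (k + 1) := by ring
        rw [e1, stepK t P hmonic hdeg horthK k]
        have e2 : (k + 1 : ℕ) - 1 = k := by omega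
        rw [e2, hKh, hKh]
        have := hβ k
        rw [this]
        field_simp [(hpos k).ne']
        ring
      · have e1 : (X * P m) * P k = (X * P k) * P m := by ring
        have hdX : (X * P k).degree < ((m : ℕ) : WithBot ℕ) := by
          have hmXk : (X * P k).Monic := monic_X.mul (hmonic k)
          have hndXk : (X * P k).natDegree = k + 1 := by
            rw [natDegree_mul X_ne_zero (hmonic k).ne_zero, natDegree_X, hdeg k, add_comm]
          rw [degree_eq_natDegree hmXk.ne_zero, hndXk]
          exact_mod_cast (by omega : k + 1 < m)
        rw [e1, orthK t P hmonic hdeg horthK _ m hdX,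
          horthK (m - 1) k (by omega)]
        ring
  have hR0 : R = 0 := zero_of_orthK t P hmonic hdeg horthK R (m + 1) hRdeg horthR
  exact sub_eq_zero.mp hR0

lemma key (hmonic : ∀ n, (P n).Monic) (hdeg : ∀ n, (P n).natDegree = n)
    (horthK : ∀ j k, j ≠ k → K t (P j * P k) = 0)
    (h : ℕ → ℝ) (hKh : ∀ n, K t (P n * P n) = h n) (hpos : ∀ n, 0 < h n)
    (β : ℕ → ℝ) (hβ0 : β 0 = 0) (hβ : ∀ n, β (n + 1) = h (n + 1) / h n) (m : ℕ) :
    4 * β (m + 1) * (β m + β (m + 1) + β (m + 2) - t / 2) = (m + 1 : ℕ) := by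
  have A1 := recP t P hmonic hdeg horthK h hKh hpos β hβ0 hβ m
  have A2 := recP t P hmonic hdeg horthK h hKh hpos β hβ0 hβ (m + 1)
  have A3 := recP t P hmonic hdeg horthK h hKh hpos β hβ0 hβ (m + 2)
  simp only [Nat.add_sub_cancel, show m + 1 + 1 = m + 2 from by omega,
    show m + 2 + 1 = m + 3 from by omega, show m + 2 - 1 = m + 1 from by omega] at A2 A3
  -- A2 : X * P (m+1) = P (m+2) + C (β (m+1)) * P m
  -- A3 : X * P (m+2) = P (m+3) + C (β (m+2)) * P (m+1)
  have bigeq : X ^ 3 * (P m * P (m + 1)) =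
      P (m + 1) * P (m + 3)
      + C (β (m + 2) + β (m + 1)) * (P (m + 1) * P (m + 1))
      + C (β (m + 1) * β m + (β m * β (m + 2) + β m * β (m + 1))) * (P (m + 1) * P (m - 1))
      + C (β m) * (P (m - 1) * P (m + 3))
      + C (β m * (β (m + 1) * β m)) * (P (m - 1) * P (m - 1)) := by
    calc X ^ 3 * (P m * P (m + 1)) = (X * P m) * (X * (X * P (m + 1))) := by ring
      _ = (X * P m) * (X * (P (m + 2) + C (β (m + 1)) * P m)) := by rw [A2]
      _ = (X * P m) * ((X * P (m + 2)) + C (β (m + 1)) * (X * P m)) := by ring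
      _ = (X * P m) * ((P (m + 3) + C (β (m + 2)) * P (m + 1))
            + C (β (m + 1)) * (X * P m)) := by rw [A3]
      _ = (P (m + 1) + C (β m) * P (m - 1)) * ((P (m + 3) + C (β (m + 2)) * P (m + 1))
            + C (β (m + 1)) * (P (m + 1) + C (β m) * P (m - 1))) := by rw [A1]
      _ = _ := by simp only [C_add, C_mul]; ring
  have smalleq : X * (P m * P (m + 1)) =
      P (m + 1) * P (m + 1) + C (β m) * (P (m - 1) * P (m + 1)) := by
    calc X * (P m * P (m + 1)) = (X * P m) * P (m + 1) := by ring
      _ = (P (m + 1) + C (β m) * P (m - 1)) * P (m + 1) := by rw [A1]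
      _ = _ := by ring
  have D2 : K t (derivative (P m) * P (m + 1)) = 0 := by
    refine orthK t P hmonic hdeg horthK _ (m + 1) ?_
    refine lt_of_le_of_lt degree_derivative_le ?_
    rw [degP P hmonic hdeg m]
    exact_mod_cast Nat.lt_succ_self m
  have D1 : K t (P m * derivative (P (m + 1))) = ((m : ℝ) + 1) * h m := by
    set q0 : Polynomial ℝ := derivative (P (m + 1)) - C ((m : ℝ) + 1) * P m with hq0
    have hcoeff : q0.coeff m = 0 := by
      rw [hq0, coeff_sub, coeff_derivative, coeff_C_mul]
      have c1 : (P (m + 1)).coeff (m + 1) = 1 := by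
        have := (hmonic (m + 1)).coeff_natDegree
        rwa [hdeg (m + 1)] at this
      have c2 : (P m).coeff m = 1 := by
        have := (hmonic m).coeff_natDegree
        rwa [hdeg m] at this
      rw [c1, c2]
      push_cast
      ring
    have hq0deg : q0.degree < ((m : ℕ) : WithBot ℕ) := by
      by_cases hz : q0 = 0
      · rw [hz, degree_zero]; exact WithBot.bot_lt_coe _
      · rw [← natDegree_lt_iff_degree_lt hz]
        have hle : q0.natDegree ≤ m := by
          refine le_trans (natDegree_sub_le _ _) (max_le ?_ ?_)
          · exact le_trans (natDegree_derivative_le _) (by rw [hdeg (m + 1)]; omega)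
          · rw [natDegree_C_mul (by positivity : ((m : ℝ) + 1) ≠ 0), hdeg m]
        have hne : q0.natDegree ≠ m := by
          intro hEq
          have := leadingCoeff_ne_zero.mpr hz
          rw [leadingCoeff, hEq, hcoeff] at this
          exact this rfl
        omega
    have e : P m * derivative (P (m + 1)) =
        q0 * P m + C ((m : ℝ) + 1) * (P m * P m) := by
      rw [hq0]; ring
    rw [e, K_add, K_Cmul, orthK t P hmonic hdeg horthK q0 m hq0deg, hKh, zero_add]
  have hKder : K t (derivative (P m * P (m + 1))) = ((m : ℝ) + 1) * h m := by
    rw [derivative_mul, K_add, D2, D1, zero_add]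
  have T1 : K t (X * (P m * P (m + 1))) = h (m + 1) := by
    rw [smalleq, K_add, K_Cmul, horthK (m - 1) (m + 1) (by omega), hKh, mul_zero, add_zero]
  have T3 : K t (X ^ 3 * (P m * P (m + 1))) =
      (β (m + 2) + β (m + 1)) * h (m + 1) + β m * (β (m + 1) * β m) * h (m - 1) := by
    rw [bigeq, K_add, K_add, K_add, K_add, K_Cmul, K_Cmul, K_Cmul, K_Cmul,
      horthK (m + 1) (m + 3) (by omega), horthK (m + 1) (m - 1) (by omega),
      horthK (m - 1) (m + 3) (by omega), hKh, hKh]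
    ring
  have hb1 : ∀ j, h (j + 1) = β (j + 1) * h j := by
    intro j
    rw [hβ j]
    field_simp [(hpos j).ne']
  have hβsq : β m * β m * h (m - 1) = β m * h m := by
    cases m with
    | zero => rw [hβ0]; ring
    | succ s =>
      have e : (s + 1 : ℕ) - 1 = s := by omega
      rw [e]
      have hs := hb1 s
      linear_combination (-(β (s + 1))) * hs
  have e5 : β m * (β (m + 1) * β m) * h (m - 1) = β m * h (m + 1) := by
    have h1 := hβsq
    have h2 := hb1 m
    linear_combination β (m + 1) * h1 - β m * h2
  have H := ibpK t (P m * P (m + 1))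
  rw [hKder, T1, T3, e5] at H
  rw [hb1 m] at H
  push_cast
  apply mul_right_cancel₀ (hpos m).ne'
  linear_combination -H

end Orthogonal

end FreudAux

open FreudAux in
theorem stmt14 (t : ℝ) (P : ℕ → Polynomial ℝ)
    (hmonic : ∀ n, (P n).Monic) (hdeg : ∀ n, (P n).natDegree = n)
    (horth : ∀ j k, j ≠ k →
      ∫ x : ℝ, (P j).eval x * (P k).eval x * Real.exp (-x ^ 4 + t * x ^ 2) = 0)
    (h : ℕ → ℝ) (hh : ∀ n, h n = ∫ x : ℝ, ((P n).eval x) ^ 2 * Real.exp (-x ^ 4 + t * x ^ 2))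
    (β : ℕ → ℝ) (hβ0 : β 0 = 0) (hβ : ∀ n, β (n + 1) = h (n + 1) / h n)
    (n : ℕ) (hn : 1 ≤ n) :
    4 * β n * (β (n - 1) + β n + β (n + 1) - t / 2) = n := by
  obtain ⟨m, rfl⟩ : ∃ m, n = m + 1 := ⟨n - 1, (Nat.succ_pred_eq_of_pos hn).symm⟩
  have horthK : ∀ j k, j ≠ k → K t (P j * P k) = 0 := by
    intro j k hjk
    rw [K, ← horth j k hjk]
    congr 1; funext x; rw [Polynomial.eval_mul]
  have hKh : ∀ n, K t (P n * P n) = h n := by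
    intro n
    rw [hh n, K]
    congr 1; funext x; rw [Polynomial.eval_mul]; ring
  have hpos : ∀ n, 0 < h n := by
    intro n
    rw [← hKh n]
    exact K_self_pos t (P n) (hmonic n).ne_zero
  have := key t P hmonic hdeg horthK h hKh hpos β hβ0 hβ m
  simpa using this
end

section
/- For the Freud weight w(x;t) = exp(−x⁴ + t x²) with t ∈ ℝ, the nontrivial leading coefficient is expressed in terms of the recurrence coefficients: for every n ≥ 1, p(n,t) = (1/2)β_n(t) + t β_n(t)² − 2 β_n(t)(β_{n−1}(t) + β_n(t))(β_n(t) + β_{n+1}(t)). -/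
open MeasureTheory Real Filter Polynomial Set

noncomputable def Jint (t : ℝ) (q : Polynomial ℝ) : ℝ :=
  ∫ x : ℝ, q.eval x * Real.exp (-x ^ 4 + t * x ^ 2)

lemma cont_qw (t : ℝ) (q : Polynomial ℝ) :
    Continuous (fun x : ℝ => q.eval x * Real.exp (-x ^ 4 + t * x ^ 2)) := by
  fun_prop

lemma ev_bound (t : ℝ) (q : Polynomial ℝ) :
    ∀ᶠ x : ℝ in atTop, |q.eval x * Real.exp (-x ^ 4 + t * x ^ 2)| ≤ Real.exp (-x) := by
  have h1 : ∀ᶠ x : ℝ in atTop, |t| + 2 ≤ x := eventually_ge_atTop _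
  have h2 : Tendsto (fun x : ℝ => |q.eval x / Real.exp x|) atTop (nhds 0) := by
    simpa using (q.tendsto_div_exp_atTop).abs
  have h3 : ∀ᶠ x : ℝ in atTop, |q.eval x / Real.exp x| ≤ 1 :=
    (h2.eventually (eventually_le_nhds (by norm_num : (0:ℝ) < 1)))
  filter_upwards [h1, h3] with x hx hq
  have hx2 : (2:ℝ) * x ≤ x ^ 4 - t * x ^ 2 := by
    nlinarith [abs_nonneg t, le_abs_self t, neg_abs_le t, sq_nonneg x, sq_nonneg (x - 1),
      sq_nonneg (x*x - x)]
  have : Real.exp (-x ^ 4 + t * x ^ 2) ≤ Real.exp (-(2*x)) := by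
    apply Real.exp_le_exp.2; linarith
  have hq' : |q.eval x| ≤ Real.exp x := by
    rw [abs_div, div_le_one (by positivity)] at hq
    simpa [Real.abs_exp] using hq
  rw [abs_mul, Real.abs_exp]
  calc |q.eval x| * Real.exp (-x ^ 4 + t * x ^ 2) ≤ Real.exp x * Real.exp (-(2*x)) := by
        apply mul_le_mul hq' this (by positivity) (by positivity)
    _ = Real.exp (-x) := by rw [← Real.exp_add]; ring_nf

lemma tendsto_qw_top (t : ℝ) (q : Polynomial ℝ) :
    Tendsto (fun x : ℝ => q.eval x * Real.exp (-x ^ 4 + t * x ^ 2)) atTop (nhds 0) := by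
  apply squeeze_zero_norm' ?_
  · simpa using Real.tendsto_exp_atBot.comp tendsto_neg_atTop_atBot
  · filter_upwards [ev_bound t q] with x hx
    rw [Real.norm_eq_abs]
    exact hx

lemma integrableOn_qw_Ioi (t : ℝ) (q : Polynomial ℝ) :
    IntegrableOn (fun x : ℝ => q.eval x * Real.exp (-x ^ 4 + t * x ^ 2)) (Ioi 0) := by
  apply integrable_of_isBigO_exp_neg (one_pos) ((cont_qw t q).continuousOn)
  rw [Asymptotics.isBigO_iff]
  refine ⟨1, ?_⟩
  filter_upwards [ev_bound t q] with x hx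
  rw [Real.norm_eq_abs, Real.norm_eq_abs, Real.abs_exp]
  calc |eval x q * rexp (-x ^ 4 + t * x ^ 2)| ≤ rexp (-x) := hx
    _ ≤ 1 * rexp (-1 * x) := by rw [one_mul, neg_one_mul]

lemma qw_neg (t : ℝ) (q : Polynomial ℝ) (x : ℝ) :
    q.eval (-x) * Real.exp (-(-x) ^ 4 + t * (-x) ^ 2)
      = (q.comp (-X)).eval x * Real.exp (-x ^ 4 + t * x ^ 2) := by
  have : (-x) ^ 4 = x ^ 4 := by ring
  simp [Polynomial.eval_comp, this]

lemma integrable_qw (t : ℝ) (q : Polynomial ℝ) :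
    Integrable (fun x : ℝ => q.eval x * Real.exp (-x ^ 4 + t * x ^ 2)) := by
  rw [← integrableOn_univ, ← Set.Iic_union_Ioi (a := (0:ℝ)), integrableOn_union]
  refine ⟨?_, integrableOn_qw_Ioi t q⟩
  rw [← (Measure.measurePreserving_neg (volume : Measure ℝ)).integrableOn_comp_preimage
      (Homeomorph.neg ℝ).measurableEmbedding]
  simp only [Function.comp_def, neg_preimage, neg_Iic, neg_zero]
  have : EqOn (fun x : ℝ => q.eval (-x) * Real.exp (-(-x) ^ 4 + t * (-x) ^ 2))
      (fun x : ℝ => (q.comp (-X)).eval x * Real.exp (-x ^ 4 + t * x ^ 2)) (Ici 0) := by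
    intro x _; exact qw_neg t q x
  refine IntegrableOn.congr_fun ?_ this.symm measurableSet_Ici
  rw [integrableOn_Ici_iff_integrableOn_Ioi]
  exact integrableOn_qw_Ioi t (q.comp (-X))

lemma tendsto_qw_bot (t : ℝ) (q : Polynomial ℝ) :
    Tendsto (fun x : ℝ => q.eval x * Real.exp (-x ^ 4 + t * x ^ 2)) atBot (nhds 0) := by
  have h := (tendsto_qw_top t (q.comp (-X))).comp tendsto_neg_atBot_atTop
  refine h.congr fun x => ?_
  simpa using (qw_neg t q (-x)).symm

lemma J_add (t : ℝ) (q r : Polynomial ℝ) : Jint t (q + r) = Jint t q + Jint t r := by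
  unfold Jint
  rw [← integral_add (integrable_qw t q) (integrable_qw t r)]
  congr 1; funext x; simp [add_mul]

lemma J_Cmul (t : ℝ) (c : ℝ) (q : Polynomial ℝ) : Jint t (C c * q) = c * Jint t q := by
  unfold Jint
  rw [← integral_const_mul]
  congr 1; funext x; simp [mul_assoc]

lemma J_zero (t : ℝ) : Jint t 0 = 0 := by unfold Jint; simp

lemma J_neg (t : ℝ) (q : Polynomial ℝ) : Jint t (-q) = - Jint t q := by
  have := J_Cmul t (-1) q; simpa using this

lemma J_sub (t : ℝ) (q r : Polynomial ℝ) : Jint t (q - r) = Jint t q - Jint t r := by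
  rw [sub_eq_add_neg, J_add, J_neg]; ring

lemma J_comp_neg (t : ℝ) (q : Polynomial ℝ) : Jint t (q.comp (-X)) = Jint t q := by
  unfold Jint
  rw [← integral_neg_eq_self (fun x => q.eval x * Real.exp (-x ^ 4 + t * x ^ 2)) volume]
  congr 1; funext x
  exact (qw_neg t q x).symm

lemma J_odd (t : ℝ) (q : Polynomial ℝ) (hq : q.comp (-X) = -q) : Jint t q = 0 := by
  have := J_comp_neg t q
  rw [hq, J_neg] at this
  linarith

lemma J_IBP (t : ℝ) (q : Polynomial ℝ) :
    Jint t (derivative q + q * (C (2 * t) * X - C 4 * X ^ 3)) = 0 := by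
  set f : ℝ → ℝ := fun x => q.eval x * Real.exp (-x ^ 4 + t * x ^ 2) with hf
  set Dq : Polynomial ℝ := derivative q + q * (C (2 * t) * X - C 4 * X ^ 3) with hDq
  have hderiv : ∀ x : ℝ, HasDerivAt f (Dq.eval x * Real.exp (-x ^ 4 + t * x ^ 2)) x := by
    intro x
    have h1 : HasDerivAt (fun x : ℝ => q.eval x) (q.derivative.eval x) x := q.hasDerivAt x
    have h2 : HasDerivAt (fun x : ℝ => Real.exp (-x ^ 4 + t * x ^ 2))
        ((-(4 * x ^ 3) + t * (2 * x)) * Real.exp (-x ^ 4 + t * x ^ 2)) x := by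
      have : HasDerivAt (fun x : ℝ => -x ^ 4 + t * x ^ 2) (-(4 * x ^ 3) + t * (2 * x)) x := by
        have ha : HasDerivAt (fun x : ℝ => x ^ 4) (4 * x ^ 3) x := by
          simpa using hasDerivAt_pow 4 x
        have hb : HasDerivAt (fun x : ℝ => x ^ 2) (2 * x) x := by
          simpa using hasDerivAt_pow 2 x
        exact ha.neg.add (hb.const_mul t)
      simpa [mul_comm] using this.exp
    have := h1.mul h2
    refine this.congr_deriv ?_
    simp [hDq]
    ring
  have hint : Integrable (fun x : ℝ => Dq.eval x * Real.exp (-x ^ 4 + t * x ^ 2)) :=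
    integrable_qw t Dq
  have htop : Tendsto f atTop (nhds 0) := tendsto_qw_top t q
  have hbot : Tendsto f atBot (nhds 0) := tendsto_qw_bot t q
  have hIic : ∫ x in Iic (0:ℝ), Dq.eval x * Real.exp (-x ^ 4 + t * x ^ 2) = f 0 - 0 :=
    integral_Iic_of_hasDerivAt_of_tendsto' (fun x _ => hderiv x) hint.integrableOn hbot
  have hIoi : ∫ x in Ioi (0:ℝ), Dq.eval x * Real.exp (-x ^ 4 + t * x ^ 2) = 0 - f 0 :=
    integral_Ioi_of_hasDerivAt_of_tendsto' (fun x _ => hderiv x) hint.integrableOn htop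
  have := intervalIntegral.integral_Iic_add_Ioi (b := (0:ℝ)) (hint.integrableOn) (hint.integrableOn)
  unfold Jint
  rw [← this, hIic, hIoi]
  ring

lemma J_sq_pos (t : ℝ) (q : Polynomial ℝ) (hq : q ≠ 0) : 0 < Jint t (q * q) := by
  unfold Jint
  have hnn : (0:ℝ → ℝ) ≤ fun x => (q * q).eval x * Real.exp (-x ^ 4 + t * x ^ 2) := by
    intro x; simp only [Polynomial.eval_mul, Pi.zero_apply]
    exact mul_nonneg (mul_self_nonneg _) (Real.exp_pos _).le
  rw [integral_pos_iff_support_of_nonneg hnn (integrable_qw t (q * q))]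
  have hsub : {x : ℝ | ¬ q.IsRoot x} ⊆ Function.support
      (fun x => (q * q).eval x * Real.exp (-x ^ 4 + t * x ^ 2)) := by
    intro x hx
    simp only [Function.mem_support, Polynomial.eval_mul]
    have hqx : q.eval x ≠ 0 := hx
    have := Real.exp_pos (-x ^ 4 + t * x ^ 2)
    intro hcon
    rcases mul_eq_zero.1 hcon with h | h
    · exact hqx (by nlinarith [mul_self_nonneg (q.eval x)])
    · exact this.ne' h
  have hroots : volume {x : ℝ | q.IsRoot x} = 0 :=
    (Polynomial.finite_setOf_isRoot hq).measure_zero volume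
  have : volume {x : ℝ | ¬ q.IsRoot x} = ⊤ := by
    by_contra hne
    have h1 : volume (Set.univ : Set ℝ) ≤ volume {x : ℝ | q.IsRoot x}
        + volume {x : ℝ | ¬ q.IsRoot x} := by
      rw [show (Set.univ : Set ℝ) = {x : ℝ | q.IsRoot x} ∪ {x : ℝ | ¬ q.IsRoot x} by
        ext x; simp [em]]
      exact measure_union_le _ _
    rw [hroots, zero_add, Real.volume_univ] at h1
    exact hne (top_le_iff.mp h1)
  calc (0 : ENNReal) < ⊤ := by simp
    _ = volume {x : ℝ | ¬ q.IsRoot x} := this.symm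
    _ ≤ _ := measure_mono hsub

section Ortho

variable {t : ℝ} {P : ℕ → Polynomial ℝ} {h : ℕ → ℝ}

lemma J_base (hm : ∀ n, (P n).Monic) (hd : ∀ n, (P n).natDegree = n)
    (ho : ∀ j k, j ≠ k → Jint t (P j * P k) = 0)
    (hhJ : ∀ n, h n = Jint t (P n * P n)) :
    ∀ m e, e ≤ m → Jint t (P m * P e) = (P e).coeff m * h m := by
  intro m e he
  rcases eq_or_lt_of_le he with rfl | hlt
  · have h1 : (P e).coeff e = 1 := by
      have := (hm e).coeff_natDegree
      rwa [hd e] at this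
    rw [h1, one_mul, hhJ e]
  · rw [ho m e (by omega)]
    have : (P e).coeff m = 0 := by
      apply Polynomial.coeff_eq_zero_of_natDegree_lt
      rw [hd e]; exact hlt
    rw [this, zero_mul]

lemma J_expand (hm : ∀ n, (P n).Monic) (hd : ∀ n, (P n).natDegree = n)
    (ho : ∀ j k, j ≠ k → Jint t (P j * P k) = 0)
    (hhJ : ∀ n, h n = Jint t (P n * P n)) :
    ∀ (d : ℕ) (m : ℕ) (q : Polynomial ℝ), q.natDegree ≤ d → q.natDegree ≤ m →
      Jint t (P m * q) = q.coeff m * h m := by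
  intro d
  induction d using Nat.strong_induction_on with
  | _ d ih =>
    intro m q hqd hqm
    by_cases hq : q = 0
    · simp [hq, J_zero]
    set e := q.natDegree with he
    set c := q.coeff e with hc
    set q' := q - C c * P e with hq'
    have hPe1 : (P e).coeff e = 1 := by
      have := (hm e).coeff_natDegree; rwa [hd e] at this
    have hq'coeff : ∀ k, q'.coeff k = q.coeff k - c * (P e).coeff k := by
      intro k; simp [hq', Polynomial.coeff_sub, Polynomial.coeff_C_mul]
    have hq'e : q'.coeff e = 0 := by rw [hq'coeff, hPe1]; ring
    have hdeg' : q'.natDegree ≤ e := by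
      apply le_trans (Polynomial.natDegree_sub_le _ _)
      simp only [max_le_iff]
      exact ⟨le_rfl, le_trans (Polynomial.natDegree_C_mul_le _ _) (le_of_eq (hd e))⟩
    have Jq' : Jint t (P m * q') = q'.coeff m * h m := by
      rcases eq_or_ne q' 0 with h0 | h0
      · simp [h0, J_zero]
      · have hlt : q'.natDegree < e := by
          rcases lt_or_eq_of_le hdeg' with hlt | heq
          · exact hlt
          · exfalso
            have := Polynomial.leadingCoeff_ne_zero.mpr h0
            rw [Polynomial.leadingCoeff, heq] at this
            exact this hq'e
        exact ih q'.natDegree (lt_of_lt_of_le hlt hqd) m q' le_rfl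
          (le_trans (le_of_lt hlt) hqm)
    have hsplit : q = C c * P e + q' := by rw [hq']; ring
    calc Jint t (P m * q) = Jint t (C c * (P m * P e) + P m * q') := by
          rw [hsplit]; ring_nf
      _ = c * Jint t (P m * P e) + Jint t (P m * q') := by rw [J_add, J_Cmul]
      _ = c * ((P e).coeff m * h m) + q'.coeff m * h m := by
          rw [J_base hm hd ho hhJ m e (le_trans (le_of_eq he.symm) hqm), Jq']
      _ = q.coeff m * h m := by
          rw [hq'coeff m]; ring

lemma J_expand' (hm : ∀ n, (P n).Monic) (hd : ∀ n, (P n).natDegree = n)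
    (ho : ∀ j k, j ≠ k → Jint t (P j * P k) = 0)
    (hhJ : ∀ n, h n = Jint t (P n * P n)) (m : ℕ) (q : Polynomial ℝ) (hqm : q.natDegree ≤ m) :
    Jint t (P m * q) = q.coeff m * h m :=
  J_expand hm hd ho hhJ q.natDegree m q le_rfl hqm

lemma J_span (hm : ∀ n, (P n).Monic) (hd : ∀ n, (P n).natDegree = n) :
    ∀ (d : ℕ) (q r : Polynomial ℝ), q.natDegree ≤ d →
      (∀ k, k ≤ d → Jint t (P k * r) = 0) → Jint t (q * r) = 0 := by
  intro d
  induction d using Nat.strong_induction_on with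
  | _ d ih =>
    intro q r hqd hr
    by_cases hq : q = 0
    · simp [hq, J_zero]
    set e := q.natDegree with he
    set c := q.coeff e with hc
    set q' := q - C c * P e with hq'
    have hPe1 : (P e).coeff e = 1 := by
      have := (hm e).coeff_natDegree; rwa [hd e] at this
    have hq'e : q'.coeff e = 0 := by
      simp [hq', Polynomial.coeff_sub, Polynomial.coeff_C_mul, hPe1, hc]
    have hdeg' : q'.natDegree ≤ e := by
      apply le_trans (Polynomial.natDegree_sub_le _ _)
      simp only [max_le_iff]
      exact ⟨le_rfl, le_trans (Polynomial.natDegree_C_mul_le _ _) (le_of_eq (hd e))⟩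
    have Jq' : Jint t (q' * r) = 0 := by
      rcases eq_or_ne q' 0 with h0 | h0
      · simp [h0, J_zero]
      · have hlt : q'.natDegree < e := by
          rcases lt_or_eq_of_le hdeg' with hlt | heq
          · exact hlt
          · exfalso
            have := Polynomial.leadingCoeff_ne_zero.mpr h0
            rw [Polynomial.leadingCoeff, heq] at this
            exact this hq'e
        exact ih q'.natDegree (lt_of_lt_of_le hlt hqd) q' r le_rfl
          (fun k hk => hr k (le_trans hk (le_trans (Nat.le_of_lt_succ (Nat.lt_succ_of_lt hlt)) hqd)))
    calc Jint t (q * r) = Jint t (C c * (P e * r) + q' * r) := by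
          rw [show q = C c * P e + q' by rw [hq']; ring]; ring_nf
      _ = c * Jint t (P e * r) + Jint t (q' * r) := by rw [J_add, J_Cmul]
      _ = 0 := by rw [hr e (le_trans (le_of_eq he.symm) hqd), Jq']; ring

lemma J_eq_zero_poly (hm : ∀ n, (P n).Monic) (hd : ∀ n, (P n).natDegree = n)
    (d : ℕ) (s : Polynomial ℝ) (hs : s.natDegree ≤ d)
    (hzero : ∀ k, k ≤ d → Jint t (P k * s) = 0) : s = 0 := by
  by_contra h0
  have := J_sq_pos t s h0
  rw [J_span hm hd d s s hs hzero] at this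
  exact lt_irrefl 0 this

end Ortho

lemma natDeg_step (s : Polynomial ℝ) (n : ℕ) (h1 : s.natDegree ≤ n) (h2 : s.coeff n = 0) :
    s.natDegree ≤ n - 1 := by
  rcases eq_or_ne s 0 with rfl | h0
  · simp
  rcases lt_or_eq_of_le h1 with hlt | heq
  · omega
  · exfalso
    have := Polynomial.leadingCoeff_ne_zero.mpr h0
    rw [Polynomial.leadingCoeff, heq] at this
    exact this h2

section Ortho2

variable {t : ℝ} {P : ℕ → Polynomial ℝ} {h : ℕ → ℝ}
variable (hm : ∀ n, (P n).Monic) (hd : ∀ n, (P n).natDegree = n)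
variable (ho : ∀ j k, j ≠ k → Jint t (P j * P k) = 0)
variable (hhJ : ∀ n, h n = Jint t (P n * P n))

include hm hd ho hhJ

lemma hpos : ∀ n, 0 < h n := fun n => (hhJ n) ▸ J_sq_pos t (P n) (hm n).ne_zero

omit ho hhJ in
lemma hP0 : P 0 = 1 := (hm 0).natDegree_eq_zero.mp (hd 0)

lemma parity : ∀ n, (P n).comp (-X) = C ((-1:ℝ)^n) * P n := by
  intro n
  rcases Nat.eq_zero_or_pos n with rfl | hn
  · rw [hP0 hm hd]; simp
  set Q := C ((-1:ℝ)^n) * (P n).comp (-X) with hQ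
  have hcompdeg : ((P n).comp (-X)).natDegree = n := by
    rw [Polynomial.natDegree_comp]
    simp [hd n]
  have hcomplead : ((P n).comp (-X)).coeff n = (-1:ℝ)^n := by
    have h1 : ((P n).comp (-X)).leadingCoeff = (P n).leadingCoeff * (-X : Polynomial ℝ).leadingCoeff ^ (P n).natDegree := by
      apply Polynomial.leadingCoeff_comp
      simp
    rw [Polynomial.leadingCoeff, hcompdeg] at h1
    rw [h1, (hm n).leadingCoeff, hd n]
    simp
  set s := P n - Q with hs
  have hscoeff : s.coeff n = 0 := by
    have : (P n).coeff n = 1 := by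
      have := (hm n).coeff_natDegree; rwa [hd n] at this
    rw [hs, Polynomial.coeff_sub, hQ, Polynomial.coeff_C_mul, hcomplead, this]
    rw [← pow_add, show n + n = 2 * n by ring, pow_mul]
    norm_num
  have hsdeg : s.natDegree ≤ n - 1 := by
    apply natDeg_step _ _ _ hscoeff
    apply le_trans (Polynomial.natDegree_sub_le _ _)
    simp only [max_le_iff]
    constructor
    · exact le_of_eq (hd n)
    · exact le_trans (Polynomial.natDegree_C_mul_le _ _) (le_of_eq hcompdeg)
  have hzero : ∀ k, k ≤ n - 1 → Jint t (P k * s) = 0 := by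
    intro k hk
    have hkn : k ≠ n := by omega
    have hterm1 : Jint t (P k * P n) = 0 := ho k n hkn
    have hterm2 : Jint t (P k * (P n).comp (-X)) = 0 := by
      rw [← J_comp_neg t (P k * (P n).comp (-X))]
      have : (P k * (P n).comp (-X)).comp (-X) = (P n) * ((P k).comp (-X)) := by
        rw [Polynomial.mul_comp, Polynomial.comp_assoc]
        simp [mul_comm]
      rw [this]
      rw [J_expand' hm hd ho hhJ n ((P k).comp (-X)) ?_]
      · have : ((P k).comp (-X)).coeff n = 0 := by
          apply Polynomial.coeff_eq_zero_of_natDegree_lt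
          rw [Polynomial.natDegree_comp]
          simp only [Polynomial.natDegree_neg, Polynomial.natDegree_X, mul_one, hd k]
          omega
        rw [this, zero_mul]
      · rw [Polynomial.natDegree_comp]
        simp only [Polynomial.natDegree_neg, Polynomial.natDegree_X, mul_one, hd k]
        omega
    have : P k * s = P k * P n - C ((-1:ℝ)^n) * (P k * (P n).comp (-X)) := by
      rw [hs, hQ]; ring
    rw [this, J_sub, J_Cmul, hterm1, hterm2]
    ring
  have hs0 : s = 0 := J_eq_zero_poly hm hd (n-1) s hsdeg hzero
  have hPQ : P n = Q := by
    have := sub_eq_zero.mp hs0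
    exact this
  rw [hQ] at hPQ
  have : C ((-1:ℝ)^n) * P n = C ((-1:ℝ)^n) * (C ((-1:ℝ)^n) * (P n).comp (-X)) := by
    rw [← hPQ]
  rw [this, ← mul_assoc, ← Polynomial.C_mul, ← pow_add]
  rw [show n + n = 2 * n by ring, pow_mul]
  norm_num

lemma J_odd_PP : ∀ n, Jint t (X * (P n * P n)) = 0 := by
  intro n
  apply J_odd
  rw [Polynomial.mul_comp, Polynomial.mul_comp, parity hm hd ho hhJ, Polynomial.X_comp]
  have ha : (C ((-1:ℝ)^n)) * (C ((-1:ℝ)^n)) = 1 := by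
    rw [← Polynomial.C_mul, ← pow_add, show n + n = 2 * n by ring, pow_mul]
    norm_num
  linear_combination (-X * P n * P n : Polynomial ℝ) * ha

lemma hP1 : P 1 = X := by
  have hform : P 1 = C ((P 1).coeff 1) * X + C ((P 1).coeff 0) := by
    apply Polynomial.eq_X_add_C_of_degree_le_one
    have h1 : (P 1).natDegree ≤ 1 := le_of_eq (hd 1)
    exact_mod_cast Polynomial.natDegree_le_iff_degree_le.mp h1
  have hc1 : (P 1).coeff 1 = 1 := by
    have := (hm 1).coeff_natDegree; rwa [hd 1] at this
  rw [hc1, Polynomial.C_1, one_mul] at hform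
  have hJX : Jint t X = 0 := by
    apply J_odd; simp
  have h01 : Jint t (P 0 * P 1) = 0 := ho 0 1 (by omega)
  rw [hP0 hm hd, one_mul, hform, J_add, hJX, zero_add] at h01
  have : Jint t (C ((P 1).coeff 0)) = (P 1).coeff 0 * h 0 := by
    have := J_Cmul t ((P 1).coeff 0) 1
    rw [mul_one] at this
    rw [this]
    have h1 : Jint t 1 = h 0 := by
      rw [hhJ 0, hP0 hm hd, one_mul]
    rw [h1]
  rw [this] at h01
  have hh0 : 0 < h 0 := hpos hm hd ho hhJ 0
  have : (P 1).coeff 0 = 0 := by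
    rcases mul_eq_zero.mp h01 with h | h
    · exact h
    · linarith
  rw [hform, this]
  simp

end Ortho2

section Rec

variable {t : ℝ} {P : ℕ → Polynomial ℝ} {h : ℕ → ℝ} {β : ℕ → ℝ}
variable (hm : ∀ n, (P n).Monic) (hd : ∀ n, (P n).natDegree = n)
variable (ho : ∀ j k, j ≠ k → Jint t (P j * P k) = 0)
variable (hhJ : ∀ n, h n = Jint t (P n * P n))
variable (hβ0 : β 0 = 0) (hβ : ∀ n, β (n + 1) = h (n + 1) / h n)

include hm hd ho hhJ hβ0 hβ

lemma hbh : ∀ n, β (n + 1) * h n = h (n + 1) := by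
  intro n
  rw [hβ n, div_mul_cancel₀]
  exact (hpos hm hd ho hhJ n).ne'

lemma threeterm : ∀ n, X * P n = P (n + 1) + C (β n) * P (n - 1) := by
  intro n
  rcases Nat.eq_zero_or_pos n with rfl | hn
  · rw [hP0 hm hd, hP1 hm hd ho hhJ, hβ0]
    simp
  obtain ⟨m, rfl⟩ : ∃ m, n = m + 1 := ⟨n - 1, by omega⟩
  set n := m + 1
  set s := X * P n - P (n + 1) - C (β n) * P (n - 1) with hs
  have hXPdeg : (X * P n).natDegree = n + 1 := by
    rw [(Polynomial.monic_X).natDegree_mul (hm n)]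
    simp only [Polynomial.natDegree_X, hd n]
    omega
  have hXPcoeff : (X * P n).coeff (n + 1) = 1 := by
    rw [Polynomial.coeff_X_mul]
    have := (hm n).coeff_natDegree; rwa [hd n] at this
  have hsdeg : s.natDegree ≤ n := by
    have hu : (X * P n - P (n + 1)).natDegree ≤ n := by
      apply natDeg_step _ (n + 1)
      · apply le_trans (Polynomial.natDegree_sub_le _ _)
        simp only [max_le_iff]
        exact ⟨le_of_eq hXPdeg, le_of_eq (hd (n + 1))⟩
      · rw [Polynomial.coeff_sub, hXPcoeff]
        have := (hm (n + 1)).coeff_natDegree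
        rw [hd (n + 1)] at this
        rw [this]; ring
    apply le_trans (Polynomial.natDegree_sub_le _ _)
    simp only [max_le_iff]
    refine ⟨hu, le_trans (Polynomial.natDegree_C_mul_le _ _) ?_⟩
    rw [hd]; omega
  have hzero : ∀ k, k ≤ n → Jint t (P k * s) = 0 := by
    intro k hk
    have hsplit : P k * s = (P n * (X * P k) - P k * P (n + 1)) - C (β n) * (P k * P (n - 1)) := by
      rw [hs]; ring
    rw [hsplit, J_sub, J_sub, J_Cmul]
    have hterm2 : Jint t (P k * P (n + 1)) = 0 := ho k (n + 1) (by omega)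
    rcases eq_or_ne k n with rfl | hkn
    · have h1 : P n * (X * P n) = X * (P n * P n) := by ring
      rw [h1, J_odd_PP hm hd ho hhJ, hterm2, ho n (n - 1) (by omega)]
      ring
    · have hkm : k ≤ m := by omega
      have hdegXP : (X * P k).natDegree ≤ n := by
        rw [(Polynomial.monic_X).natDegree_mul (hm k)]
        simp only [Polynomial.natDegree_X, hd k]
        omega
      have hterm1 : Jint t (P n * (X * P k)) = (P k).coeff m * h n := by
        rw [J_expand' hm hd ho hhJ n (X * P k) hdegXP]
        congr 1
        show (X * P k).coeff (m + 1) = (P k).coeff m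
        rw [Polynomial.coeff_X_mul]
      rcases eq_or_ne k m with rfl | hkm'
      · have hc : (P k).coeff k = 1 := by
          have := (hm k).coeff_natDegree; rwa [hd k] at this
        rw [hterm1, hc, hterm2]
        have h3 : Jint t (P k * P (n - 1)) = h k := by
          have : n - 1 = k := by omega
          rw [this, ← hhJ k]
        rw [h3]
        have := hbh hm hd ho hhJ hβ0 hβ k
        rw [show k + 1 = n from rfl] at this
        rw [one_mul]
        linarith
      · have hc : (P k).coeff m = 0 := by
          apply Polynomial.coeff_eq_zero_of_natDegree_lt
          rw [hd k]; omega
        rw [hterm1, hc, hterm2, ho k (n - 1) (by omega)]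
        ring
  have hs0 : s = 0 := J_eq_zero_poly hm hd n s hsdeg hzero
  have : X * P n - P (n + 1) - C (β n) * P (n - 1) = 0 := by rw [← hs]; exact hs0
  linear_combination this

end Rec

section StringEq

variable {t : ℝ} {P : ℕ → Polynomial ℝ} {h : ℕ → ℝ} {β : ℕ → ℝ}
variable (hm : ∀ n, (P n).Monic) (hd : ∀ n, (P n).natDegree = n)
variable (ho : ∀ j k, j ≠ k → Jint t (P j * P k) = 0)
variable (hhJ : ∀ n, h n = Jint t (P n * P n))
variable (hβ0 : β 0 = 0) (hβ : ∀ n, β (n + 1) = h (n + 1) / h n)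

include hm hd ho hhJ hβ0 hβ

lemma rec' : ∀ k, X * P (k + 1) = P (k + 2) + C (β (k + 1)) * P k := by
  intro k
  have := threeterm hm hd ho hhJ hβ0 hβ (k + 1)
  simpa using this

lemma string_gen : ∀ n : ℕ, ((n : ℝ) + 2)
    = 4 * β (n + 2) * (β (n + 1) + β (n + 2) + β (n + 3)) - 2 * t * β (n + 2) := by
  intro n
  set q : Polynomial ℝ := P (n + 2) * P (n + 1) with hq
  have hIBP := J_IBP t q
  rw [J_add] at hIBP
  -- derivative part
  have hder : Jint t (derivative q) = ((n : ℝ) + 2) * h (n + 1) := by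
    rw [hq, Polynomial.derivative_mul, J_add]
    have h1 : Jint t (derivative (P (n + 2)) * P (n + 1)) = ((n : ℝ) + 2) * h (n + 1) := by
      rw [show derivative (P (n + 2)) * P (n + 1) = P (n + 1) * derivative (P (n + 2)) by ring]
      rw [J_expand' hm hd ho hhJ (n + 1) _ ?_]
      · congr 1
        have : (derivative (P (n + 2))).coeff (n + 1) = (P (n + 2)).coeff (n + 2) * (n + 1 + 1) := by
          rw [Polynomial.coeff_derivative]
          push_cast; ring
        rw [this]
        have hc : (P (n + 2)).coeff (n + 2) = 1 := by
          have := (hm (n + 2)).coeff_natDegree; rwa [hd (n + 2)] at this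
        rw [hc]; push_cast; ring
      · exact le_trans (Polynomial.natDegree_derivative_le _) (by rw [hd]; omega)
    have h2 : Jint t (P (n + 2) * derivative (P (n + 1))) = 0 := by
      rw [J_expand' hm hd ho hhJ (n + 2) _ ?_]
      · rw [Polynomial.coeff_eq_zero_of_natDegree_lt, zero_mul]
        exact lt_of_le_of_lt (Polynomial.natDegree_derivative_le _) (by rw [hd]; omega)
      · exact le_trans (Polynomial.natDegree_derivative_le _) (by rw [hd]; omega)
    rw [h1, h2]; ring
  -- X * q part
  have hXq : Jint t (X * q) = h (n + 2) := by
    rw [show X * q = P (n + 2) * (X * P (n + 1)) by rw [hq]; ring]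
    rw [J_expand' hm hd ho hhJ (n + 2) _ ?_]
    · have : (X * P (n + 1)).coeff (n + 2) = (P (n + 1)).coeff (n + 1) := by
        exact Polynomial.coeff_X_mul _ _
      rw [this]
      have hc : (P (n + 1)).coeff (n + 1) = 1 := by
        have := (hm (n + 1)).coeff_natDegree; rwa [hd (n + 1)] at this
      rw [hc, one_mul]
    · rw [(Polynomial.monic_X).natDegree_mul (hm (n + 1))]
      simp only [Polynomial.natDegree_X, hd (n + 1)]
      omega
  -- X^3 * q part
  have hX3q : Jint t (X ^ 3 * q)
      = h (n + 3) + β (n + 2) * (β (n + 2) + β (n + 1)) * h (n + 1) := by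
    have r1 : X * P (n + 2) = P (n + 3) + C (β (n + 2)) * P (n + 1) :=
      rec' hm hd ho hhJ hβ0 hβ (n + 1)
    have r2 : X * P (n + 1) = P (n + 2) + C (β (n + 1)) * P n :=
      rec' hm hd ho hhJ hβ0 hβ n
    have r3 : X * P n = P (n + 1) + C (β n) * P (n - 1) :=
      threeterm hm hd ho hhJ hβ0 hβ n
    have hpoly : X ^ 3 * q
        = P (n + 3) * P (n + 3)
          + C (β (n + 2) + β (n + 2) + β (n + 1)) * (P (n + 3) * P (n + 1))
          + C (β (n + 1) * β n) * (P (n + 3) * P (n - 1))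
          + C (β (n + 2) * β (n + 2) + β (n + 2) * β (n + 1)) * (P (n + 1) * P (n + 1))
          + C (β (n + 2) * β (n + 1) * β n) * (P (n + 1) * P (n - 1)) := by
      simp only [Polynomial.C_mul, Polynomial.C_add]
      linear_combination (X ^ 2 * P (n + 1) + (P (n + 3) + C (β (n + 2)) * P (n + 1))) * r1
        + (X * (P (n + 3) + C (β (n + 2)) * P (n + 1))) * r2
        + (C (β (n + 1)) * (P (n + 3) + C (β (n + 2)) * P (n + 1))) * r3
    rw [hpoly, J_add, J_add, J_add, J_add, J_Cmul, J_Cmul, J_Cmul, J_Cmul]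
    rw [← hhJ (n + 3), ← hhJ (n + 1), ho (n + 3) (n + 1) (by omega),
      ho (n + 3) (n - 1) (by omega), ho (n + 1) (n - 1) (by omega)]
    ring
  have hq2 : q * (C (2 * t) * X - C 4 * X ^ 3) = C (2 * t) * (X * q) - C 4 * (X ^ 3 * q) := by
    ring
  rw [hq2, J_sub, J_Cmul, J_Cmul, hder, hXq, hX3q] at hIBP
  have hb2 := hbh hm hd ho hhJ hβ0 hβ (n + 1)
  have hb3 := hbh hm hd ho hhJ hβ0 hβ (n + 2)
  have hne := (hpos hm hd ho hhJ (n + 1)).ne'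
  apply mul_right_cancel₀ hne
  linear_combination hIBP + (2 * t - 4 * β (n + 3)) * hb2 + (-4 : ℝ) * hb3

lemma string_one : (1 : ℝ) = 4 * β 1 * (β 0 + β 1 + β 2) - 2 * t * β 1 := by
  have hIBP := J_IBP t X
  rw [J_add] at hIBP
  have hderX : Jint t (derivative (X : Polynomial ℝ)) = h 0 := by
    rw [Polynomial.derivative_X]
    rw [show (1 : Polynomial ℝ) = P 0 * P 0 by rw [hP0 hm hd]; ring, ← hhJ 0]
  have r0 : X * P 1 = P 2 + C (β 1) * P 0 := rec' hm hd ho hhJ hβ0 hβ 0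
  have hX2 : (X : Polynomial ℝ) ^ 2 = P 2 * P 0 + C (β 1) * (P 0 * P 0) := by
    have h1 := hP1 hm hd ho hhJ
    have h0' := hP0 hm hd
    rw [h0'] at r0 ⊢
    rw [h1] at r0
    linear_combination r0
  have hJX2 : Jint t ((X : Polynomial ℝ) ^ 2) = β 1 * h 0 := by
    rw [hX2, J_add, J_Cmul, ho 2 0 (by omega), ← hhJ 0]
    ring
  have hX2'' : (X : Polynomial ℝ) ^ 2 = P 2 + C (β 1) := by
    have h0' := hP0 hm hd
    rw [h0'] at hX2
    simpa using hX2
  have hX4 : (X : Polynomial ℝ) ^ 4 = P 2 * P 2 + C (β 1) * (P 2 * P 0)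
      + C (β 1) * (P 0 * P 2) + C (β 1) * C (β 1) * (P 0 * P 0) := by
    rw [hP0 hm hd]
    simp only [mul_one, one_mul]
    linear_combination ((X : Polynomial ℝ) ^ 2 + P 2 + C (β 1)) * hX2''
  have hJX4 : Jint t ((X : Polynomial ℝ) ^ 4) = h 2 + β 1 * β 1 * h 0 := by
    rw [hX4, J_add, J_add, J_add, J_Cmul, J_Cmul]
    rw [show C (β 1) * C (β 1) * (P 0 * P 0) = C (β 1 * β 1) * (P 0 * P 0) by
      rw [Polynomial.C_mul]]
    rw [J_Cmul, ho 2 0 (by omega), ho 0 2 (by omega), ← hhJ 0, ← hhJ 2]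
    ring
  have hq2 : (X : Polynomial ℝ) * (C (2 * t) * X - C 4 * X ^ 3)
      = C (2 * t) * X ^ 2 - C 4 * X ^ 4 := by ring
  rw [hq2, J_sub, J_Cmul, J_Cmul, hderX, hJX2, hJX4] at hIBP
  have hb1 := hbh hm hd ho hhJ hβ0 hβ 0
  have hb2 := hbh hm hd ho hhJ hβ0 hβ 1
  have hne := (hpos hm hd ho hhJ 0).ne'
  apply mul_right_cancel₀ hne
  linear_combination hIBP + (-4 * β 2) * hb1 + (-4 : ℝ) * hb2 + (-4 * β 1 * h 0) * hβ0

lemma string_all : ∀ n : ℕ, 1 ≤ n →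
    (n : ℝ) = 4 * β n * (β (n - 1) + β n + β (n + 1)) - 2 * t * β n := by
  intro n hn
  rcases n with _ | n
  · omega
  rcases n with _ | n
  · simpa using string_one hm hd ho hhJ hβ0 hβ
  have := string_gen hm hd ho hhJ hβ0 hβ n
  have hidx : n + 1 + 1 - 1 = n + 1 := by omega
  have hc : ((n + 1 + 1 : ℕ) : ℝ) = (n : ℝ) + 2 := by push_cast; ring
  rw [hidx, hc]
  exact this

end StringEq

section Final

variable {t : ℝ} {P : ℕ → Polynomial ℝ} {h : ℕ → ℝ} {β : ℕ → ℝ}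
variable (hm : ∀ n, (P n).Monic) (hd : ∀ n, (P n).natDegree = n)
variable (ho : ∀ j k, j ≠ k → Jint t (P j * P k) = 0)
variable (hhJ : ∀ n, h n = Jint t (P n * P n))
variable (hβ0 : β 0 = 0) (hβ : ∀ n, β (n + 1) = h (n + 1) / h n)

include hm hd ho hhJ hβ0 hβ

lemma p_rec (p : ℕ → ℝ) (hp1 : p 1 = 0) (hp : ∀ n, 2 ≤ n → p n = (P n).coeff (n - 2)) :
    ∀ n, 1 ≤ n → p (n + 1) = p n - β n := by
  intro n hn
  rcases n with _ | n
  · omega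
  rcases n with _ | m
  · -- n = 1
    have r0 : X * P 1 = P 2 + C (β 1) * P 0 := rec' hm hd ho hhJ hβ0 hβ 0
    rw [hP1 hm hd ho hhJ, hP0 hm hd] at r0
    have hP2 : P 2 = X ^ 2 - C (β 1) := by linear_combination -r0
    have : p 2 = (P 2).coeff 0 := hp 2 le_rfl
    rw [this, hP2]
    simp [Polynomial.coeff_sub, hp1]
  · -- n = m + 2
    set n := m + 2
    have r := rec' hm hd ho hhJ hβ0 hβ (m + 1)
    have hcoeff := congrArg (fun q : Polynomial ℝ => q.coeff (m + 1)) r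
    simp only [Polynomial.coeff_X_mul, Polynomial.coeff_add, Polynomial.coeff_C_mul] at hcoeff
    have hc1 : (P (m + 1)).coeff (m + 1) = 1 := by
      have := (hm (m + 1)).coeff_natDegree; rwa [hd (m + 1)] at this
    rw [hc1, mul_one] at hcoeff
    have e1 : p n = (P (m + 2)).coeff m := by
      have := hp n (by omega)
      simpa [n] using this
    have e2 : p (n + 1) = (P (m + 3)).coeff (m + 1) := by
      have := hp (n + 1) (by omega)
      simpa [n] using this
    rw [e1, e2, hcoeff]
    ring

lemma G_prime (p : ℕ → ℝ) (hp1 : p 1 = 0) (hp : ∀ n, 2 ≤ n → p n = (P n).coeff (n - 2)) :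
    ∀ n, 1 ≤ n → p n = ((1 : ℝ) - n) / 2 * β n - 2 * β (n - 1) * β n * β (n + 1) := by
  intro n hn
  induction n, hn using Nat.le_induction with
  | base =>
    rw [hp1, hβ0]
    norm_num
  | succ n hn ih =>
    have hrec := p_rec hm hd ho hhJ hβ0 hβ p hp1 hp n hn
    have S1 := string_all hm hd ho hhJ hβ0 hβ n hn
    have S2 := string_all hm hd ho hhJ hβ0 hβ (n + 1) (by omega)
    simp only [Nat.add_sub_cancel] at S2 ⊢
    push_cast at S2 ⊢
    linear_combination ih + hrec + (-(1/2) * β n) * S2 + ((1/2) * β (n + 1)) * S1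

end Final

theorem stmt15 (t : ℝ) (P : ℕ → Polynomial ℝ)
    (hmonic : ∀ n, (P n).Monic) (hdeg : ∀ n, (P n).natDegree = n)
    (horth : ∀ j k, j ≠ k →
      ∫ x : ℝ, (P j).eval x * (P k).eval x * Real.exp (-x ^ 4 + t * x ^ 2) = 0)
    (h : ℕ → ℝ) (hh : ∀ n, h n = ∫ x : ℝ, ((P n).eval x) ^ 2 * Real.exp (-x ^ 4 + t * x ^ 2))
    (β : ℕ → ℝ) (hβ0 : β 0 = 0) (hβ : ∀ n, β (n + 1) = h (n + 1) / h n)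
    (p : ℕ → ℝ) (hp0 : p 0 = 0) (hp1 : p 1 = 0)
    (hp : ∀ n, 2 ≤ n → p n = (P n).coeff (n - 2))
    (n : ℕ) (hn : 1 ≤ n) :
    p n = (1 / 2) * β n + t * (β n) ^ 2
      - 2 * β n * (β (n - 1) + β n) * (β n + β (n + 1)) := by
  have ho : ∀ j k, j ≠ k → Jint t (P j * P k) = 0 := by
    intro j k hjk
    rw [← horth j k hjk]
    unfold Jint
    congr 1; funext x
    rw [Polynomial.eval_mul]
  have hhJ : ∀ m, h m = Jint t (P m * P m) := by
    intro m
    rw [hh m]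
    unfold Jint
    congr 1; funext x
    rw [Polynomial.eval_mul]
    ring
  have hG := G_prime hmonic hdeg ho hhJ hβ0 hβ p hp1 hp n hn
  have hS := string_all hmonic hdeg ho hhJ hβ0 hβ n hn
  linear_combination hG - (1 / 2 * β n) * hS
end
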